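/- arXiv:2107.01974 — 7 statements merged into one kernel-verified Lean document; each statement's English description precedes it below -/
import Mathlib

section
/- Let n ∈ (0,3) and k > 0. If ψ₁ and ψ₂ are both classical solutions of the traveling-wave boundary-value problem (positive and twice continuously differentiable on (0,∞), right-continuous at H = 0, satisfying ψ''(H) + (2/3)·(H² + H^{n−1})^{−1}·ψ(H)^{−1/2} = 0 for all H > 0, ψ(0) = k², and ψ'(H) → 0 as H → ∞), then ψ₁(H) = ψ₂(H) for all H ≥ 0. -/
open Filter Topology Set

/-- A classical solution of the traveling-wave boundary-value problem:
`ψ : [0,∞) → ℝ` is positive and twice continuously differentiable on `(0,∞)`,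
right-continuous at `H = 0`, satisfies
`ψ'' + (2/3)·(H² + H^{n−1})⁻¹·ψ^{−1/2} = 0` for all `H > 0`, `ψ(0) = k²`,
and `ψ'(H) → 0` as `H → ∞`. -/
def IsClassicalTWSolution (n k : ℝ) (ψ : ℝ → ℝ) : Prop :=
  (∀ H > (0 : ℝ), 0 < ψ H) ∧
  ContDiffOn ℝ 2 ψ (Set.Ioi 0) ∧
  ContinuousWithinAt ψ (Set.Ici 0) 0 ∧
  (∀ H > (0 : ℝ),
    deriv (deriv ψ) H + 2 / 3 * (H ^ 2 + H ^ (n - 1))⁻¹ * ψ H ^ (-(1 / 2) : ℝ) = 0) ∧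
  ψ 0 = k ^ 2 ∧
  Tendsto (deriv ψ) atTop (𝓝 0)

namespace TWAux

variable {n k : ℝ} {ψ : ℝ → ℝ}

lemma diff1 (h : ContDiffOn ℝ 2 ψ (Set.Ioi 0)) {x : ℝ} (hx : 0 < x) :
    DifferentiableAt ℝ ψ x :=
  ((h.differentiableOn (by norm_num)).differentiableAt (isOpen_Ioi.mem_nhds hx))

lemma contDeriv (h : ContDiffOn ℝ 2 ψ (Set.Ioi 0)) :
    ContDiffOn ℝ 1 (deriv ψ) (Set.Ioi 0) := by
  have := h.deriv_of_isOpen isOpen_Ioi (m := 1) (by norm_num)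
  exact this

lemma diff2 (h : ContDiffOn ℝ 2 ψ (Set.Ioi 0)) {x : ℝ} (hx : 0 < x) :
    DifferentiableAt ℝ (deriv ψ) x :=
  ((contDeriv h).differentiableOn (by norm_num)).differentiableAt (isOpen_Ioi.mem_nhds hx)

lemma cont (h : IsClassicalTWSolution n k ψ) : ContinuousOn ψ (Set.Ici 0) := by
  intro x hx
  rcases eq_or_lt_of_le (Set.mem_Ici.mp hx : (0:ℝ) ≤ x) with rfl | hx'
  · exact h.2.2.1
  · exact (((h.2.1.continuousOn) x hx').continuousAt
      (isOpen_Ioi.mem_nhds hx')).continuousWithinAt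

/-- Key lemma: two solutions cannot satisfy `ψ₂ H₀ < ψ₁ H₀` at any `H₀ > 0`. -/
lemma key (n k : ℝ) (ψ₁ ψ₂ : ℝ → ℝ)
    (h₁ : IsClassicalTWSolution n k ψ₁) (h₂ : IsClassicalTWSolution n k ψ₂)
    (H₀ : ℝ) (hH₀ : 0 < H₀) (hgt : ψ₂ H₀ < ψ₁ H₀) : False := by
  set w : ℝ → ℝ := fun t => ψ₁ t - ψ₂ t with hwdef
  have hC₁ := h₁.2.1
  have hC₂ := h₂.2.1
  have hw0 : w 0 = 0 := by
    simp [hwdef, h₁.2.2.2.2.1, h₂.2.2.2.2.1]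
  have hwcont : ContinuousOn w (Set.Ici 0) := (cont h₁).sub (cont h₂)
  have hdw : ∀ x : ℝ, 0 < x → deriv w x = deriv ψ₁ x - deriv ψ₂ x := fun x hx =>
    deriv_sub (diff1 hC₁ hx) (diff1 hC₂ hx)
  have hcdw : ContinuousOn (deriv w) (Set.Ioi 0) :=
    (((contDeriv hC₁).continuousOn).sub ((contDeriv hC₂).continuousOn)).congr
      (fun x hx => hdw x hx)
  have hd2w : ∀ x : ℝ, 0 < x →
      deriv (deriv w) x = deriv (deriv ψ₁) x - deriv (deriv ψ₂) x := by
    intro x hx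
    have hev : deriv w =ᶠ[𝓝 x] fun y => deriv ψ₁ y - deriv ψ₂ y :=
      eventually_of_mem (isOpen_Ioi.mem_nhds hx) (fun y hy => hdw y hy)
    rw [hev.deriv_eq]
    exact deriv_sub (diff2 hC₁ hx) (diff2 hC₂ hx)
  have hsign : ∀ x : ℝ, 0 < x → 0 < w x → 0 < deriv (deriv w) x := by
    intro x hx hwx
    have hlt : ψ₂ x < ψ₁ x := sub_pos.1 hwx
    have hc : (0:ℝ) < 2 / 3 * (x ^ 2 + x ^ (n - 1))⁻¹ := by
      have h1 : (0:ℝ) < x ^ 2 := by positivity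
      have h2 : (0:ℝ) < x ^ (n - 1) := Real.rpow_pos_of_pos hx _
      positivity
    have e₁ := h₁.2.2.2.1 x hx
    have e₂ := h₂.2.2.2.1 x hx
    have hr : ψ₁ x ^ (-(1/2) : ℝ) < ψ₂ x ^ (-(1/2) : ℝ) :=
      Real.rpow_lt_rpow_of_neg (h₂.1 x hx) hlt (by norm_num)
    have hprod : 0 < 2 / 3 * (x ^ 2 + x ^ (n - 1))⁻¹ *
        (ψ₂ x ^ (-(1/2) : ℝ) - ψ₁ x ^ (-(1/2) : ℝ)) :=
      mul_pos hc (sub_pos.2 hr)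
    rw [hd2w x hx]
    nlinarith [hprod]
  have hwH₀ : 0 < w H₀ := sub_pos.2 hgt
  -- the last zero of `w` before `H₀`
  set S : Set ℝ := {t : ℝ | t ∈ Set.Icc 0 H₀ ∧ w t = 0} with hSdef
  have hSeq : S = Set.Icc 0 H₀ ∩ w ⁻¹' {0} := by
    ext t; simp [hSdef]
  have hSc : IsClosed S := by
    rw [hSeq]
    exact (hwcont.mono Set.Icc_subset_Ici_self).preimage_isClosed_of_isClosed
      isClosed_Icc isClosed_singleton
  have hSne : S.Nonempty := ⟨0, ⟨le_refl 0, hH₀.le⟩, hw0⟩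
  have hSbdd : BddAbove S := ⟨H₀, fun t ht => ht.1.2⟩
  set a := sSup S with ha
  have haS : a ∈ S := hSc.csSup_mem hSne hSbdd
  have ha0 : 0 ≤ a := haS.1.1
  have hwa : w a = 0 := haS.2
  have haH₀ : a < H₀ := by
    rcases eq_or_lt_of_le haS.1.2 with heq | h
    · rw [heq] at hwa; linarith
    · exact h
  have hpos_left : ∀ t : ℝ, a < t → t ≤ H₀ → 0 < w t := by
    intro t hat htH
    by_contra hle
    push_neg at hle
    rcases eq_or_lt_of_le hle with heq | hlt0
    · have : t ≤ a := le_csSup hSbdd ⟨⟨le_trans ha0 hat.le, htH⟩, heq⟩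
      linarith
    · have htH' : t < H₀ := by
        rcases eq_or_lt_of_le htH with heq | h
        · rw [heq] at hlt0; linarith
        · exact h
      have hsub : Set.Icc t H₀ ⊆ Set.Ici 0 :=
        fun y hy => le_trans (le_trans ha0 hat.le) hy.1
      have := intermediate_value_Ioo htH'.le (hwcont.mono hsub)
        (Set.mem_Ioo.2 ⟨hlt0, hwH₀⟩)
      obtain ⟨s, hs, hws⟩ := this
      have hsa : s ≤ a := le_csSup hSbdd
        ⟨⟨le_trans (le_trans ha0 hat.le) hs.1.le, hs.2.le⟩, hws⟩
      have : a < s := lt_trans hat hs.1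
      linarith
  by_cases hb : ∃ t : ℝ, H₀ ≤ t ∧ w t = 0
  · -- Case 1: there is a zero after `H₀`; take the first one and apply Rolle.
    set T : Set ℝ := {t : ℝ | H₀ ≤ t ∧ w t = 0} with hTdef
    have hTeq : T = Set.Ici H₀ ∩ w ⁻¹' {0} := by
      ext t; simp [hTdef]
    have hTc : IsClosed T := by
      rw [hTeq]
      exact (hwcont.mono (Set.Ici_subset_Ici.2 hH₀.le)).preimage_isClosed_of_isClosed
        isClosed_Ici isClosed_singleton
    have hTbdd : BddBelow T := ⟨H₀, fun t ht => ht.1⟩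
    set b := sInf T with hbdef
    have hbT : b ∈ T := hTc.csInf_mem hb hTbdd
    have hwb : w b = 0 := hbT.2
    have hH₀b : H₀ < b := by
      rcases eq_or_lt_of_le hbT.1 with heq | h
      · rw [← heq] at hwb; linarith
      · exact h
    have hab : a < b := haH₀.trans hH₀b
    have hpos_ab : ∀ t : ℝ, t ∈ Set.Ioo a b → 0 < w t := by
      intro t ht
      rcases le_or_gt t H₀ with h | h
      · exact hpos_left t ht.1 h
      · by_contra hle
        push_neg at hle
        rcases eq_or_lt_of_le hle with heq | hlt0
        · have : b ≤ t := csInf_le hTbdd ⟨h.le, heq⟩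
          linarith [ht.2]
        · have hsub : Set.Icc H₀ t ⊆ Set.Ici 0 := fun y hy => le_trans hH₀.le hy.1
          obtain ⟨s, hs, hws⟩ := intermediate_value_Ioo' h.le (hwcont.mono hsub)
            (Set.mem_Ioo.2 ⟨hlt0, hwH₀⟩)
          have : b ≤ s := csInf_le hTbdd ⟨hs.1.le, hws⟩
          linarith [hs.2, ht.2]
    have hIccsub : Set.Icc a b ⊆ Set.Ici 0 := fun y hy => le_trans ha0 hy.1
    obtain ⟨ξ, hξ, hdξ⟩ := exists_deriv_eq_zero hab (hwcont.mono hIccsub)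
      (hwa.trans hwb.symm)
    have hmono : StrictMonoOn (deriv w) (Set.Ioo a b) := by
      apply strictMonoOn_of_deriv_pos (convex_Ioo a b)
      · exact hcdw.mono (fun y hy => lt_of_le_of_lt ha0 hy.1)
      · rw [interior_Ioo]
        intro x hx
        exact hsign x (lt_of_le_of_lt ha0 hx.1) (hpos_ab x hx)
    have hneg : ∀ t ∈ Set.Ioo a ξ, deriv w t < 0 := by
      intro t ht
      have := hmono (⟨ht.1, ht.2.trans hξ.2⟩ : t ∈ Set.Ioo a b) hξ ht.2
      rwa [hdξ] at this
    have hanti : StrictAntiOn w (Set.Icc a ξ) := by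
      apply strictAntiOn_of_deriv_neg (convex_Icc a ξ)
      · exact hwcont.mono (fun y hy => le_trans ha0 hy.1)
      · rw [interior_Icc]; exact hneg
    have h1 : w ξ < w a := hanti ⟨le_refl a, hξ.1.le⟩ ⟨hξ.1.le, le_refl ξ⟩ hξ.1
    have h2 : 0 < w ξ := hpos_ab ξ hξ
    linarith
  · -- Case 2: `w` has no zero after `H₀`, hence `w > 0` on `(a, ∞)`.
    push_neg at hb
    have hpos_all : ∀ t : ℝ, a < t → 0 < w t := by
      intro t hat
      rcases le_or_gt t H₀ with h | h
      · exact hpos_left t hat h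
      · by_contra hle
        push_neg at hle
        rcases eq_or_lt_of_le hle with heq | hlt0
        · exact hb t h.le heq
        · have hsub : Set.Icc H₀ t ⊆ Set.Ici 0 := fun y hy => le_trans hH₀.le hy.1
          obtain ⟨s, hs, hws⟩ := intermediate_value_Ioo' h.le (hwcont.mono hsub)
            (Set.mem_Ioo.2 ⟨hlt0, hwH₀⟩)
          exact hb s hs.1.le hws
    have hmono : StrictMonoOn (deriv w) (Set.Ioi a) := by
      apply strictMonoOn_of_deriv_pos (convex_Ioi a)
      · exact hcdw.mono (Set.Ioi_subset_Ioi ha0)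
      · rw [interior_Ioi]
        intro x hx
        exact hsign x (lt_of_le_of_lt ha0 hx) (hpos_all x hx)
    have hwt : Tendsto (deriv w) atTop (𝓝 0) := by
      have hev : (fun x => deriv ψ₁ x - deriv ψ₂ x) =ᶠ[atTop] deriv w := by
        filter_upwards [eventually_gt_atTop (0:ℝ)] with x hx
        exact (hdw x hx).symm
      have h0 : Tendsto (fun x => deriv ψ₁ x - deriv ψ₂ x) atTop (𝓝 (0 - 0)) :=
        h₁.2.2.2.2.2.sub h₂.2.2.2.2.2
      simpa using Tendsto.congr' hev (by simpa using h0)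
    have hneg : ∀ t : ℝ, a < t → deriv w t < 0 := by
      intro t hat
      by_contra hge
      push_neg at hge
      have h1 : 0 < deriv w (t + 1) :=
        lt_of_le_of_lt hge (hmono (Set.mem_Ioi.2 hat) (Set.mem_Ioi.2 (by linarith))
          (by linarith))
      obtain ⟨s, hs1, hs2⟩ :=
        ((hwt.eventually_lt_const h1).and (eventually_gt_atTop (t + 1))).exists
      have : deriv w (t + 1) < deriv w s :=
        hmono (Set.mem_Ioi.2 (by linarith)) (Set.mem_Ioi.2 (by linarith)) hs2
      linarith
    have hanti : StrictAntiOn w (Set.Ici a) := by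
      apply strictAntiOn_of_deriv_neg (convex_Ici a)
      · exact hwcont.mono (Set.Ici_subset_Ici.2 ha0)
      · rw [interior_Ici]; exact fun x hx => hneg x hx
    have := hanti Set.self_mem_Ici (Set.mem_Ici.2 haH₀.le) haH₀
    linarith

end TWAux

/-- Uniqueness of classical solutions of the traveling-wave boundary-value problem:
any two classical solutions agree on `[0,∞)`. -/
theorem uniqueness_traveling_wave (n k : ℝ) (hn : n ∈ Set.Ioo (0 : ℝ) 3) (hk : 0 < k)
    (ψ₁ ψ₂ : ℝ → ℝ)
    (h₁ : IsClassicalTWSolution n k ψ₁) (h₂ : IsClassicalTWSolution n k ψ₂) :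
    ∀ H ≥ (0 : ℝ), ψ₁ H = ψ₂ H := by
  intro H hH
  rcases eq_or_lt_of_le hH with rfl | hH'
  · rw [h₁.2.2.2.2.1, h₂.2.2.2.2.1]
  · by_contra hne
    rcases lt_or_gt_of_ne hne with h | h
    · exact TWAux.key n k ψ₂ ψ₁ h₂ h₁ H hH' h
    · exact TWAux.key n k ψ₁ ψ₂ h₁ h₂ H hH' h
end

section
/- Let n ∈ (0,3) and k > 0, and let H : [0,∞) → ℝ be three times continuously differentiable on (0,∞) with H and H' continuous at x = 0, satisfying (H(x)² + H(x)^{n−1})·H'''(x) = −1/3 for all x > 0, H(0) = 0, H'(0) = k > 0, and H''(x) → 0 as x → ∞, and with H(x) > 0 for all sufficiently small x > 0. Then for all x > 0: H(x) > 0, H'''(x) < 0, H''(x) > 0, and H'(x) > 0; in particular H is strictly increasing on [0,∞). -/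
open Filter Topology Set

/-- Monotonicity and sign properties of the traveling-wave profile `H` solving the
scaled third-order problem `(H² + H^{n−1})·H''' = −1/3` on `(0,∞)` with
`H(0) = 0`, `H'(0) = k > 0`, `H''(x) → 0` as `x → ∞`, and `H > 0` near `0`:
for all `x > 0` one has `H(x) > 0`, `H'''(x) < 0`, `H''(x) > 0`, `H'(x) > 0`;
in particular `H` is strictly increasing on `[0,∞)`. -/
theorem traveling_wave_profile_monotone (n k : ℝ) (hn : n ∈ Set.Ioo (0 : ℝ) 3)
    (hk : 0 < k) (H : ℝ → ℝ)
    (hreg : ContDiffOn ℝ 3 H (Set.Ioi 0))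
    (hcont : ContinuousWithinAt H (Set.Ici 0) 0)
    (hcont' : ContinuousWithinAt (deriv H) (Set.Ici 0) 0)
    (hode : ∀ x > (0 : ℝ),
      (H x ^ 2 + H x ^ (n - 1)) * deriv (deriv (deriv H)) x = -(1 / 3))
    (h0 : H 0 = 0)
    (h'0 : deriv H 0 = k)
    (hbulk : Tendsto (deriv (deriv H)) atTop (𝓝 0))
    (hpos : ∀ᶠ x in 𝓝[>] (0 : ℝ), 0 < H x) :
    (∀ x > (0 : ℝ),
      0 < H x ∧ deriv (deriv (deriv H)) x < 0 ∧ 0 < deriv (deriv H) x ∧ 0 < deriv H x) ∧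
    StrictMonoOn H (Set.Ici 0) := by
  -- Regularity of derivatives on (0, ∞)
  have h1 : ContDiffOn ℝ 2 (deriv H) (Set.Ioi 0) :=
    hreg.deriv_of_isOpen isOpen_Ioi (by norm_num)
  have h2 : ContDiffOn ℝ 1 (deriv (deriv H)) (Set.Ioi 0) :=
    h1.deriv_of_isOpen isOpen_Ioi (by norm_num)
  -- Continuity of H on [0, ∞)
  have hHcont : ContinuousOn H (Set.Ici 0) := by
    intro x hx
    rcases eq_or_lt_of_le (Set.mem_Ici.mp hx : (0:ℝ) ≤ x) with h | h
    · rw [← h]; exact hcont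
    · exact ((hreg.continuousOn.continuousAt (Ioi_mem_nhds h))).continuousWithinAt
  -- The coefficient is positive on (0, ∞)
  have hcoef : ∀ x > (0:ℝ), 0 < H x ^ 2 + H x ^ (n - 1) := by
    by_cases hn1 : n = 1
    · intro x hx
      rw [hn1]
      simp only [sub_self, Real.rpow_zero]
      positivity
    · -- H never vanishes on (0,∞)
      have hne : ∀ x > (0:ℝ), H x ≠ 0 := by
        intro x hx hx0
        have h := hode x hx
        rw [hx0, Real.zero_rpow (sub_ne_zero.mpr hn1)] at h
        norm_num at h
      -- H is positive on (0,∞)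
      have hHpos : ∀ x > (0:ℝ), 0 < H x := by
        obtain ⟨x₀, hx₀pos, hx₀⟩ : ∃ x₀, x₀ ∈ Set.Ioi (0:ℝ) ∧ 0 < H x₀ := by
          have := (eventually_mem_nhdsWithin.and hpos).exists
          obtain ⟨x₀, hm, hp⟩ := this
          exact ⟨x₀, hm, hp⟩
        intro x hx
        rcases (hne x hx).lt_or_gt with hneg | hpos'
        · exfalso
          rcases lt_trichotomy x x₀ with hlt | heq | hgt
          · have hsub : Set.Icc x x₀ ⊆ Set.Ioi 0 := fun y hy => lt_of_lt_of_le hx hy.1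
            have hctsOn : ContinuousOn H (Set.Icc x x₀) := hreg.continuousOn.mono hsub
            have : (0:ℝ) ∈ Set.Ioo (H x) (H x₀) := ⟨hneg, hx₀⟩
            obtain ⟨c, hc, hc0⟩ := intermediate_value_Ioo hlt.le hctsOn this
            exact hne c (lt_trans hx hc.1) hc0
          · rw [heq] at hneg; linarith
          · have hsub : Set.Icc x₀ x ⊆ Set.Ioi 0 := fun y hy => lt_of_lt_of_le hx₀pos hy.1
            have hctsOn : ContinuousOn H (Set.Icc x₀ x) := hreg.continuousOn.mono hsub
            have : (0:ℝ) ∈ Set.Ioo (H x) (H x₀) := ⟨hneg, hx₀⟩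
            obtain ⟨c, hc, hc0⟩ := intermediate_value_Ioo' hgt.le hctsOn this
            exact hne c (lt_trans hx₀pos hc.1) hc0
        · exact hpos'
      intro x hx
      have h1 := hHpos x hx
      have h2 : (0:ℝ) < H x ^ (n - 1) := Real.rpow_pos_of_pos h1 _
      positivity
  -- H''' < 0 on (0, ∞)
  have h3neg : ∀ x ∈ Set.Ioi (0:ℝ), deriv (deriv (deriv H)) x < 0 := by
    intro x hx
    have h := hode x hx
    have hc := hcoef x hx
    nlinarith [h, hc]
  -- H'' is strictly decreasing on (0, ∞)
  have hanti : StrictAntiOn (deriv (deriv H)) (Set.Ioi 0) :=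
    strictAntiOn_of_deriv_neg (convex_Ioi 0) h2.continuousOn
      (by rwa [interior_Ioi])
  -- H'' ≥ 0 on (0, ∞)
  have h2nonneg : ∀ x > (0:ℝ), 0 ≤ deriv (deriv H) x := by
    intro x hx
    refine le_of_tendsto hbulk ?_
    filter_upwards [eventually_gt_atTop x] with z hz
    exact (hanti hx (lt_trans hx hz) hz).le
  -- H'' > 0 on (0, ∞)
  have h2pos : ∀ x > (0:ℝ), 0 < deriv (deriv H) x := by
    intro x hx
    calc (0:ℝ) ≤ deriv (deriv H) (x + 1) := h2nonneg _ (by linarith)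
    _ < deriv (deriv H) x := hanti hx (by simp only [Set.mem_Ioi]; linarith) (by linarith)
  -- H' is strictly increasing on (0, ∞)
  have hmono' : StrictMonoOn (deriv H) (Set.Ioi 0) :=
    strictMonoOn_of_deriv_pos (convex_Ioi 0) h1.continuousOn
      (by rw [interior_Ioi]; exact fun x hx => h2pos x hx)
  -- H' ≥ k on (0, ∞)
  have h1ge : ∀ x > (0:ℝ), k ≤ deriv H x := by
    intro x hx
    have ht : Tendsto (deriv H) (𝓝[>] 0) (𝓝 k) := by
      have := hcont'.tendsto
      rw [h'0] at this
      exact this.mono_left (nhdsWithin_mono _ Set.Ioi_subset_Ici_self)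
    refine le_of_tendsto ht ?_
    filter_upwards [Ioo_mem_nhdsGT_of_mem (Set.mem_Ico.mpr ⟨le_refl 0, hx⟩)] with y hy
    exact (hmono' hy.1 hx hy.2).le
  have h1pos : ∀ x > (0:ℝ), 0 < deriv H x := fun x hx => lt_of_lt_of_le hk (h1ge x hx)
  -- H strictly increasing on [0, ∞)
  have hmono : StrictMonoOn H (Set.Ici 0) :=
    strictMonoOn_of_deriv_pos (convex_Ici 0) hHcont
      (by rw [interior_Ici]; exact fun x hx => h1pos x hx)
  refine ⟨fun x hx => ⟨?_, h3neg x hx, h2pos x hx, h1pos x hx⟩, hmono⟩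
  have := hmono (Set.self_mem_Ici) (Set.mem_Ici.mpr hx.le) hx
  rwa [h0] at this
end

section
/- Let n ∈ (0,3), k > 0, and ε > 0, and let ψ be positive and twice continuously differentiable on (0,ε) with ψ(H) → k² as H ↓ 0, satisfying ψ''(H) + (2/3)·(H² + H^{n−1})^{−1}·ψ(H)^{−1/2} = 0 on (0,ε). Then, as H ↓ 0: if 0 < n < 2, the derivative ψ'(H) converges to a finite limit; if n = 2, ψ'(H) = −(2/(3k))·(ln H)·(1 + o(1)); and if 2 < n < 3, ψ'(H) = (2/(3(n−2)k))·H^{2−n}·(1 + o(1)). -/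
open Filter Topology Set Asymptotics

open MeasureTheory intervalIntegral


lemma auxA_tendsto_rpow_zero {p : ℝ} (hp : 0 < p) :
    Tendsto (fun t : ℝ => t ^ p) (𝓝[>] (0:ℝ)) (𝓝 0) := by
  have h : ContinuousAt (fun t : ℝ => t ^ p) 0 :=
    Real.continuousAt_rpow_const 0 p (Or.inr hp.le)
  have := h.tendsto.mono_left (nhdsWithin_le_nhds (s := Ioi (0:ℝ)))
  simpa [Real.zero_rpow hp.ne'] using this

lemma auxD_tendsto_integral (b α c : ℝ) (hb : 0 < b) (hα : α < 1) (φ : ℝ → ℝ)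
    (hcont : ContinuousOn φ (Ioc 0 b))
    (hasym : Tendsto (fun t => t ^ α * φ t) (𝓝[>] (0:ℝ)) (𝓝 c)) :
    ∃ L, Tendsto (fun H => ∫ t in H..b, φ t) (𝓝[>] (0:ℝ)) (𝓝 L) := by
  have hev : ∀ᶠ t in 𝓝[>] (0:ℝ), |t ^ α * φ t - c| < 1 := by
    have := Metric.tendsto_nhds.mp hasym 1 one_pos
    simpa [Real.dist_eq] using this
  obtain ⟨u, hu, hsub⟩ := mem_nhdsGT_iff_exists_Ioc_subset.mp hev
  set H1 := min u b with hH1def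
  have hH1pos : 0 < H1 := lt_min hu hb
  have hH1b : H1 ≤ b := min_le_right _ _
  set C : ℝ := |c| + 1 with hCdef
  have hC : 0 < C := by positivity
  have hbound : ∀ t ∈ Ioc (0:ℝ) H1, ‖φ t‖ ≤ C * t ^ (-α) := by
    intro t ht
    have ht0 : 0 < t := ht.1
    have h1 : |t ^ α * φ t - c| ≤ 1 :=
      (hsub ⟨ht.1, ht.2.trans (min_le_left _ _)⟩).le
    have htα : (0:ℝ) < t ^ α := Real.rpow_pos_of_pos ht0 _
    have h2 : |t ^ α * φ t| ≤ C := by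
      have := abs_sub_abs_le_abs_sub (t ^ α * φ t) c
      rw [hCdef]; linarith [le_abs_self c, abs_nonneg c]
    have h3 : |φ t| = |t ^ α * φ t| * t ^ (-α) := by
      rw [abs_mul, abs_of_pos htα, Real.rpow_neg ht0.le]
      field_simp
    rw [Real.norm_eq_abs, h3]
    exact mul_le_mul_of_nonneg_right h2 (Real.rpow_pos_of_pos ht0 _).le
  -- integrability of the dominating function on Ioc 0 H1
  have hrint : IntegrableOn (fun t : ℝ => C * t ^ (-α)) (Ioc 0 H1) := by
    rw [integrableOn_Ioc_iff_integrableOn_Ioo]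
    exact ((integrableOn_Ioo_rpow_iff hH1pos).mpr (by linarith)).const_mul C
  have hmeas : AEStronglyMeasurable φ (volume.restrict (Ioc 0 H1)) :=
    (hcont.mono (fun x hx => ⟨hx.1, hx.2.trans hH1b⟩)).aestronglyMeasurable measurableSet_Ioc
  have hint1 : IntegrableOn φ (Ioc 0 H1) := by
    apply Integrable.mono' hrint hmeas
    exact (ae_restrict_mem measurableSet_Ioc).mono hbound
  have hint2 : IntegrableOn φ (Ioc H1 b) := by
    apply IntegrableOn.mono_set _ Ioc_subset_Icc_self
    apply ContinuousOn.integrableOn_Icc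
    exact hcont.mono fun x hx => ⟨lt_of_lt_of_le hH1pos hx.1, hx.2⟩
  have hint : IntegrableOn φ (Ioc 0 b) := by
    have : Ioc (0:ℝ) b = Ioc 0 H1 ∪ Ioc H1 b := (Ioc_union_Ioc_eq_Ioc hH1pos.le hH1b).symm
    rw [this]
    exact hint1.union hint2
  refine ⟨∫ t in Ioc 0 b, φ t, ?_⟩
  -- ∫ over Ioc 0 H → 0
  have htend0 : Tendsto (fun H => ∫ t in Ioc 0 H, φ t) (𝓝[>] (0:ℝ)) (𝓝 0) := by
    apply squeeze_zero_norm' (a := fun H => C / (1 - α) * H ^ (1 - α))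
    · filter_upwards [Ioo_mem_nhdsGT hH1pos] with H hH
      have hH0 : 0 < H := hH.1
      have hsetH : Ioc (0:ℝ) H ⊆ Ioc 0 H1 := Ioc_subset_Ioc le_rfl hH.2.le
      have e1 : ‖∫ t in Ioc 0 H, φ t‖ ≤ ∫ t in Ioc 0 H, ‖φ t‖ :=
        norm_integral_le_integral_norm φ
      have e2 : (∫ t in Ioc 0 H, ‖φ t‖) ≤ ∫ t in Ioc (0:ℝ) H, C * t ^ (-α) := by
        apply setIntegral_mono_on ((hint1.mono_set hsetH).norm) (hrint.mono_set hsetH)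
          measurableSet_Ioc
        exact fun t ht => hbound t (hsetH ht)
      have e3 : (∫ t in Ioc (0:ℝ) H, C * t ^ (-α)) = C / (1 - α) * H ^ (1 - α) := by
        rw [← intervalIntegral.integral_of_le hH0.le, intervalIntegral.integral_const_mul,
          integral_rpow (Or.inl (by linarith))]
        rw [show -α + 1 = 1 - α by ring, Real.zero_rpow (by intro h; linarith : 1 - α ≠ 0)]
        field_simp
        simp only [sub_zero]
      calc ‖∫ t in Ioc 0 H, φ t‖ ≤ ∫ t in Ioc (0:ℝ) H, C * t ^ (-α) := le_trans e1 e2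
        _ = C / (1 - α) * H ^ (1 - α) := e3
    · have := (auxA_tendsto_rpow_zero (by linarith : (0:ℝ) < 1 - α)).const_mul (C / (1 - α))
      simpa using this
  have hrepr : ∀ᶠ H in 𝓝[>] (0:ℝ),
      (∫ t in Ioc 0 b, φ t) - (∫ t in Ioc 0 H, φ t) = ∫ t in H..b, φ t := by
    filter_upwards [Ioo_mem_nhdsGT hb] with H hH
    have hH0 : 0 < H := hH.1
    have hHb : H ≤ b := hH.2.le
    have hunion : (∫ t in Ioc 0 H, φ t) + (∫ t in Ioc H b, φ t) = ∫ t in Ioc 0 b, φ t := by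
      rw [← MeasureTheory.setIntegral_union (Ioc_disjoint_Ioc_of_le le_rfl) measurableSet_Ioc
        (hint.mono_set (Ioc_subset_Ioc le_rfl hHb)) (hint.mono_set (Ioc_subset_Ioc hH0.le le_rfl)),
        Ioc_union_Ioc_eq_Ioc hH0.le hHb]
    rw [intervalIntegral.integral_of_le hHb]
    linarith
  have := (tendsto_const_nhds (x := ∫ t in Ioc 0 b, φ t) (f := 𝓝[>] (0:ℝ))).sub htend0
  rw [sub_zero] at this
  exact Tendsto.congr' hrepr this

lemma auxA_tendsto_rpow_neg_atTop {p : ℝ} (hp : p < 0) :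
    Tendsto (fun t : ℝ => t ^ p) (𝓝[>] (0:ℝ)) atTop := by
  have h2 : Tendsto (fun x : ℝ => x ^ (-p)) atTop atTop :=
    tendsto_rpow_atTop (by linarith)
  have h3 := h2.comp tendsto_inv_nhdsGT_zero
  refine h3.congr' ?_
  filter_upwards [self_mem_nhdsWithin] with t (ht : 0 < t)
  simp only [Function.comp_apply]
  rw [Real.inv_rpow ht.le, ← Real.rpow_neg ht.le, neg_neg]

lemma auxB_isLittleO_integral_rpow (b α c : ℝ) (hb : 0 < b) (hα : 1 < α) (φ : ℝ → ℝ)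
    (hcont : ContinuousOn φ (Ioc 0 b))
    (hasym : Tendsto (fun t => t ^ α * φ t) (𝓝[>] (0:ℝ)) (𝓝 c)) :
    (fun H => (∫ t in H..b, φ t) - c / (α - 1) * H ^ (1 - α)) =o[𝓝[>] (0:ℝ)]
      fun H => H ^ (1 - α) := by
  rw [Asymptotics.isLittleO_iff]
  intro δ hδ
  have hα1 : 0 < α - 1 := by linarith
  set δ' : ℝ := δ / 2 * (α - 1) with hδ'def
  have hδ' : 0 < δ' := by positivity
  have hev : ∀ᶠ t in 𝓝[>] (0:ℝ), |t ^ α * φ t - c| < δ' := by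
    have := Metric.tendsto_nhds.mp hasym δ' hδ'
    simpa [Real.dist_eq] using this
  obtain ⟨u, hu, hsub⟩ := mem_nhdsGT_iff_exists_Ioc_subset.mp hev
  set H1 := min u b with hH1def
  have hH1pos : 0 < H1 := lt_min hu hb
  have hH1b : H1 ≤ b := min_le_right _ _
  -- pointwise bound on (0, H1]
  have hbound : ∀ t ∈ Ioc (0:ℝ) H1, |φ t - c * t ^ (-α)| ≤ δ' * t ^ (-α) := by
    intro t ht
    have ht0 : 0 < t := ht.1
    have h1 : |t ^ α * φ t - c| ≤ δ' :=
      (hsub ⟨ht.1, ht.2.trans (min_le_left _ _)⟩).le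
    have htα : (0:ℝ) < t ^ α := Real.rpow_pos_of_pos ht0 _
    have htα' : (0:ℝ) < t ^ (-α) := Real.rpow_pos_of_pos ht0 _
    have hid : φ t - c * t ^ (-α) = (t ^ α * φ t - c) * t ^ (-α) := by
      rw [Real.rpow_neg ht0.le]
      field_simp
    rw [hid, abs_mul, abs_of_pos htα']
    exact mul_le_mul_of_nonneg_right h1 htα'.le
  -- interval integrability on [H1, b] and constant K
  have iH1b : IntervalIntegrable φ volume H1 b := by
    apply ContinuousOn.intervalIntegrable
    apply hcont.mono
    rw [uIcc_of_le hH1b]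
    exact fun x hx => ⟨lt_of_lt_of_le hH1pos hx.1, hx.2⟩
  set K : ℝ := (∫ t in H1..b, φ t) - c / (α - 1) * H1 ^ (1 - α) with hKdef
  have hKev : ∀ᶠ H in 𝓝[>] (0:ℝ), 2 * |K| / δ ≤ H ^ (1 - α) :=
    (auxA_tendsto_rpow_neg_atTop (by linarith : 1 - α < 0)).eventually_ge_atTop _
  filter_upwards [Ioo_mem_nhdsGT hH1pos, hKev] with H hH hHK
  have hH0 : 0 < H := hH.1
  have hHH1 : H < H1 := hH.2
  have hnot : (0:ℝ) ∉ uIcc H H1 := by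
    rw [uIcc_of_le hHH1.le]
    exact fun h => absurd h.1 (not_le.mpr hH0)
  -- integrability on [H, H1]
  have iHH1 : IntervalIntegrable φ volume H H1 := by
    apply ContinuousOn.intervalIntegrable
    apply hcont.mono
    rw [uIcc_of_le hHH1.le]
    exact fun x hx => ⟨lt_of_lt_of_le hH0 hx.1, hx.2.trans hH1b⟩
  have irpow : IntervalIntegrable (fun t : ℝ => c * t ^ (-α)) volume H H1 :=
    (intervalIntegral.intervalIntegrable_rpow (Or.inr hnot)).const_mul c
  have irpow' : IntervalIntegrable (fun t : ℝ => δ' * t ^ (-α)) volume H H1 :=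
    (intervalIntegral.intervalIntegrable_rpow (Or.inr hnot)).const_mul δ'
  -- splitting
  have hsplit : (∫ t in H..H1, φ t) + ∫ t in H1..b, φ t = ∫ t in H..b, φ t :=
    intervalIntegral.integral_add_adjacent_intervals iHH1 iH1b
  have hdecomp : (∫ t in H..H1, φ t)
      = (∫ t in H..H1, (φ t - c * t ^ (-α))) + ∫ t in H..H1, c * t ^ (-α) := by
    rw [← intervalIntegral.integral_add (iHH1.sub irpow) irpow]
    simp
  have hcomp : (∫ t in H..H1, c * t ^ (-α))
      = c / (α - 1) * (H ^ (1 - α) - H1 ^ (1 - α)) := by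
    have hne : α - 1 ≠ 0 := by linarith
    have hne' : (1:ℝ) - α ≠ 0 := by intro h; apply hne; linarith
    rw [intervalIntegral.integral_const_mul,
      integral_rpow (Or.inr ⟨by intro h; linarith, hnot⟩)]
    rw [show -α + 1 = 1 - α by ring]
    field_simp
    ring
  -- bound on ρ integral
  have hρ : |∫ t in H..H1, (φ t - c * t ^ (-α))| ≤ δ / 2 * H ^ (1 - α) := by
    have h1 : |∫ t in H..H1, (φ t - c * t ^ (-α))|
        ≤ ∫ t in H..H1, |φ t - c * t ^ (-α)| :=
      intervalIntegral.abs_integral_le_integral_abs hHH1.le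
    have h2 : (∫ t in H..H1, |φ t - c * t ^ (-α)|) ≤ ∫ t in H..H1, δ' * t ^ (-α) := by
      apply intervalIntegral.integral_mono_on hHH1.le (iHH1.sub irpow).abs irpow'
      intro x hx
      exact hbound x ⟨lt_of_lt_of_le hH0 hx.1, hx.2⟩
    have h3 : (∫ t in H..H1, δ' * t ^ (-α))
        = δ' / (α - 1) * (H ^ (1 - α) - H1 ^ (1 - α)) := by
      have hne : α - 1 ≠ 0 := by linarith
      have hne' : (1:ℝ) - α ≠ 0 := by intro h; apply hne; linarith
      rw [intervalIntegral.integral_const_mul,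
        integral_rpow (Or.inr ⟨by intro h; linarith, hnot⟩)]
      rw [show -α + 1 = 1 - α by ring]
      field_simp
      ring
    have h4 : δ' / (α - 1) * (H ^ (1 - α) - H1 ^ (1 - α)) ≤ δ / 2 * H ^ (1 - α) := by
      have hpos1 : (0:ℝ) ≤ H1 ^ (1 - α) := (Real.rpow_pos_of_pos hH1pos _).le
      have : δ' / (α - 1) = δ / 2 := by
        rw [hδ'def]; field_simp
      rw [this]
      nlinarith [hδ.le]
    linarith
  -- final
  have hKle : |K| ≤ δ / 2 * H ^ (1 - α) := by
    have hδne : (0:ℝ) < δ := hδ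
    rw [div_le_iff₀ hδne] at hHK
    nlinarith
  have hfin : (∫ t in H..b, φ t) - c / (α - 1) * H ^ (1 - α)
      = (∫ t in H..H1, (φ t - c * t ^ (-α))) + K := by
    rw [hKdef, ← hsplit, hdecomp, hcomp]
    ring
  rw [hfin]
  have hHpow : (0:ℝ) < H ^ (1 - α) := Real.rpow_pos_of_pos hH0 _
  calc ‖(∫ t in H..H1, (φ t - c * t ^ (-α))) + K‖
      ≤ |∫ t in H..H1, (φ t - c * t ^ (-α))| + |K| := norm_add_le _ _
    _ ≤ δ / 2 * H ^ (1 - α) + δ / 2 * H ^ (1 - α) := add_le_add hρ hKle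
    _ = δ * ‖H ^ (1 - α)‖ := by rw [Real.norm_eq_abs, abs_of_pos hHpow]; ring

lemma auxC_isLittleO_integral_log (b c : ℝ) (hb : 0 < b) (φ : ℝ → ℝ)
    (hcont : ContinuousOn φ (Ioc 0 b))
    (hasym : Tendsto (fun t => t * φ t) (𝓝[>] (0:ℝ)) (𝓝 c)) :
    (fun H => (∫ t in H..b, φ t) - (-c * Real.log H)) =o[𝓝[>] (0:ℝ)] Real.log := by
  rw [Asymptotics.isLittleO_iff]
  intro δ hδ
  set δ' : ℝ := δ / 2 with hδ'def
  have hδ' : 0 < δ' := by positivity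
  have hev : ∀ᶠ t in 𝓝[>] (0:ℝ), |t * φ t - c| < δ' := by
    have := Metric.tendsto_nhds.mp hasym δ' hδ'
    simpa [Real.dist_eq] using this
  obtain ⟨u, hu, hsub⟩ := mem_nhdsGT_iff_exists_Ioc_subset.mp hev
  set H1 := min u (min b 1) with hH1def
  have hH1pos : 0 < H1 := lt_min hu (lt_min hb one_pos)
  have hH1b : H1 ≤ b := le_trans (min_le_right _ _) (min_le_left _ _)
  have hH1one : H1 ≤ 1 := le_trans (min_le_right _ _) (min_le_right _ _)
  have hbound : ∀ t ∈ Ioc (0:ℝ) H1, |φ t - c * t⁻¹| ≤ δ' * t⁻¹ := by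
    intro t ht
    have ht0 : 0 < t := ht.1
    have h1 : |t * φ t - c| ≤ δ' :=
      (hsub ⟨ht.1, ht.2.trans (min_le_left _ _)⟩).le
    have htinv : (0:ℝ) < t⁻¹ := by positivity
    have hid : φ t - c * t⁻¹ = (t * φ t - c) * t⁻¹ := by
      field_simp
    rw [hid, abs_mul, abs_of_pos htinv]
    exact mul_le_mul_of_nonneg_right h1 htinv.le
  have iH1b : IntervalIntegrable φ volume H1 b := by
    apply ContinuousOn.intervalIntegrable
    apply hcont.mono
    rw [uIcc_of_le hH1b]
    exact fun x hx => ⟨lt_of_lt_of_le hH1pos hx.1, hx.2⟩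
  set K : ℝ := (∫ t in H1..b, φ t) + c * Real.log H1 with hKdef
  set M : ℝ := (2 * |K| + δ' * |Real.log H1|) / δ' with hMdef
  have hKev : ∀ᶠ H in 𝓝[>] (0:ℝ), Real.log H ≤ -M :=
    Real.tendsto_log_nhdsGT_zero.eventually (eventually_le_atBot _)
  filter_upwards [Ioo_mem_nhdsGT hH1pos, hKev] with H hH hHK
  have hH0 : 0 < H := hH.1
  have hHH1 : H < H1 := hH.2
  have hHone : H < 1 := lt_of_lt_of_le hHH1 hH1one
  have hlogH : Real.log H < 0 := Real.log_neg hH0 hHone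
  have hnot : (0:ℝ) ∉ uIcc H H1 := by
    rw [uIcc_of_le hHH1.le]
    exact fun h => absurd h.1 (not_le.mpr hH0)
  have hne : ∀ x ∈ Icc H H1, x ≠ 0 := fun x hx => (lt_of_lt_of_le hH0 hx.1).ne'
  have iHH1 : IntervalIntegrable φ volume H H1 := by
    apply ContinuousOn.intervalIntegrable
    apply hcont.mono
    rw [uIcc_of_le hHH1.le]
    exact fun x hx => ⟨lt_of_lt_of_le hH0 hx.1, hx.2.trans hH1b⟩
  have iinv : IntervalIntegrable (fun t : ℝ => c * t⁻¹) volume H H1 := by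
    apply ContinuousOn.intervalIntegrable
    rw [uIcc_of_le hHH1.le]
    exact continuousOn_const.mul (continuousOn_id.inv₀ hne)
  have iinv' : IntervalIntegrable (fun t : ℝ => δ' * t⁻¹) volume H H1 := by
    apply ContinuousOn.intervalIntegrable
    rw [uIcc_of_le hHH1.le]
    exact continuousOn_const.mul (continuousOn_id.inv₀ hne)
  have hsplit : (∫ t in H..H1, φ t) + ∫ t in H1..b, φ t = ∫ t in H..b, φ t :=
    intervalIntegral.integral_add_adjacent_intervals iHH1 iH1b
  have hdecomp : (∫ t in H..H1, φ t)
      = (∫ t in H..H1, (φ t - c * t⁻¹)) + ∫ t in H..H1, c * t⁻¹ := by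
    rw [← intervalIntegral.integral_add (iHH1.sub iinv) iinv]
    simp
  have hloginv : (∫ t in H..H1, (t : ℝ)⁻¹) = Real.log H1 - Real.log H := by
    rw [integral_inv hnot, Real.log_div hH1pos.ne' hH0.ne']
  have hcomp : (∫ t in H..H1, c * t⁻¹) = c * (Real.log H1 - Real.log H) := by
    rw [intervalIntegral.integral_const_mul, hloginv]
  have hρ : |∫ t in H..H1, (φ t - c * t⁻¹)| ≤ δ' * (Real.log H1 - Real.log H) := by
    have h1 : |∫ t in H..H1, (φ t - c * t⁻¹)| ≤ ∫ t in H..H1, |φ t - c * t⁻¹| :=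
      intervalIntegral.abs_integral_le_integral_abs hHH1.le
    have h2 : (∫ t in H..H1, |φ t - c * t⁻¹|) ≤ ∫ t in H..H1, δ' * t⁻¹ := by
      apply intervalIntegral.integral_mono_on hHH1.le (iHH1.sub iinv).abs iinv'
      intro x hx
      exact hbound x ⟨lt_of_lt_of_le hH0 hx.1, hx.2⟩
    have h3 : (∫ t in H..H1, δ' * t⁻¹) = δ' * (Real.log H1 - Real.log H) := by
      rw [intervalIntegral.integral_const_mul, hloginv]
    linarith
  have hfin : (∫ t in H..b, φ t) - (-c * Real.log H)
      = (∫ t in H..H1, (φ t - c * t⁻¹)) + K := by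
    rw [hKdef, ← hsplit, hdecomp, hcomp]
    ring
  rw [hfin]
  have hMle : δ' * M ≤ δ' * (-Real.log H) := by
    apply mul_le_mul_of_nonneg_left _ hδ'.le
    linarith
  have habs : Real.log H1 - Real.log H ≤ |Real.log H1| + (-Real.log H) := by
    have := le_abs_self (Real.log H1)
    linarith
  have hnormlog : ‖Real.log H‖ = -Real.log H := by
    rw [Real.norm_eq_abs, abs_of_neg hlogH]
  calc ‖(∫ t in H..H1, (φ t - c * t⁻¹)) + K‖
      ≤ |∫ t in H..H1, (φ t - c * t⁻¹)| + |K| := norm_add_le _ _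
    _ ≤ δ' * (|Real.log H1| + (-Real.log H)) + |K| := by
        have := hρ.trans (mul_le_mul_of_nonneg_left habs hδ'.le)
        linarith
    _ ≤ δ * ‖Real.log H‖ := by
        rw [hnormlog]
        have hMeq : δ' * M = 2 * |K| + δ' * |Real.log H1| := by
          rw [hMdef]; field_simp
        have hM2 : 2 * |K| + δ' * |Real.log H1| ≤ δ' * (-Real.log H) := by
          rw [← hMeq]; exact hMle
        have hδeq : δ = 2 * δ' := by rw [hδ'def]; ring
        rw [hδeq]
        nlinarith [abs_nonneg K]

/-- Asymptotics of `ψ'` as `H ↓ 0` for positive `C²` solutions of the traveling-wave ODE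
`ψ'' + (2/3)·(H² + H^{n−1})⁻¹·ψ^{−1/2} = 0` on `(0,ε)` with `ψ(H) → k²` as `H ↓ 0`:
if `0 < n < 2` then `ψ'` converges to a finite limit; if `n = 2` then
`ψ'(H) = −(2/(3k))·ln H·(1+o(1))`; if `2 < n < 3` then
`ψ'(H) = (2/(3(n−2)k))·H^{2−n}·(1+o(1))`. -/
theorem derivative_asymptotics_contact_line (n k ε : ℝ) (hn : n ∈ Set.Ioo (0 : ℝ) 3)
    (hk : 0 < k) (hε : 0 < ε) (ψ : ℝ → ℝ)
    (hpos : ∀ H ∈ Set.Ioo (0 : ℝ) ε, 0 < ψ H)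
    (hreg : ContDiffOn ℝ 2 ψ (Set.Ioo 0 ε))
    (hlim : Tendsto ψ (𝓝[>] (0 : ℝ)) (𝓝 (k ^ 2)))
    (hode : ∀ H ∈ Set.Ioo (0 : ℝ) ε,
      deriv (deriv ψ) H + 2 / 3 * (H ^ 2 + H ^ (n - 1))⁻¹ * ψ H ^ (-(1 / 2) : ℝ) = 0) :
    (n < 2 → ∃ L : ℝ, Tendsto (deriv ψ) (𝓝[>] (0 : ℝ)) (𝓝 L)) ∧
    (n = 2 →
      (fun H => deriv ψ H - (-(2 / (3 * k)) * Real.log H)) =o[𝓝[>] (0 : ℝ)]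
        fun H => Real.log H) ∧
    (2 < n →
      (fun H => deriv ψ H - 2 / (3 * (n - 2) * k) * H ^ (2 - n)) =o[𝓝[>] (0 : ℝ)]
        fun H => H ^ (2 - n)) := by
  obtain ⟨hn0, hn3⟩ := hn
  set φ : ℝ → ℝ := fun t => 2 / 3 * (t ^ 2 + t ^ (n - 1))⁻¹ * ψ t ^ (-(1 / 2) : ℝ) with hφdef
  set b : ℝ := ε / 2 with hbdef
  have hb0 : 0 < b := by positivity
  have hbε : b < ε := by rw [hbdef]; linarith
  have hφcont : ContinuousOn φ (Ioo 0 ε) := by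
    apply ContinuousOn.mul
    · apply ContinuousOn.mul continuousOn_const
      apply ContinuousOn.inv₀
      · exact ((continuous_pow 2).continuousOn).add
          (ContinuousOn.rpow_const continuousOn_id (fun t ht => Or.inl ht.1.ne'))
      · intro t ht
        have h1 : (0:ℝ) < t ^ (n-1) := Real.rpow_pos_of_pos ht.1 _
        positivity
    · exact (hreg.continuousOn).rpow_const (fun t ht => Or.inl (hpos t ht).ne')
  have hφcont' : ContinuousOn φ (Ioc 0 b) :=
    hφcont.mono (fun x hx => ⟨hx.1, lt_of_le_of_lt hx.2 hbε⟩)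
  have hreg' : ContDiffOn ℝ ((1 : WithTop ℕ∞) + 1) ψ (Ioo 0 ε) := by
    have : ((1 : WithTop ℕ∞) + 1) = 2 := by norm_num
    rw [this]; exact hreg
  have hd := (contDiffOn_succ_iff_deriv_of_isOpen isOpen_Ioo).mp hreg'
  have hd2 : DifferentiableOn ℝ (deriv ψ) (Ioo 0 ε) := hd.2.2.differentiableOn one_ne_zero
  have hderiv2 : ∀ t ∈ Ioo (0:ℝ) ε, HasDerivAt (deriv ψ) (-(φ t)) t := by
    intro t ht
    have h1 : HasDerivAt (deriv ψ) (deriv (deriv ψ) t) t :=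
      ((hd2 t ht).differentiableAt (isOpen_Ioo.mem_nhds ht)).hasDerivAt
    have h2 : deriv (deriv ψ) t = -(φ t) := by
      have h3 := hode t ht
      rw [hφdef]
      simp only
      linarith
    rwa [h2] at h1
  have hrep : ∀ H ∈ Ioc (0:ℝ) b, deriv ψ H = deriv ψ b + ∫ t in H..b, φ t := by
    intro H hH
    have hsub : uIcc H b ⊆ Ioo 0 ε := by
      rw [uIcc_of_le hH.2]
      exact fun x hx => ⟨lt_of_lt_of_le hH.1 hx.1, lt_of_le_of_lt hx.2 hbε⟩
    have hftc : ∫ t in H..b, -(φ t) = deriv ψ b - deriv ψ H :=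
      intervalIntegral.integral_eq_sub_of_hasDerivAt
        (fun t ht => hderiv2 t (hsub ht))
        (((hφcont.mono hsub)).neg.intervalIntegrable)
    rw [intervalIntegral.integral_neg] at hftc
    linarith
  have hψlim : Tendsto (fun t => ψ t ^ (-(1/2):ℝ)) (𝓝[>] (0:ℝ)) (𝓝 k⁻¹) := by
    have hc : ContinuousAt (fun x : ℝ => x ^ (-(1/2):ℝ)) (k ^ 2) :=
      Real.continuousAt_rpow_const _ _ (Or.inl (by positivity))
    have h1 := hc.tendsto.comp hlim
    have hval : (k ^ 2 : ℝ) ^ (-(1/2):ℝ) = k⁻¹ := by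
      rw [show ((k:ℝ)^2) = k ^ ((2:ℕ):ℝ) from (Real.rpow_natCast k 2).symm,
        ← Real.rpow_mul hk.le]
      norm_num
      rw [show (-1 : ℝ) = ((-1 : ℤ) : ℝ) by norm_num, Real.rpow_intCast]
      simp
    rwa [hval] at h1
  have hfrac : Tendsto (fun t : ℝ => (t ^ (3 - n) + 1)⁻¹) (𝓝[>] (0:ℝ)) (𝓝 1) := by
    have h0 : Tendsto (fun t : ℝ => t ^ (3 - n)) (𝓝[>] (0:ℝ)) (𝓝 0) := by
      have h : ContinuousAt (fun t : ℝ => t ^ (3-n)) 0 :=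
        Real.continuousAt_rpow_const 0 (3-n) (Or.inr (by linarith))
      have := h.tendsto.mono_left (nhdsWithin_le_nhds (s := Ioi (0:ℝ)))
      simpa [Real.zero_rpow (show (3:ℝ) - n ≠ 0 by intro h'; linarith)] using this
    have h1 := (h0.add (tendsto_const_nhds (x := (1:ℝ)))).inv₀ (by norm_num)
    simpa using h1
  have hφasym : Tendsto (fun t => t ^ (n - 1) * φ t) (𝓝[>] (0:ℝ)) (𝓝 (2 / (3 * k))) := by
    have hmain : Tendsto (fun t : ℝ => 2 / 3 * (t ^ (3 - n) + 1)⁻¹ * ψ t ^ (-(1/2):ℝ))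
        (𝓝[>] (0:ℝ)) (𝓝 (2 / 3 * 1 * k⁻¹)) :=
      (tendsto_const_nhds.mul hfrac).mul hψlim
    have hval : 2 / 3 * 1 * k⁻¹ = 2 / (3 * k) := by field_simp
    rw [hval] at hmain
    refine Tendsto.congr' ?_ hmain
    filter_upwards [self_mem_nhdsWithin] with t (ht : 0 < t)
    have htn : (0:ℝ) < t ^ (n-1) := Real.rpow_pos_of_pos ht _
    have hden : (0:ℝ) < t ^ (3-n) + 1 := by
      have := Real.rpow_pos_of_pos ht (3-n); linarith
    have hsumid : t ^ 2 + t ^ (n-1) = t ^ (n-1) * (t ^ (3-n) + 1) := by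
      rw [mul_add, mul_one, ← Real.rpow_add ht,
        show n - 1 + (3 - n) = ((2:ℕ):ℝ) by norm_num, Real.rpow_natCast]
    rw [hφdef]
    simp only
    rw [hsumid, mul_inv]
    field_simp
  constructor
  · -- case n < 2
    intro hn2
    obtain ⟨L0, hL0⟩ := auxD_tendsto_integral b (n-1) (2/(3*k)) hb0 (by linarith) φ hφcont' hφasym
    refine ⟨deriv ψ b + L0, ?_⟩
    have h1 : Tendsto (fun H => deriv ψ b + ∫ t in H..b, φ t) (𝓝[>] (0:ℝ))
        (𝓝 (deriv ψ b + L0)) := tendsto_const_nhds.add hL0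
    refine Tendsto.congr' ?_ h1
    filter_upwards [Ioo_mem_nhdsGT hb0] with H hH
    exact (hrep H ⟨hH.1, hH.2.le⟩).symm
  constructor
  · -- case n = 2
    intro hn2
    subst hn2
    have hφasym2 : Tendsto (fun t => t * φ t) (𝓝[>] (0:ℝ)) (𝓝 (2/(3*k))) := by
      refine Tendsto.congr' ?_ hφasym
      filter_upwards with t
      norm_num
    have hlo := auxC_isLittleO_integral_log b (2/(3*k)) hb0 φ hφcont' hφasym2
    have hlogTop : Tendsto (norm ∘ Real.log) (𝓝[>] (0:ℝ)) atTop := by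
      have := tendsto_abs_atBot_atTop.comp Real.tendsto_log_nhdsGT_zero
      simpa [Function.comp_def, Real.norm_eq_abs] using this
    have hconst : (fun _ : ℝ => deriv ψ b) =o[𝓝[>] (0:ℝ)] Real.log :=
      Asymptotics.isLittleO_const_left.mpr (Or.inr hlogTop)
    have hsum := hlo.add hconst
    refine hsum.congr' ?_ (Filter.EventuallyEq.refl _ _)
    filter_upwards [Ioo_mem_nhdsGT hb0] with H hH
    rw [hrep H ⟨hH.1, hH.2.le⟩]
    ring
  · -- case 2 < n
    intro hn2
    have hα : 1 < n - 1 := by linarith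
    have hlo := auxB_isLittleO_integral_rpow b (n-1) (2/(3*k)) hb0 hα φ hφcont' hφasym
    rw [show (1:ℝ) - (n-1) = 2 - n from by ring,
      show (2/(3*k)) / (n - 1 - 1) = 2 / (3 * (n-2) * k) from by
        have h1 : (n:ℝ) - 2 ≠ 0 := by intro h; linarith
        have h2 : k ≠ 0 := hk.ne'
        rw [show n - 1 - 1 = n - 2 by ring]
        field_simp
        ] at hlo
    have hpowTop : Tendsto (norm ∘ (fun H : ℝ => H ^ (2 - n))) (𝓝[>] (0:ℝ)) atTop := by
      have := tendsto_abs_atTop_atTop.comp (auxA_tendsto_rpow_neg_atTop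
        (show (2:ℝ) - n < 0 by linarith))
      simpa [Function.comp_def, Real.norm_eq_abs] using this
    have hconst : (fun _ : ℝ => deriv ψ b) =o[𝓝[>] (0:ℝ)] (fun H : ℝ => H ^ (2 - n)) :=
      Asymptotics.isLittleO_const_left.mpr (Or.inr hpowTop)
    have hsum := hlo.add hconst
    refine hsum.congr' ?_ (Filter.EventuallyEq.refl _ _)
    filter_upwards [Ioo_mem_nhdsGT hb0] with H hH
    rw [hrep H ⟨hH.1, hH.2.le⟩]
    ring
end

section
/- Let n ∈ (0,3) and k > 0, and let μ : ℝ → ℝ be twice continuously differentiable with 1 + μ(s) > 0 for all s, satisfying μ''(s) − μ'(s) + (2/(3k³(1+e^{−(3−n)s})))·(1+μ(s))^{−1/2} = 0 for all s ∈ ℝ and μ(s) → 0 as s → −∞. Define q(s) := e^{−((3−n)/3)s}·μ(s) and p(s) := e^{−((3−n)/3)s}·μ'(s). Then, as s → −∞: if 0 < n < 2, q(s) = O(e^{(n/3)s}) and p(s) = O(e^{(n/3)s}); if n = 2, q(s) = −(2/(3k³))·s·e^{(2/3)s}·(1+o(1)) and p(s) = −(2/(3k³))·s·e^{(2/3)s}·(1+o(1));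 if 2 < n < 3, q(s) = (2/(3(3−n)(n−2)k³))·e^{(2(3−n)/3)s}·(1+o(1)) and p(s) = (2/(3(n−2)k³))·e^{(2(3−n)/3)s}·(1+o(1)). In particular (e^{((3−n)/3)s}, q(s), p(s)) → (0,0,0) as s → −∞. -/
open Filter Topology Set Asymptotics

private lemma cl_integral_exp_mul {c : ℝ} (hc : c ≠ 0) (a b : ℝ) :
    ∫ t in a..b, Real.exp (c * t) = (Real.exp (c * b) - Real.exp (c * a)) / c := by
  have h : ∀ t ∈ Set.uIcc a b, HasDerivAt (fun u => Real.exp (c * u) / c) (Real.exp (c * t)) t := by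
    intro t _
    have h1 : HasDerivAt (fun u : ℝ => c * u) c t := by
      simpa using (hasDerivAt_id t).const_mul c
    have := (h1.exp).div_const c
    simpa [mul_comm, mul_div_assoc, mul_div_cancel_left₀ _ hc] using this
  have hint : IntervalIntegrable (fun t => Real.exp (c * t)) MeasureTheory.volume a b :=
    (Real.continuous_exp.comp (continuous_const.mul continuous_id)).intervalIntegrable a b
  have := intervalIntegral.integral_eq_sub_of_hasDerivAt h hint
  rw [this]; ring

private lemma cl_integral_neg_mul_exp (a b : ℝ) :
    ∫ t in a..b, (-t) * Real.exp t = (1 - b) * Real.exp b - (1 - a) * Real.exp a := by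
  have h : ∀ t ∈ Set.uIcc a b, HasDerivAt (fun u => (1 - u) * Real.exp u) ((-t) * Real.exp t) t := by
    intro t _
    have h1 : HasDerivAt (fun u : ℝ => 1 - u) (-1) t := by
      simpa using ((hasDerivAt_id t).const_sub 1)
    have := h1.mul (Real.hasDerivAt_exp t)
    exact this.congr_deriv (by ring)
  have hint : IntervalIntegrable (fun t : ℝ => (-t) * Real.exp t) MeasureTheory.volume a b :=
    (continuous_id.neg.mul Real.continuous_exp).intervalIntegrable a b
  exact intervalIntegral.integral_eq_sub_of_hasDerivAt h hint

private lemma cl_tendsto_mul_exp_atBot {c : ℝ} (hc : 0 < c) :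
    Tendsto (fun s : ℝ => s * Real.exp (c * s)) atBot (𝓝 0) := by
  have h1 : Tendsto (fun x : ℝ => x * Real.exp (-x)) atTop (𝓝 0) := by
    simpa using Real.tendsto_pow_mul_exp_neg_atTop_nhds_zero (n := 1)
  have h2 : Tendsto (fun s : ℝ => -(c * s)) atBot atTop := by
    apply Tendsto.comp tendsto_neg_atBot_atTop
    exact Tendsto.const_mul_atBot hc tendsto_id
  have h3 := (h1.comp h2).const_mul (-(1/c))
  have : (fun s : ℝ => -(1/c) * ((fun x : ℝ => x * Real.exp (-x)) ∘ (fun s => -(c*s))) s)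
      = fun s : ℝ => s * Real.exp (c * s) := by
    funext s
    simp only [Function.comp_apply, neg_neg]
    field_simp
  rw [this] at h3
  simpa using h3

private lemma cl_F_identity (D g : ℝ → ℝ) (hD : ∀ s, HasDerivAt D (D s - g s) s)
    (hgc : Continuous g) (s b : ℝ) :
    Real.exp (-s) * D s = Real.exp (-b) * D b + ∫ t in s..b, Real.exp (-t) * g t := by
  have hDc : Continuous D := by
    rw [continuous_iff_continuousAt]; intro t; exact (hD t).continuousAt
  have key : ∀ t ∈ Set.uIcc s b, HasDerivAt (fun u => Real.exp (-u) * D u)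
      (-(Real.exp (-t) * g t)) t := by
    intro t _
    have h1 : HasDerivAt (fun u : ℝ => Real.exp (-u)) (-Real.exp (-t)) t := by
      simpa using ((hasDerivAt_neg t).exp)
    have := h1.mul (hD t)
    exact this.congr_deriv (by ring)
  have hint : IntervalIntegrable (fun t : ℝ => -(Real.exp (-t) * g t)) MeasureTheory.volume s b :=
    (((Real.continuous_exp.comp continuous_neg).mul hgc).neg).intervalIntegrable s b
  have := intervalIntegral.integral_eq_sub_of_hasDerivAt key hint
  rw [intervalIntegral.integral_neg] at this
  linarith [this]

private lemma cl_mu_identity (μ D : ℝ → ℝ) (hμ : ∀ s, HasDerivAt μ (D s) s)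
    (hDc : Continuous D) (r s : ℝ) :
    μ s - μ r = ∫ t in r..s, D t := by
  exact (intervalIntegral.integral_eq_sub_of_hasDerivAt (fun t _ => hμ t)
    (hDc.intervalIntegrable r s)).symm

-- eventual two-sided bound on g from the limit
private lemma cl_g_bounds (g : ℝ → ℝ) (G α δ : ℝ) (hG : 0 < G) (hδ : 0 < δ)
    (hgb : Tendsto (fun t => g t / (G * Real.exp (α * t))) atBot (𝓝 1)) :
    ∀ᶠ t in atBot, (1-δ)*(G*Real.exp (α*t)) ≤ g t ∧ g t ≤ (1+δ)*(G*Real.exp (α*t)) := by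
  have h := hgb.eventually (Metric.ball_mem_nhds (1:ℝ) hδ)
  filter_upwards [h] with t ht
  have hP : 0 < G * Real.exp (α*t) := mul_pos hG (Real.exp_pos _)
  rw [Real.dist_eq, abs_sub_lt_iff] at ht
  have hq : g t = (g t / (G * Real.exp (α*t))) * (G * Real.exp (α*t)) := by
    field_simp
  constructor
  · rw [hq]; apply mul_le_mul_of_nonneg_right _ hP.le; linarith [ht.2]
  · rw [hq]; apply mul_le_mul_of_nonneg_right _ hP.le; linarith [ht.1]

private lemma cl_int_sandwich (g : ℝ → ℝ) (hgc : Continuous g) (G α δ T s : ℝ) (hs : s ≤ T)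
    (hb : ∀ t ≤ T, (1-δ)*(G*Real.exp (α*t)) ≤ g t ∧ g t ≤ (1+δ)*(G*Real.exp (α*t))) :
    (1-δ)*(G * ∫ t in s..T, Real.exp ((α-1)*t)) ≤ (∫ t in s..T, Real.exp (-t) * g t) ∧
    (∫ t in s..T, Real.exp (-t) * g t) ≤ (1+δ)*(G * ∫ t in s..T, Real.exp ((α-1)*t)) := by
  have hexp : Continuous fun t : ℝ => Real.exp ((α-1)*t) :=
    Real.continuous_exp.comp (continuous_const.mul continuous_id)
  have hint1 : IntervalIntegrable (fun t : ℝ => Real.exp (-t) * g t) MeasureTheory.volume s T :=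
    ((Real.continuous_exp.comp continuous_neg).mul hgc).intervalIntegrable s T
  have hkey : ∀ (c : ℝ), c * (G * ∫ t in s..T, Real.exp ((α-1)*t))
      = ∫ t in s..T, c * G * Real.exp ((α-1)*t) := by
    intro c
    rw [← intervalIntegral.integral_const_mul, ← intervalIntegral.integral_const_mul]
    simp only [mul_assoc]
  have hid : ∀ t : ℝ, Real.exp ((α-1)*t) = Real.exp (-t) * Real.exp (α*t) := by
    intro t; rw [← Real.exp_add]; ring_nf
  constructor
  · rw [hkey]
    apply intervalIntegral.integral_mono_on hs (by
      apply Continuous.intervalIntegrable; exact (continuous_const.mul hexp)) hint1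
    intro t ht
    have h2 := (hb t ht.2).1
    have : (1-δ) * G * Real.exp ((α-1)*t) = Real.exp (-t) * ((1-δ)*(G*Real.exp (α*t))) := by
      rw [hid t]; ring
    rw [this]
    exact mul_le_mul_of_nonneg_left h2 (Real.exp_pos _).le
  · rw [hkey]
    apply intervalIntegral.integral_mono_on hs hint1 (by
      apply Continuous.intervalIntegrable; exact (continuous_const.mul hexp))
    intro t ht
    have h2 := (hb t ht.2).2
    have : (1+δ) * G * Real.exp ((α-1)*t) = Real.exp (-t) * ((1+δ)*(G*Real.exp (α*t))) := by
      rw [hid t]; ring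
    rw [this]
    exact mul_le_mul_of_nonneg_left h2 (Real.exp_pos _).le

private lemma cl_caseA (α G : ℝ) (hα : 1 < α) (hG : 0 < G) (μ D g : ℝ → ℝ)
    (hμ : ∀ s, HasDerivAt μ (D s) s)
    (hD : ∀ s, HasDerivAt D (D s - g s) s)
    (hgc : Continuous g)
    (hgb : Tendsto (fun t => g t / (G * Real.exp (α * t))) atBot (𝓝 1))
    (hμ0 : Tendsto μ atBot (𝓝 0)) :
    ∃ C, 0 < C ∧ ∀ᶠ s in atBot, |D s| ≤ C * Real.exp s ∧ |μ s| ≤ C * Real.exp s := by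
  have hDc : Continuous D := by
    rw [continuous_iff_continuousAt]; intro t; exact (hD t).continuousAt
  obtain ⟨T, hb⟩ := (cl_g_bounds g G α 1 hG one_pos hgb).exists_forall_of_atBot
  set C₁ : ℝ := |Real.exp (-T) * D T| + 2*G*Real.exp ((α-1)*T)/(α-1) + 1 with hC₁
  have hC₁pos : 0 < C₁ := by
    have h1 : 0 ≤ |Real.exp (-T) * D T| := abs_nonneg _
    have h2 : 0 < 2*G*Real.exp ((α-1)*T)/(α-1) := by
      apply div_pos (by positivity) (by linarith)
    rw [hC₁]; linarith
  -- bound on D for s ≤ T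
  have hDbd : ∀ s ≤ T, |D s| ≤ C₁ * Real.exp s := by
    intro s hs
    have hid := cl_F_identity D g hD hgc s T
    have hsw := cl_int_sandwich g hgc G α 1 T s hs hb
    have hJ : (∫ t in s..T, Real.exp ((α-1)*t))
        = (Real.exp ((α-1)*T) - Real.exp ((α-1)*s)) / (α-1) :=
      cl_integral_exp_mul (by intro h; rw [sub_eq_zero] at h; exact (by linarith : (1:ℝ) ≠ α) h.symm) s T
    have hJ2 : (∫ t in s..T, Real.exp ((α-1)*t)) ≤ Real.exp ((α-1)*T) / (α-1) := by
      rw [hJ]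
      apply div_le_div_of_nonneg_right _ (by linarith)
      · linarith [Real.exp_pos ((α-1)*s)]
    have hJ0 : 0 ≤ (∫ t in s..T, Real.exp ((α-1)*t)) := by
      rw [hJ]
      apply div_nonneg _ (by linarith)
      have := Real.exp_le_exp.2 (mul_le_mul_of_nonneg_left hs (by linarith : (0:ℝ) ≤ α - 1))
      linarith
    have hint_ub : (∫ t in s..T, Real.exp (-t) * g t) ≤ 2*G*Real.exp ((α-1)*T)/(α-1) := by
      have := hsw.2
      have h2 : (1+1)*(G*∫ t in s..T, Real.exp ((α-1)*t)) ≤ 2*G*(Real.exp ((α-1)*T)/(α-1)) := by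
        have := mul_le_mul_of_nonneg_left hJ2 (by positivity : (0:ℝ) ≤ 2*G)
        nlinarith
      calc (∫ t in s..T, Real.exp (-t) * g t) ≤ _ := hsw.2
        _ ≤ 2*G*(Real.exp ((α-1)*T)/(α-1)) := h2
        _ = 2*G*Real.exp ((α-1)*T)/(α-1) := by ring
    have hint_lb : 0 ≤ (∫ t in s..T, Real.exp (-t) * g t) := by
      have := hsw.1; simpa using le_trans (by nlinarith [hJ0] : (0:ℝ) ≤ (1-1)*(G*∫ t in s..T, Real.exp ((α-1)*t))) this
    have habs : |Real.exp (-s) * D s| ≤ C₁ := by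
      rw [hid]
      have h1 : |Real.exp (-T) * D T + ∫ t in s..T, Real.exp (-t) * g t|
          ≤ |Real.exp (-T) * D T| + |∫ t in s..T, Real.exp (-t) * g t| := abs_add_le _ _
      have h2 : |∫ t in s..T, Real.exp (-t) * g t| ≤ 2*G*Real.exp ((α-1)*T)/(α-1) := by
        rw [abs_of_nonneg hint_lb]; exact hint_ub
      rw [hC₁]; linarith
    have heq : |Real.exp (-s) * D s| * Real.exp s = |D s| := by
      rw [abs_mul, abs_of_pos (Real.exp_pos _), mul_comm, ← mul_assoc, ← Real.exp_add]
      simp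
    rw [← heq]
    exact mul_le_mul_of_nonneg_right habs (Real.exp_pos _).le
  -- bound on μ for s ≤ T
  have hμbd : ∀ s ≤ T, |μ s| ≤ C₁ * Real.exp s := by
    intro s hs
    have key : ∀ r ≤ s, |μ s - μ r| ≤ C₁ * Real.exp s := by
      intro r hr
      rw [cl_mu_identity μ D hμ hDc r s]
      have hle : ‖∫ t in r..s, D t‖ ≤ |∫ t in r..s, C₁ * Real.exp t| := by
        apply intervalIntegral.norm_integral_le_abs_of_norm_le _
          ((continuous_const.mul Real.continuous_exp).intervalIntegrable r s)
        apply MeasureTheory.ae_restrict_of_forall_mem measurableSet_uIoc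
        intro t ht
        have htT : t ≤ T := by
          rcases Set.mem_uIoc.1 ht with h | h
          · exact le_trans h.2 hs
          · exact le_trans h.2 (le_trans hr hs)
        exact (Real.norm_eq_abs _).trans_le (hDbd t htT)
      have hcr : (∫ t in r..s, C₁ * Real.exp t) = C₁ * (Real.exp s - Real.exp r) := by
        rw [intervalIntegral.integral_const_mul, integral_exp]
      have h3 : |∫ t in r..s, C₁ * Real.exp t| ≤ C₁ * Real.exp s := by
        rw [hcr, abs_of_nonneg]
        · nlinarith [Real.exp_pos r]
        · nlinarith [Real.exp_pos r, Real.exp_le_exp.2 hr]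
      calc |∫ t in r..s, D t| = ‖∫ t in r..s, D t‖ := (Real.norm_eq_abs _).symm
        _ ≤ _ := hle
        _ ≤ _ := h3
    have htend : Tendsto (fun r => |μ s - μ r|) atBot (𝓝 |μ s|) := by
      have := (tendsto_const_nhds (x := μ s) (f := atBot)).sub hμ0
      simpa using this.abs
    exact le_of_tendsto htend (by filter_upwards [eventually_le_atBot s] with r hr using key r hr)
  exact ⟨C₁, hC₁pos, by filter_upwards [eventually_le_atBot T] with s hs using ⟨hDbd s hs, hμbd s hs⟩⟩

private lemma cl_caseB_D (G : ℝ) (hG : 0 < G) (D g : ℝ → ℝ)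
    (hD : ∀ s, HasDerivAt D (D s - g s) s)
    (hgc : Continuous g)
    (hgb : Tendsto (fun t => g t / (G * Real.exp (1 * t))) atBot (𝓝 1)) :
    ∀ ε > 0, ∀ᶠ s in atBot, |D s + G*s*Real.exp s| ≤ ε*((-s)*Real.exp s) := by
  intro ε hε
  set δ : ℝ := ε/(2*(G+1)) with hδdef
  have hδ : 0 < δ := by positivity
  obtain ⟨T0, hb0⟩ := (cl_g_bounds g G 1 δ hG hδ hgb).exists_forall_of_atBot
  set T : ℝ := min T0 0 with hTdef
  have hT0 : T ≤ 0 := min_le_right _ _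
  have hb : ∀ t ≤ T, (1-δ)*(G*Real.exp (1*t)) ≤ g t ∧ g t ≤ (1+δ)*(G*Real.exp (1*t)) :=
    fun t ht => hb0 t (le_trans ht (min_le_left _ _))
  set K : ℝ := Real.exp (-T) * D T + G * T with hKdef
  have hmain : ∀ s ≤ T, |Real.exp (-s) * D s + G * s| ≤ |K| + δ*G*(-s) := by
    intro s hs
    have hid := cl_F_identity D g hD hgc s T
    have hsw := cl_int_sandwich g hgc G 1 δ T s hs hb
    have hJ : (∫ t in s..T, Real.exp ((1-1)*t)) = T - s := by
      norm_num
    rw [hJ] at hsw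
    have hTs : 0 ≤ T - s := by linarith
    have h1 : |(∫ t in s..T, Real.exp (-t) * g t) - G*(T-s)| ≤ δ*(G*(T-s)) := by
      rw [abs_le]
      constructor <;> nlinarith [hsw.1, hsw.2]
    have h2 : Real.exp (-s) * D s + G * s
        = K + ((∫ t in s..T, Real.exp (-t) * g t) - G*(T-s)) := by
      rw [hid, hKdef]; ring
    rw [h2]
    calc |K + ((∫ t in s..T, Real.exp (-t) * g t) - G*(T-s))|
        ≤ |K| + |(∫ t in s..T, Real.exp (-t) * g t) - G*(T-s)| := abs_add_le _ _
      _ ≤ |K| + δ*(G*(T-s)) := by linarith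
      _ ≤ |K| + δ*G*(-s) := by
          have h7 : T - s ≤ -s := by linarith
          have h8 := mul_le_mul_of_nonneg_left h7 (mul_pos hδ hG).le
          have h9 : δ*(G*(T-s)) ≤ δ*G*(-s) := by
            calc δ*(G*(T-s)) = (δ*G)*(T-s) := by ring
              _ ≤ (δ*G)*(-s) := h8
              _ = δ*G*(-s) := by ring
          linarith
  have hS : ∀ s ≤ min T (-(2*(|K|+1))/ε), |D s + G*s*Real.exp s| ≤ ε*((-s)*Real.exp s) := by
    intro s hs
    have hs1 : s ≤ T := le_trans hs (min_le_left _ _)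
    have hs2 : s ≤ -(2*(|K|+1))/ε := le_trans hs (min_le_right _ _)
    have hsneg : s < 0 := by
      have : -(2*(|K|+1))/ε < 0 := by
        apply div_neg_of_neg_of_pos _ hε
        have := abs_nonneg K; linarith
      linarith
    have hK2 : |K| ≤ (ε/2) * (-s) := by
      have := (le_div_iff₀ hε).mp hs2
      nlinarith [abs_nonneg K]
    have hδ2 : δ*G*(-s) ≤ (ε/2)*(-s) := by
      apply mul_le_mul_of_nonneg_right _ (by linarith)
      rw [hδdef]
      rw [div_mul_eq_mul_div, div_le_iff₀ (by positivity)]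
      nlinarith
    have := hmain s hs1
    have hcomb : |Real.exp (-s) * D s + G * s| ≤ ε * (-s) := by linarith
    have hee : Real.exp (-s) * Real.exp s = 1 := by rw [← Real.exp_add]; simp
    have hprod : (Real.exp (-s) * D s + G * s) * Real.exp s = D s + G*s*Real.exp s := by
      calc (Real.exp (-s) * D s + G * s) * Real.exp s
          = D s * (Real.exp (-s) * Real.exp s) + G * s * Real.exp s := by ring
        _ = D s + G*s*Real.exp s := by rw [hee]; ring
    have habs0 := abs_mul (Real.exp (-s) * D s + G * s) (Real.exp s)
    rw [abs_of_pos (Real.exp_pos s)] at habs0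
    have heq : |D s + G*s*Real.exp s| = |Real.exp (-s) * D s + G * s| * Real.exp s := by
      rw [← hprod, habs0]
    rw [heq]
    calc |Real.exp (-s) * D s + G * s| * Real.exp s ≤ (ε * (-s)) * Real.exp s :=
        mul_le_mul_of_nonneg_right hcomb (Real.exp_pos s).le
      _ = ε*((-s)*Real.exp s) := by ring
  filter_upwards [eventually_le_atBot (min T (-(2*(|K|+1))/ε))] with s hs using hS s hs

private lemma cl_tendsto_one_sub_mul_exp : Tendsto (fun r : ℝ => (1-r)*Real.exp r) atBot (𝓝 0) := by
  have h2 : Tendsto (fun s : ℝ => s * Real.exp s) atBot (𝓝 0) := by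
    have := cl_tendsto_mul_exp_atBot one_pos
    simpa using this
  have h3 := Real.tendsto_exp_atBot.sub h2
  have : (fun r : ℝ => Real.exp r - r * Real.exp r) = fun r : ℝ => (1-r)*Real.exp r := by
    funext r; ring
  rw [this] at h3
  simpa using h3

private lemma cl_caseB_mu (G : ℝ) (hG : 0 < G) (μ D g : ℝ → ℝ)
    (hμ : ∀ s, HasDerivAt μ (D s) s)
    (hD : ∀ s, HasDerivAt D (D s - g s) s)
    (hgc : Continuous g)
    (hgb : Tendsto (fun t => g t / (G * Real.exp (1 * t))) atBot (𝓝 1))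
    (hμ0 : Tendsto μ atBot (𝓝 0)) :
    ∀ ε > 0, ∀ᶠ s in atBot, |μ s + G*s*Real.exp s| ≤ ε*((-s)*Real.exp s) := by
  intro ε hε
  have hDc : Continuous D := by
    rw [continuous_iff_continuousAt]; intro t; exact (hD t).continuousAt
  have hε3 : 0 < ε/3 := by positivity
  obtain ⟨S, hS⟩ := ((cl_caseB_D G hG D g hD hgc hgb (ε/3) hε3).and
    (eventually_le_atBot (-1))).exists_forall_of_atBot
  have hmain : ∀ s ≤ S, |μ s - G*((1-s)*Real.exp s)| ≤ (ε/3)*((1-s)*Real.exp s) := by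
    intro s hs
    have key : ∀ r ≤ s, |μ s - μ r - G*((1-s)*Real.exp s - (1-r)*Real.exp r)|
        ≤ (ε/3)*((1-s)*Real.exp s - (1-r)*Real.exp r) := by
      intro r hr
      have hi1 : IntervalIntegrable D MeasureTheory.volume r s := hDc.intervalIntegrable r s
      have hi2 : IntervalIntegrable (fun t => D t + G*t*Real.exp t) MeasureTheory.volume r s :=
        (hDc.add ((continuous_const.mul continuous_id).mul Real.continuous_exp)).intervalIntegrable r s
      have hneg : (∫ t in r..s, G*t*Real.exp t) = -G*((1-s)*Real.exp s - (1-r)*Real.exp r) := by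
        have h0 : (fun t : ℝ => G*t*Real.exp t) = fun t : ℝ => (-G) * ((-t)*Real.exp t) := by
          funext t; ring
        rw [h0, intervalIntegral.integral_const_mul, cl_integral_neg_mul_exp]
      have hsplit : μ s - μ r - G*((1-s)*Real.exp s - (1-r)*Real.exp r)
          = ∫ t in r..s, (D t + G*t*Real.exp t) := by
        have hi3 : IntervalIntegrable (fun t : ℝ => G*t*Real.exp t) MeasureTheory.volume r s :=
          Continuous.intervalIntegrable (by continuity) r s
        rw [intervalIntegral.integral_add hi1 hi3, hneg, ← cl_mu_identity μ D hμ hDc r s]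
        ring
      rw [hsplit]
      have hbd : ‖∫ t in r..s, (D t + G*t*Real.exp t)‖
          ≤ |∫ t in r..s, (ε/3)*((-t)*Real.exp t)| := by
        apply intervalIntegral.norm_integral_le_abs_of_norm_le _
          ((continuous_const.mul (continuous_id.neg.mul Real.continuous_exp)).intervalIntegrable r s)
        apply MeasureTheory.ae_restrict_of_forall_mem measurableSet_uIoc
        intro t ht
        have htS : t ≤ S := by
          rcases Set.mem_uIoc.1 ht with h | h
          · exact le_trans h.2 hs
          · exact le_trans h.2 (le_trans hr hs)
        simpa [Real.norm_eq_abs] using (hS t htS).1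
      have hval : (∫ t in r..s, (ε/3)*((-t)*Real.exp t))
          = (ε/3)*((1-s)*Real.exp s - (1-r)*Real.exp r) := by
        rw [intervalIntegral.integral_const_mul, cl_integral_neg_mul_exp]
      have hnn : 0 ≤ ∫ t in r..s, (ε/3)*((-t)*Real.exp t) := by
        apply intervalIntegral.integral_nonneg hr
        intro t ht
        have ht1 : t ≤ -1 := le_trans ht.2 (hS s hs).2
        have : 0 ≤ -t := by linarith
        positivity
      rw [hval] at hbd hnn
      rw [abs_of_nonneg hnn] at hbd
      simpa [Real.norm_eq_abs] using hbd
    have htiny : Tendsto (fun r => |μ s - μ r - G*((1-s)*Real.exp s - (1-r)*Real.exp r)|)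
        atBot (𝓝 |μ s - G*((1-s)*Real.exp s)|) := by
      have h1 : Tendsto (fun r => μ s - μ r - G*((1-s)*Real.exp s - (1-r)*Real.exp r))
          atBot (𝓝 (μ s - 0 - G*((1-s)*Real.exp s - 0))) := by
        exact ((tendsto_const_nhds.sub hμ0).sub
          ((tendsto_const_nhds.sub cl_tendsto_one_sub_mul_exp).const_mul G))
      have := h1.abs
      simpa using this
    have hub : ∀ᶠ r in atBot, |μ s - μ r - G*((1-s)*Real.exp s - (1-r)*Real.exp r)|
        ≤ (ε/3)*((1-s)*Real.exp s) := by
      filter_upwards [eventually_le_atBot s] with r hr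
      have h1 := key r hr
      have h2 : 0 ≤ (1-r)*Real.exp r := by
        have hr1 : r ≤ -1 := le_trans hr (hS s hs).2
        have : 0 ≤ 1 - r := by linarith
        positivity
      have h3 : (ε/3)*((1-s)*Real.exp s - (1-r)*Real.exp r) ≤ (ε/3)*((1-s)*Real.exp s) := by
        apply mul_le_mul_of_nonneg_left _ hε3.le
        linarith
      linarith
    exact le_of_tendsto htiny hub
  have hfin : ∀ s ≤ min S (-(3*G)/ε), |μ s + G*s*Real.exp s| ≤ ε*((-s)*Real.exp s) := by
    intro s hs
    have hs1 : s ≤ S := le_trans hs (min_le_left _ _)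
    have hs2 : s ≤ -(3*G)/ε := le_trans hs (min_le_right _ _)
    have hs3 : s ≤ -1 := le_trans hs1 (hS S le_rfl).2
    have h1 := hmain s hs1
    have h2 : |μ s + G*s*Real.exp s| ≤ (ε/3)*((1-s)*Real.exp s) + G*Real.exp s := by
      have hdec : μ s + G*s*Real.exp s = (μ s - G*((1-s)*Real.exp s)) + G*Real.exp s := by ring
      rw [hdec]
      calc |(μ s - G*((1-s)*Real.exp s)) + G*Real.exp s|
          ≤ |μ s - G*((1-s)*Real.exp s)| + |G*Real.exp s| := abs_add_le _ _
        _ ≤ (ε/3)*((1-s)*Real.exp s) + G*Real.exp s := by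
            have : |G*Real.exp s| = G*Real.exp s := abs_of_pos (by positivity)
            linarith
    have h3 : (ε/3)*((1-s)*Real.exp s) ≤ (ε/3)*((-2*s)*Real.exp s) := by
      apply mul_le_mul_of_nonneg_left _ hε3.le
      apply mul_le_mul_of_nonneg_right _ (Real.exp_pos s).le
      linarith
    have h4 : G*Real.exp s ≤ (ε/3)*((-s)*Real.exp s) := by
      have h5 : G ≤ (ε/3)*(-s) := by
        have := (le_div_iff₀ hε).mp hs2
        nlinarith
      calc G*Real.exp s ≤ ((ε/3)*(-s))*Real.exp s :=
          mul_le_mul_of_nonneg_right h5 (Real.exp_pos s).le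
        _ = (ε/3)*((-s)*Real.exp s) := by ring
    have : (ε/3)*((-2*s)*Real.exp s) + (ε/3)*((-s)*Real.exp s) = ε*((-s)*Real.exp s) := by ring
    linarith
  filter_upwards [eventually_le_atBot (min S (-(3*G)/ε))] with s hs using hfin s hs

private lemma cl_caseC_D (α G : ℝ) (hα0 : 0 < α) (hα : α < 1) (hG : 0 < G) (D g : ℝ → ℝ)
    (hD : ∀ s, HasDerivAt D (D s - g s) s)
    (hgc : Continuous g)
    (hgb : Tendsto (fun t => g t / (G * Real.exp (α * t))) atBot (𝓝 1)) :
    ∀ ε > 0, ∀ᶠ s in atBot, |D s - (G/(1-α))*Real.exp (α*s)| ≤ ε*Real.exp (α*s) := by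
  intro ε hε
  set γ : ℝ := 1 - α with hγdef
  have hγ : 0 < γ := by rw [hγdef]; linarith
  set δ : ℝ := ε*γ/(2*(G+1)) with hδdef
  have hδ : 0 < δ := by positivity
  obtain ⟨T, hb⟩ := (cl_g_bounds g G α δ hG hδ hgb).exists_forall_of_atBot
  set K : ℝ := Real.exp (-T) * D T - (G/γ)*Real.exp ((α-1)*T) with hKdef
  have hmain : ∀ s ≤ T, |Real.exp (-s) * D s - (G/γ)*Real.exp ((α-1)*s)|
      ≤ |K| + (δ*G/γ)*Real.exp ((α-1)*s) := by
    intro s hs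
    have hid := cl_F_identity D g hD hgc s T
    have hsw := cl_int_sandwich g hgc G α δ T s hs hb
    have hJ : (∫ t in s..T, Real.exp ((α-1)*t))
        = (Real.exp ((α-1)*s) - Real.exp ((α-1)*T)) / γ := by
      have hne1 : α - 1 ≠ 0 := by intro h; rw [sub_eq_zero] at h; linarith [h.le, h.ge]
      have hne2 : (1:ℝ) - α ≠ 0 := hγdef ▸ hγ.ne'
      rw [cl_integral_exp_mul hne1 s T, hγdef]
      rw [div_eq_div_iff hne1 hne2]
      ring
    rw [hJ] at hsw
    have hJ0 : 0 ≤ (Real.exp ((α-1)*s) - Real.exp ((α-1)*T)) / γ := by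
      apply div_nonneg _ hγ.le
      have := Real.exp_le_exp.2 (mul_le_mul_of_nonpos_left hs (by linarith : α - 1 ≤ 0))
      linarith
    have hJub : (Real.exp ((α-1)*s) - Real.exp ((α-1)*T)) / γ ≤ Real.exp ((α-1)*s)/γ := by
      apply div_le_div_of_nonneg_right _ hγ.le
      · linarith [Real.exp_pos ((α-1)*T)]
    set I : ℝ := ∫ t in s..T, Real.exp (-t) * g t with hIdef
    set J : ℝ := (Real.exp ((α-1)*s) - Real.exp ((α-1)*T)) / γ with hJdef
    have h1 : |I - G*J| ≤ δ*(G*J) := by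
      rw [abs_le]; constructor <;> nlinarith [hsw.1, hsw.2]
    have h2 : Real.exp (-s) * D s - (G/γ)*Real.exp ((α-1)*s) = K + (I - G*J) := by
      rw [hid, hKdef, hJdef]
      field_simp
      ring
    rw [h2]
    calc |K + (I - G*J)| ≤ |K| + |I - G*J| := abs_add_le _ _
      _ ≤ |K| + δ*(G*J) := by linarith
      _ ≤ |K| + (δ*G/γ)*Real.exp ((α-1)*s) := by
          have h3 : δ*(G*J) ≤ (δ*G/γ)*Real.exp ((α-1)*s) := by
            have h4 : G*J ≤ G*(Real.exp ((α-1)*s)/γ) := mul_le_mul_of_nonneg_left hJub hG.le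
            calc δ*(G*J) ≤ δ*(G*(Real.exp ((α-1)*s)/γ)) := mul_le_mul_of_nonneg_left h4 hδ.le
              _ = (δ*G/γ)*Real.exp ((α-1)*s) := by ring
          linarith
  have hδsmall : δ*G/γ ≤ ε/2 := by
    rw [hδdef]
    rw [div_mul_eq_mul_div, div_div, div_le_div_iff₀ (by positivity) (by norm_num)]
    nlinarith
  have hev : ∀ᶠ s in atBot, |K| ≤ (ε/2)*Real.exp ((α-1)*s) := by
    have htop : Tendsto (fun s : ℝ => (ε/2)*Real.exp ((α-1)*s)) atBot atTop := by
      apply Tendsto.const_mul_atTop (by positivity)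
      apply Real.tendsto_exp_atTop.comp
      have h6 := Tendsto.const_mul_atTop hγ tendsto_neg_atBot_atTop
      exact Tendsto.congr (fun s => by rw [hγdef]; ring) h6
    exact htop.eventually_ge_atTop |K|
  filter_upwards [hev, eventually_le_atBot T] with s hev1 hsT
  have h5 := hmain s hsT
  have hprod : (Real.exp (-s) * D s - (G/γ)*Real.exp ((α-1)*s)) * Real.exp s
      = D s - (G/γ)*Real.exp (α*s) := by
    have he1 : Real.exp (-s) * Real.exp s = 1 := by rw [← Real.exp_add]; simp
    have he2 : Real.exp ((α-1)*s) * Real.exp s = Real.exp (α*s) := by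
      rw [← Real.exp_add]; ring_nf
    calc (Real.exp (-s) * D s - (G/γ)*Real.exp ((α-1)*s)) * Real.exp s
        = D s * (Real.exp (-s) * Real.exp s) - (G/γ)*(Real.exp ((α-1)*s) * Real.exp s) := by ring
      _ = D s - (G/γ)*Real.exp (α*s) := by rw [he1, he2]; ring
  have habs0 := abs_mul (Real.exp (-s) * D s - (G/γ)*Real.exp ((α-1)*s)) (Real.exp s)
  rw [abs_of_pos (Real.exp_pos s), hprod] at habs0
  rw [hγdef] at habs0 hprod
  rw [habs0]
  have he2 : Real.exp ((α-1)*s) * Real.exp s = Real.exp (α*s) := by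
    rw [← Real.exp_add]; ring_nf
  have hδ5 : δ*G/(1-α)*Real.exp ((α-1)*s) ≤ (ε/2)*Real.exp ((α-1)*s) := by
    apply mul_le_mul_of_nonneg_right _ (Real.exp_pos _).le
    rw [← hγdef]; exact hδsmall
  calc |Real.exp (-s) * D s - G/(1-α)*Real.exp ((α-1)*s)| * Real.exp s
      ≤ (|K| + δ*G/(1-α)*Real.exp ((α-1)*s)) * Real.exp s :=
        mul_le_mul_of_nonneg_right h5 (Real.exp_pos _).le
    _ ≤ ((ε/2)*Real.exp ((α-1)*s) + (ε/2)*Real.exp ((α-1)*s)) * Real.exp s := by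
        apply mul_le_mul_of_nonneg_right _ (Real.exp_pos _).le
        linarith
    _ = ε * (Real.exp ((α-1)*s) * Real.exp s) := by ring
    _ = ε * Real.exp (α*s) := by rw [he2]

private lemma cl_caseC_mu (α G : ℝ) (hα0 : 0 < α) (hα : α < 1) (hG : 0 < G) (μ D g : ℝ → ℝ)
    (hμ : ∀ s, HasDerivAt μ (D s) s)
    (hD : ∀ s, HasDerivAt D (D s - g s) s)
    (hgc : Continuous g)
    (hgb : Tendsto (fun t => g t / (G * Real.exp (α * t))) atBot (𝓝 1))
    (hμ0 : Tendsto μ atBot (𝓝 0)) :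
    ∀ ε > 0, ∀ᶠ s in atBot, |μ s - (G/(α*(1-α)))*Real.exp (α*s)| ≤ ε*Real.exp (α*s) := by
  intro ε hε
  have hDc : Continuous D := by
    rw [continuous_iff_continuousAt]; intro t; exact (hD t).continuousAt
  set c : ℝ := G/(1-α) with hcdef
  have hε1 : 0 < ε*α/2 := by positivity
  obtain ⟨S, hS⟩ := (cl_caseC_D α G hα0 hα hG D g hD hgc hgb (ε*α/2) hε1).exists_forall_of_atBot
  have hcα : c/α = G/(α*(1-α)) := by
    rw [hcdef, div_div, mul_comm]
  have hεα : (ε*α/2)/α = ε/2 := by field_simp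
  have hmain : ∀ s ≤ S, |μ s - (c/α)*Real.exp (α*s)| ≤ (ε/2)*Real.exp (α*s) := by
    intro s hs
    have hexpc : Continuous fun t : ℝ => c*Real.exp (α*t) :=
      continuous_const.mul (Real.continuous_exp.comp (continuous_const.mul continuous_id))
    have key : ∀ r ≤ s, |μ s - μ r - (c/α)*(Real.exp (α*s) - Real.exp (α*r))|
        ≤ (ε/2)*Real.exp (α*s) := by
      intro r hr
      have hi1 : IntervalIntegrable D MeasureTheory.volume r s := hDc.intervalIntegrable r s
      have hi3 : IntervalIntegrable (fun t : ℝ => c*Real.exp (α*t)) MeasureTheory.volume r s :=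
        hexpc.intervalIntegrable r s
      have h7 : (∫ t in r..s, c*Real.exp (α*t)) = (c/α)*(Real.exp (α*s) - Real.exp (α*r)) := by
        rw [intervalIntegral.integral_const_mul, cl_integral_exp_mul hα0.ne' r s]
        ring
      have hsplit : μ s - μ r - (c/α)*(Real.exp (α*s) - Real.exp (α*r))
          = ∫ t in r..s, (D t - c*Real.exp (α*t)) := by
        rw [intervalIntegral.integral_sub hi1 hi3, h7, ← cl_mu_identity μ D hμ hDc r s]
      rw [hsplit]
      have hbd : ‖∫ t in r..s, (D t - c*Real.exp (α*t))‖
          ≤ |∫ t in r..s, (ε*α/2)*Real.exp (α*t)| := by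
        apply intervalIntegral.norm_integral_le_abs_of_norm_le _
          ((continuous_const.mul (Real.continuous_exp.comp
            (continuous_const.mul continuous_id))).intervalIntegrable r s)
        apply MeasureTheory.ae_restrict_of_forall_mem measurableSet_uIoc
        intro t ht
        have htS : t ≤ S := by
          rcases Set.mem_uIoc.1 ht with h | h
          · exact le_trans h.2 hs
          · exact le_trans h.2 (le_trans hr hs)
        simpa [Real.norm_eq_abs, hcdef] using hS t htS
      have hval : (∫ t in r..s, (ε*α/2)*Real.exp (α*t))
          = (ε/2)*(Real.exp (α*s) - Real.exp (α*r)) := by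
        rw [intervalIntegral.integral_const_mul, cl_integral_exp_mul hα0.ne' r s]
        field_simp
      have hmono : Real.exp (α*r) ≤ Real.exp (α*s) :=
        Real.exp_le_exp.2 (mul_le_mul_of_nonneg_left hr hα0.le)
      have hnn : 0 ≤ (ε/2)*(Real.exp (α*s) - Real.exp (α*r)) := by nlinarith
      rw [hval] at hbd
      rw [abs_of_nonneg hnn] at hbd
      have h8 : (ε/2)*(Real.exp (α*s) - Real.exp (α*r)) ≤ (ε/2)*Real.exp (α*s) := by
        nlinarith [Real.exp_pos (α*r)]
      calc |∫ t in r..s, (D t - c*Real.exp (α*t))|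
          = ‖∫ t in r..s, (D t - c*Real.exp (α*t))‖ := (Real.norm_eq_abs _).symm
        _ ≤ (ε/2)*(Real.exp (α*s) - Real.exp (α*r)) := hbd
        _ ≤ (ε/2)*Real.exp (α*s) := h8
    have hexpr0 : Tendsto (fun r : ℝ => Real.exp (α*r)) atBot (𝓝 0) := by
      apply Real.tendsto_exp_atBot.comp
      exact Tendsto.const_mul_atBot hα0 tendsto_id
    have htiny : Tendsto (fun r => |μ s - μ r - (c/α)*(Real.exp (α*s) - Real.exp (α*r))|)
        atBot (𝓝 |μ s - (c/α)*Real.exp (α*s)|) := by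
      have h1 : Tendsto (fun r => μ s - μ r - (c/α)*(Real.exp (α*s) - Real.exp (α*r)))
          atBot (𝓝 (μ s - 0 - (c/α)*(Real.exp (α*s) - 0))) :=
        (tendsto_const_nhds.sub hμ0).sub
          ((tendsto_const_nhds.sub hexpr0).const_mul (c/α))
      have := h1.abs
      simpa using this
    exact le_of_tendsto htiny
      (by filter_upwards [eventually_le_atBot s] with r hr using key r hr)
  filter_upwards [eventually_le_atBot S] with s hs
  have := hmain s hs
  rw [hcα] at this
  have h9 : (ε/2)*Real.exp (α*s) ≤ ε*Real.exp (α*s) := by nlinarith [Real.exp_pos (α*s)]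
  linarith

private lemma cl_t0 (f ref w : ℝ → ℝ) (h : (fun s => f s - ref s) =o[atBot] w)
    (hw : Tendsto w atBot (𝓝 0)) (href : Tendsto ref atBot (𝓝 0)) :
    Tendsto f atBot (𝓝 0) := by
  have h1 := h.isBigO.trans_tendsto hw
  have h2 := h1.add href
  simp only [sub_add_cancel] at h2
  simpa using h2

/-- Asymptotics as `s → −∞` of `q(s) = e^{−((3−n)/3)s}·μ(s)` and
`p(s) = e^{−((3−n)/3)s}·μ'(s)` for solutions `μ` of the contact-line ODE
`μ'' − μ' + (2/(3k³(1+e^{−(3−n)s})))·(1+μ)^{−1/2} = 0` with `μ(s) → 0` as `s → −∞`;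
in particular `(e^{((3−n)/3)s}, q(s), p(s)) → (0,0,0)` as `s → −∞`. -/
theorem contact_line_dynamical_system_asymptotics (n k : ℝ) (hn : n ∈ Set.Ioo (0 : ℝ) 3)
    (hk : 0 < k) (μ : ℝ → ℝ) (hreg : ContDiff ℝ 2 μ) (hpos : ∀ s : ℝ, 0 < 1 + μ s)
    (hode : ∀ s : ℝ,
      deriv (deriv μ) s - deriv μ s
        + 2 / (3 * k ^ 3 * (1 + Real.exp (-(3 - n) * s))) * (1 + μ s) ^ (-(1 / 2) : ℝ) = 0)
    (hlim : Tendsto μ atBot (𝓝 0)) :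
    ((n < 2 →
      ((fun s => Real.exp (-((3 - n) / 3) * s) * μ s) =O[atBot]
        fun s => Real.exp (n / 3 * s)) ∧
      ((fun s => Real.exp (-((3 - n) / 3) * s) * deriv μ s) =O[atBot]
        fun s => Real.exp (n / 3 * s))) ∧
    (n = 2 →
      ((fun s => Real.exp (-((3 - n) / 3) * s) * μ s
          - -(2 / (3 * k ^ 3)) * s * Real.exp (2 / 3 * s)) =o[atBot]
        fun s => s * Real.exp (2 / 3 * s)) ∧
      ((fun s => Real.exp (-((3 - n) / 3) * s) * deriv μ s
          - -(2 / (3 * k ^ 3)) * s * Real.exp (2 / 3 * s)) =o[atBot]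
        fun s => s * Real.exp (2 / 3 * s))) ∧
    (2 < n →
      ((fun s => Real.exp (-((3 - n) / 3) * s) * μ s
          - 2 / (3 * (3 - n) * (n - 2) * k ^ 3) * Real.exp (2 * (3 - n) / 3 * s)) =o[atBot]
        fun s => Real.exp (2 * (3 - n) / 3 * s)) ∧
      ((fun s => Real.exp (-((3 - n) / 3) * s) * deriv μ s
          - 2 / (3 * (n - 2) * k ^ 3) * Real.exp (2 * (3 - n) / 3 * s)) =o[atBot]
        fun s => Real.exp (2 * (3 - n) / 3 * s)))) ∧
    Tendsto (fun s => (Real.exp ((3 - n) / 3 * s),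
        Real.exp (-((3 - n) / 3) * s) * μ s,
        Real.exp (-((3 - n) / 3) * s) * deriv μ s)) atBot
      (𝓝 ((0, 0, 0) : ℝ × ℝ × ℝ)) := by
  obtain ⟨hn0, hn3⟩ := hn
  have hα0 : 0 < 3 - n := by linarith
  have hk3 : 0 < 3 * k ^ 3 := by nlinarith [pow_pos hk 3]
  set G : ℝ := 2 / (3 * k ^ 3) with hGdef
  have hG : 0 < G := by rw [hGdef]; positivity
  set g : ℝ → ℝ := fun s =>
    2 / (3 * k ^ 3 * (1 + Real.exp (-(3 - n) * s))) * (1 + μ s) ^ (-(1 / 2) : ℝ) with hgdef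
  have hden : ∀ s : ℝ, 0 < 3 * k ^ 3 * (1 + Real.exp (-(3 - n) * s)) := by
    intro s
    apply mul_pos hk3
    positivity
  -- differentiability facts
  have hdiff : Differentiable ℝ μ := hreg.differentiable (by norm_num)
  have hμ : ∀ s, HasDerivAt μ (deriv μ s) s := fun s => (hdiff s).hasDerivAt
  have hD2 : Differentiable ℝ (deriv μ) := by
    have h0 : ContDiff ℝ ((1:WithTop ℕ∞) + 1) μ := by
      have h00 : ((1:WithTop ℕ∞) + 1) = 2 := by norm_num
      rw [h00]; exact hreg
    exact ((contDiff_succ_iff_deriv.mp h0).2.2).differentiable one_ne_zero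
  have hD : ∀ s, HasDerivAt (deriv μ) (deriv μ s - g s) s := by
    intro s
    have h1 := (hD2 s).hasDerivAt
    have h2 := hode s
    have h3 : deriv (deriv μ) s = deriv μ s - g s := by
      rw [hgdef]; dsimp only; linarith
    rwa [h3] at h1
  -- continuity of g
  have hgc : Continuous g := by
    rw [hgdef]
    apply Continuous.mul
    · apply Continuous.div continuous_const
      · exact continuous_const.mul (continuous_const.add
          (Real.continuous_exp.comp (continuous_const.mul continuous_id)))
      · intro s; exact (hden s).ne'
    · apply Continuous.rpow_const (continuous_const.add hreg.continuous)
      intro s; exact Or.inl (hpos s).ne'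
  -- asymptotics of g
  have hgb : Tendsto (fun t => g t / (G * Real.exp ((3 - n) * t))) atBot (𝓝 1) := by
    have heq : ∀ t, g t / (G * Real.exp ((3 - n) * t))
        = (1 + μ t) ^ (-(1 / 2) : ℝ) / (Real.exp ((3 - n) * t) + 1) := by
      intro t
      rw [hgdef, hGdef]
      dsimp only
      have hE : Real.exp (-(3 - n) * t) = (Real.exp ((3 - n) * t))⁻¹ := by
        rw [neg_mul, Real.exp_neg]
      rw [hE]
      have hF : Real.exp ((3 - n) * t) ≠ 0 := (Real.exp_pos _).ne'
      have hFi : (0:ℝ) < 1 + (Real.exp ((3 - n) * t))⁻¹ := by positivity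
      have hF1 : Real.exp ((3 - n) * t) + 1 ≠ 0 := by positivity
      field_simp
    rw [funext heq]
    have h1 : Tendsto (fun t : ℝ => (1 + μ t) ^ (-(1 / 2) : ℝ)) atBot (𝓝 1) := by
      have h2 : Tendsto (fun t : ℝ => 1 + μ t) atBot (𝓝 1) := by
        simpa using (tendsto_const_nhds.add hlim)
      have h3 := h2.rpow_const (p := (-(1/2) : ℝ)) (Or.inl one_ne_zero)
      simpa using h3
    have h4 : Tendsto (fun t : ℝ => Real.exp ((3 - n) * t) + 1) atBot (𝓝 1) := by
      have h5 : Tendsto (fun t : ℝ => Real.exp ((3 - n) * t)) atBot (𝓝 0) :=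
        Real.tendsto_exp_atBot.comp (Tendsto.const_mul_atBot hα0 tendsto_id)
      simpa using h5.add tendsto_const_nhds
    have h6 := h1.div h4 one_ne_zero; rw [div_one] at h6; exact h6
  -- Part A : n < 2
  have partA : n < 2 →
      ((fun s => Real.exp (-((3 - n) / 3) * s) * μ s) =O[atBot] fun s => Real.exp (n / 3 * s)) ∧
      ((fun s => Real.exp (-((3 - n) / 3) * s) * deriv μ s) =O[atBot] fun s => Real.exp (n / 3 * s)) := by
    intro h2
    obtain ⟨C, hC, hev⟩ := cl_caseA (3 - n) G (by linarith) hG μ (deriv μ) g hμ hD hgc hgb hlim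
    have conv : ∀ f : ℝ → ℝ, (∀ᶠ s in atBot, |f s| ≤ C * Real.exp s) →
        (fun s => Real.exp (-((3 - n) / 3) * s) * f s) =O[atBot] fun s => Real.exp (n / 3 * s) := by
      intro f hf
      rw [Asymptotics.isBigO_iff]
      refine ⟨C, ?_⟩
      filter_upwards [hf] with s hs
      simp only [Real.norm_eq_abs, abs_mul, Real.abs_exp]
      have h3 : Real.exp (-((3 - n) / 3) * s) * (C * Real.exp s) = C * Real.exp (n / 3 * s) := by
        rw [mul_left_comm, ← Real.exp_add]
        congr 2
        ring
      calc Real.exp (-((3 - n) / 3) * s) * |f s|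
          ≤ Real.exp (-((3 - n) / 3) * s) * (C * Real.exp s) :=
            mul_le_mul_of_nonneg_left hs (Real.exp_pos _).le
        _ = C * Real.exp (n / 3 * s) := h3
    exact ⟨conv μ (by filter_upwards [hev] with s hs using hs.2),
      conv (deriv μ) (by filter_upwards [hev] with s hs using hs.1)⟩
  -- Part B : n = 2
  have partB : n = 2 →
      ((fun s => Real.exp (-((3 - n) / 3) * s) * μ s
          - -G * s * Real.exp (2 / 3 * s)) =o[atBot] fun s => s * Real.exp (2 / 3 * s)) ∧
      ((fun s => Real.exp (-((3 - n) / 3) * s) * deriv μ s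
          - -G * s * Real.exp (2 / 3 * s)) =o[atBot] fun s => s * Real.exp (2 / 3 * s)) := by
    intro h2
    subst h2
    have h32 : (3 - 2 : ℝ) = 1 := by norm_num
    rw [h32] at hgb
    have hBμ := cl_caseB_mu G hG μ (deriv μ) g hμ hD hgc hgb hlim
    have hBD := cl_caseB_D G hG (deriv μ) g hD hgc hgb
    have conv : ∀ f : ℝ → ℝ,
        (∀ ε > 0, ∀ᶠ s in atBot, |f s + G*s*Real.exp s| ≤ ε*((-s)*Real.exp s)) →
        (fun s => Real.exp (-((3 - 2:ℝ) / 3) * s) * f s - -G * s * Real.exp (2 / 3 * s))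
          =o[atBot] fun s => s * Real.exp (2 / 3 * s) := by
      intro f hf
      rw [Asymptotics.isLittleO_iff]
      intro c hc
      filter_upwards [hf c hc, eventually_lt_atBot 0] with s hs hsneg
      have hsplit : Real.exp (-((3 - 2:ℝ) / 3) * s) * Real.exp s = Real.exp (2 / 3 * s) := by
        rw [← Real.exp_add]; congr 1; ring
      have hexpr : Real.exp (-((3 - 2:ℝ) / 3) * s) * f s - -G * s * Real.exp (2 / 3 * s)
          = Real.exp (-((3 - 2:ℝ) / 3) * s) * (f s + G*s*Real.exp s) := by
        rw [mul_add, ← hsplit]; ring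
      rw [hexpr]
      simp only [Real.norm_eq_abs, abs_mul, Real.abs_exp, abs_of_neg hsneg]
      calc Real.exp (-((3 - 2:ℝ) / 3) * s) * |f s + G*s*Real.exp s|
          ≤ Real.exp (-((3 - 2:ℝ) / 3) * s) * (c*((-s)*Real.exp s)) :=
            mul_le_mul_of_nonneg_left hs (Real.exp_pos _).le
        _ = c * (-s * (Real.exp (-((3 - 2:ℝ) / 3) * s) * Real.exp s)) := by ring
        _ = c * (-s * Real.exp (2 / 3 * s)) := by rw [hsplit]
    exact ⟨conv μ hBμ, conv (deriv μ) hBD⟩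
  -- Part C : 2 < n
  have partC : 2 < n →
      ((fun s => Real.exp (-((3 - n) / 3) * s) * μ s
          - 2 / (3 * (3 - n) * (n - 2) * k ^ 3) * Real.exp (2 * (3 - n) / 3 * s)) =o[atBot]
        fun s => Real.exp (2 * (3 - n) / 3 * s)) ∧
      ((fun s => Real.exp (-((3 - n) / 3) * s) * deriv μ s
          - 2 / (3 * (n - 2) * k ^ 3) * Real.exp (2 * (3 - n) / 3 * s)) =o[atBot]
        fun s => Real.exp (2 * (3 - n) / 3 * s)) := by
    intro h2
    have hαlt : (3 - n) < 1 := by linarith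
    have hn2 : (0:ℝ) < n - 2 := by linarith
    have hcD : G/(1-(3-n)) = 2 / (3 * (n - 2) * k ^ 3) := by
      have he : (1:ℝ)-(3-n) = n-2 := by ring
      rw [hGdef, he, div_div]
      congr 1
      ring
    have hcμ : G/((3-n)*(1-(3-n))) = 2 / (3 * (3 - n) * (n - 2) * k ^ 3) := by
      have he : (3-n)*((1:ℝ)-(3-n)) = (3-n)*(n-2) := by ring
      rw [hGdef, he, div_div]
      congr 1
      ring
    have hCD := cl_caseC_D (3-n) G hα0 hαlt hG (deriv μ) g hD hgc hgb
    have hCμ := cl_caseC_mu (3-n) G hα0 hαlt hG μ (deriv μ) g hμ hD hgc hgb hlim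
    rw [hcD] at hCD
    rw [hcμ] at hCμ
    have conv : ∀ (f : ℝ → ℝ) (c₀ : ℝ),
        (∀ ε > 0, ∀ᶠ s in atBot, |f s - c₀*Real.exp ((3-n)*s)| ≤ ε*Real.exp ((3-n)*s)) →
        (fun s => Real.exp (-((3 - n) / 3) * s) * f s - c₀ * Real.exp (2 * (3 - n) / 3 * s))
          =o[atBot] fun s => Real.exp (2 * (3 - n) / 3 * s) := by
      intro f c₀ hf
      rw [Asymptotics.isLittleO_iff]
      intro c hc
      filter_upwards [hf c hc] with s hs
      have hsplit : Real.exp (-((3 - n) / 3) * s) * Real.exp ((3-n)*s)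
          = Real.exp (2 * (3 - n) / 3 * s) := by
        rw [← Real.exp_add]; congr 1; ring
      have hexpr : Real.exp (-((3 - n) / 3) * s) * f s - c₀ * Real.exp (2 * (3 - n) / 3 * s)
          = Real.exp (-((3 - n) / 3) * s) * (f s - c₀*Real.exp ((3-n)*s)) := by
        rw [← hsplit]; ring
      rw [hexpr]
      simp only [Real.norm_eq_abs, abs_mul, Real.abs_exp]
      calc Real.exp (-((3 - n) / 3) * s) * |f s - c₀*Real.exp ((3-n)*s)|
          ≤ Real.exp (-((3 - n) / 3) * s) * (c*Real.exp ((3-n)*s)) :=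
            mul_le_mul_of_nonneg_left hs (Real.exp_pos _).le
        _ = c * (Real.exp (-((3 - n) / 3) * s) * Real.exp ((3-n)*s)) := by ring
        _ = c * Real.exp (2 * (3 - n) / 3 * s) := by rw [hsplit]
    exact ⟨conv μ _ hCμ, conv (deriv μ) _ hCD⟩
  -- final tendsto
  have hexp0 : Tendsto (fun s : ℝ => Real.exp ((3 - n) / 3 * s)) atBot (𝓝 0) :=
    Real.tendsto_exp_atBot.comp (Tendsto.const_mul_atBot (by linarith : (0:ℝ) < (3-n)/3) tendsto_id)
  have hqp0 : Tendsto (fun s => Real.exp (-((3 - n) / 3) * s) * μ s) atBot (𝓝 0) ∧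
      Tendsto (fun s => Real.exp (-((3 - n) / 3) * s) * deriv μ s) atBot (𝓝 0) := by
    rcases lt_trichotomy n 2 with h2 | h2 | h2
    · have hw : Tendsto (fun s : ℝ => Real.exp (n / 3 * s)) atBot (𝓝 0) :=
        Real.tendsto_exp_atBot.comp (Tendsto.const_mul_atBot (by linarith : (0:ℝ) < n/3) tendsto_id)
      exact ⟨(partA h2).1.trans_tendsto hw, (partA h2).2.trans_tendsto hw⟩
    · have hw : Tendsto (fun s : ℝ => s * Real.exp (2/3*s)) atBot (𝓝 0) :=
        cl_tendsto_mul_exp_atBot (by norm_num : (0:ℝ) < 2/3)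
      have href : Tendsto (fun s : ℝ => -G*s*Real.exp (2/3*s)) atBot (𝓝 0) := by
        have h := hw.const_mul (-G)
        simp only [mul_zero] at h
        exact h.congr (fun s => by ring)
      exact ⟨cl_t0 _ _ _ ((partB h2).1) hw href, cl_t0 _ _ _ ((partB h2).2) hw href⟩
    · have hw : Tendsto (fun s : ℝ => Real.exp (2 * (3 - n) / 3 * s)) atBot (𝓝 0) :=
        Real.tendsto_exp_atBot.comp
          (Tendsto.const_mul_atBot (by nlinarith : (0:ℝ) < 2*(3-n)/3) tendsto_id)
      have href1 : Tendsto (fun s : ℝ =>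
          2 / (3 * (3 - n) * (n - 2) * k ^ 3) * Real.exp (2 * (3 - n) / 3 * s)) atBot (𝓝 0) := by
        have h := hw.const_mul (2 / (3 * (3 - n) * (n - 2) * k ^ 3))
        simpa using h
      have href2 : Tendsto (fun s : ℝ =>
          2 / (3 * (n - 2) * k ^ 3) * Real.exp (2 * (3 - n) / 3 * s)) atBot (𝓝 0) := by
        have h := hw.const_mul (2 / (3 * (n - 2) * k ^ 3))
        simpa using h
      exact ⟨cl_t0 _ _ _ ((partC h2).1) hw href1, cl_t0 _ _ _ ((partC h2).2) hw href2⟩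
  exact ⟨⟨partA, partB, partC⟩,
    Tendsto.prodMk_nhds hexp0 (Tendsto.prodMk_nhds hqp0.1 hqp0.2)⟩
end

section
/- Let n ∈ (0,3) and k > 0, and let p⁻(r,q) be a function of two real variables that is real-analytic in a neighborhood of (0,0) and satisfies there the first-order PDE (r∂_r − q∂_q − n/(3−n))p⁻ + (3/(3−n))·p⁻·∂_q p⁻ = −(2/((3−n)k³))·(r²/(1+r³))·(1+rq)^{−1/2}, together with p⁻(0,0) = 0, ∂_r p⁻(0,0) = 0, and ∂_q p⁻(0,0) = 1. Then ∂_r² p⁻(0,0) = −4/(3(3−n)k³). -/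
open Filter Topology Set

/-- Partial derivative of a function of two real variables in the first variable. -/
noncomputable def pd1 (f : ℝ → ℝ → ℝ) (a b : ℝ) : ℝ := deriv (fun x => f x b) a

/-- Partial derivative of a function of two real variables in the second variable. -/
noncomputable def pd2 (f : ℝ → ℝ → ℝ) (a b : ℝ) : ℝ := deriv (fun y => f a y) b

/-- For the analytic parameterization `p⁻(r,q)` of the unstable manifold, satisfying
`(r∂_r − q∂_q − n/(3−n))p⁻ + (3/(3−n))p⁻∂_q p⁻ = −(2/((3−n)k³))·(r²/(1+r³))·(1+rq)^{−1/2}`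
near `(0,0)` with `p⁻(0,0) = 0`, `∂_r p⁻(0,0) = 0`, `∂_q p⁻(0,0) = 1`, one has
`∂_r² p⁻(0,0) = −4/(3(3−n)k³)`. -/
theorem unstable_manifold_second_r_derivative (n k : ℝ) (hn : n ∈ Set.Ioo (0 : ℝ) 3)
    (hk : 0 < k) (p : ℝ → ℝ → ℝ) (U : Set (ℝ × ℝ)) (hU : U ∈ 𝓝 ((0, 0) : ℝ × ℝ))
    (hanal : ∀ x ∈ U, AnalyticAt ℝ (fun y : ℝ × ℝ => p y.1 y.2) x)
    (hpde : ∀ x ∈ U,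
      x.1 * pd1 p x.1 x.2 - x.2 * pd2 p x.1 x.2 - n / (3 - n) * p x.1 x.2
        + 3 / (3 - n) * p x.1 x.2 * pd2 p x.1 x.2
      = -(2 / ((3 - n) * k ^ 3)) * (x.1 ^ 2 / (1 + x.1 ^ 3))
          * (1 + x.1 * x.2) ^ (-(1 / 2) : ℝ))
    (h0 : p 0 0 = 0) (h1r : pd1 p 0 0 = 0) (h1q : pd2 p 0 0 = 1) :
    deriv^[2] (fun r => p r 0) 0 = -4 / (3 * (3 - n) * k ^ 3) := by
  obtain ⟨hn0, hn3⟩ := hn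
  have h3n : (3:ℝ) - n ≠ 0 := by linarith
  have hkne : k ≠ 0 := ne_of_gt hk
  set P : ℝ × ℝ → ℝ := fun y => p y.1 y.2 with hPdef
  set F : ℝ → ℝ := fun r => p r 0 with hFdef
  set G : ℝ → ℝ := fun r => pd2 p r 0 with hGdef
  obtain ⟨O, hOU, hOopen, hO0⟩ := mem_nhds_iff.mp hU
  have hPa : AnalyticOnNhd ℝ P O := fun x hx => hanal x (hOU hx)
  have hfd : AnalyticOnNhd ℝ (fderiv ℝ P) O := hPa.fderiv
  set W : Set ℝ := {r : ℝ | (r, (0:ℝ)) ∈ O} ∩ {r : ℝ | 0 < 1 + r^3} with hWdef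
  have hWopen : IsOpen W := by
    apply IsOpen.inter
    · exact hOopen.preimage (by fun_prop)
    · exact isOpen_lt continuous_const (by fun_prop)
  have hW0 : (0:ℝ) ∈ W := ⟨hO0, by norm_num⟩
  have hWO : ∀ r ∈ W, (r, (0:ℝ)) ∈ O := fun r hr => hr.1
  have hWne : ∀ r ∈ W, (1:ℝ) + r^3 ≠ 0 := fun r hr => ne_of_gt hr.2
  have hι : ∀ r : ℝ, AnalyticAt ℝ (fun s : ℝ => (s, (0:ℝ))) r := fun r =>
    analyticAt_id.prod analyticAt_const
  have hFW : AnalyticOnNhd ℝ F W := by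
    intro r hr
    have h := AnalyticAt.comp (g := P) (f := fun s : ℝ => (s, (0:ℝ))) (x := r)
      (hPa _ (hWO r hr)) (hι r)
    exact h
  -- identify G with the fderiv evaluation
  have hGeq : ∀ r ∈ W, G r = fderiv ℝ P (r, 0) (0, 1) := by
    intro r hr
    have hd : HasFDerivAt P (fderiv ℝ P (r, 0)) (r, 0) :=
      (hPa _ (hWO r hr)).differentiableAt.hasFDerivAt
    have hc : HasDerivAt (fun y : ℝ => ((r : ℝ), y)) ((0:ℝ), (1:ℝ)) 0 :=
      (hasDerivAt_const (0:ℝ) r).prodMk (hasDerivAt_id (0:ℝ))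
    exact (hd.comp_hasDerivAt 0 hc).deriv
  have hGW : AnalyticOnNhd ℝ G W := by
    intro r hr
    have h1 : AnalyticAt ℝ (fun s : ℝ => fderiv ℝ P (s, 0) ((0:ℝ), (1:ℝ))) r :=
      ((ContinuousLinearMap.apply ℝ ℝ ((0:ℝ), (1:ℝ))).analyticAt _).comp
        (AnalyticAt.comp (g := fderiv ℝ P) (f := fun s : ℝ => (s, (0:ℝ))) (x := r)
          (hfd _ (hWO r hr)) (hι r))
    apply h1.congr
    filter_upwards [hWopen.mem_nhds hr] with s hs
    exact (hGeq s hs).symm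
  have hF'W : AnalyticOnNhd ℝ (deriv F) W := hFW.deriv
  have hF''W : AnalyticOnNhd ℝ (deriv (deriv F)) W := hF'W.deriv
  have hG'W : AnalyticOnNhd ℝ (deriv G) W := hGW.deriv
  -- the PDE restricted to q = 0
  have hEq : ∀ r ∈ W,
      r * deriv F r - n / (3 - n) * F r + 3 / (3 - n) * F r * G r
        = -(2 / ((3 - n) * k ^ 3)) * (r^2 / (1 + r^3)) := by
    intro r hr
    have h := hpde (r, 0) (hOU (hWO r hr))
    simp only [pd1, pd2] at h
    have h1 : ((1:ℝ) + r * 0) ^ (-(1 / 2) : ℝ) = 1 := by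
      rw [mul_zero, add_zero, Real.one_rpow]
    rw [h1, mul_one] at h
    have hzero : (0:ℝ) * deriv (fun y => p r y) 0 = 0 := zero_mul _
    calc r * deriv F r - n / (3 - n) * F r + 3 / (3 - n) * F r * G r
        = r * deriv (fun x => p x 0) r - 0 * deriv (fun y => p r y) 0
            - n / (3 - n) * p r 0 + 3 / (3 - n) * p r 0 * deriv (fun y => p r y) 0 := by
          simp only [hFdef, hGdef, pd2, zero_mul, sub_zero]
      _ = -(2 / ((3 - n) * k ^ 3)) * (r ^ 2 / (1 + r ^ 3)) := h
  -- first differentiation of the identity, at every r ∈ W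
  have hΦΨ : ∀ r ∈ W,
      deriv F r + r * deriv (deriv F) r - n / (3 - n) * deriv F r
        + 3 / (3 - n) * (deriv F r * G r + F r * deriv G r)
      = -(2 / ((3 - n) * k ^ 3)) * ((2 * r - r^4) / (1 + r^3)^2) := by
    intro r hr
    have hF' : HasDerivAt F (deriv F r) r := (hFW r hr).differentiableAt.hasDerivAt
    have hF'' : HasDerivAt (deriv F) (deriv (deriv F) r) r :=
      (hF'W r hr).differentiableAt.hasDerivAt
    have hG' : HasDerivAt G (deriv G r) r := (hGW r hr).differentiableAt.hasDerivAt
    have hL : HasDerivAt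
        (fun s => s * deriv F s - n / (3 - n) * F s + 3 / (3 - n) * F s * G s)
        (1 * deriv F r + r * deriv (deriv F) r - n / (3 - n) * deriv F r
          + 3 / (3 - n) * (deriv F r * G r + F r * deriv G r)) r := by
      have h1 : HasDerivAt (fun s => s * deriv F s)
          (1 * deriv F r + r * deriv (deriv F) r) r := (hasDerivAt_id r).mul hF''
      have h2 : HasDerivAt (fun s => n / (3 - n) * F s)
          (n / (3 - n) * deriv F r) r := hF'.const_mul _
      have h3 : HasDerivAt (fun s => 3 / (3 - n) * F s * G s)
          (3 / (3 - n) * (deriv F r * G r + F r * deriv G r)) r := by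
        have := ((hF'.mul hG').const_mul (3 / (3 - n)))
        simpa [mul_assoc] using this
      exact (h1.sub h2).add h3
    have hnum : HasDerivAt (fun s : ℝ => s ^ 2) (2 * r ^ 1) r := by
      simpa using hasDerivAt_pow 2 r
    have hden : HasDerivAt (fun s : ℝ => 1 + s ^ 3) (3 * r ^ 2) r := by
      simpa using (hasDerivAt_const r (1:ℝ)).fun_add (hasDerivAt_pow 3 r)
    have hR : HasDerivAt
        (fun s => -(2 / ((3 - n) * k ^ 3)) * (s^2 / (1 + s^3)))
        (-(2 / ((3 - n) * k ^ 3)) *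
          ((2 * r ^ 1 * (1 + r^3) - r^2 * (3 * r ^ 2)) / (1 + r^3)^2)) r :=
      (hnum.div hden (hWne r hr)).const_mul _
    have hLR : HasDerivAt
        (fun s => s * deriv F s - n / (3 - n) * F s + 3 / (3 - n) * F s * G s)
        (-(2 / ((3 - n) * k ^ 3)) *
          ((2 * r ^ 1 * (1 + r^3) - r^2 * (3 * r ^ 2)) / (1 + r^3)^2)) r := by
      apply hR.congr_of_eventuallyEq
      filter_upwards [hWopen.mem_nhds hr] with s hs
      exact hEq s hs
    have huniq := hL.unique hLR
    rw [one_mul] at huniq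
    rw [huniq]
    congr 1
    have : 2 * r ^ 1 * (1 + r^3) - r^2 * (3 * r ^ 2) = 2 * r - r^4 := by ring
    rw [this]
  -- second differentiation, at 0
  have hF'0 : deriv F 0 = 0 := h1r
  have hF00 : F 0 = 0 := h0
  have hG0 : G 0 = 1 := h1q
  set b := deriv (deriv F) 0 with hbdef
  have hF'd : HasDerivAt F (deriv F 0) 0 := (hFW 0 hW0).differentiableAt.hasDerivAt
  have hF''d : HasDerivAt (deriv F) b 0 := (hF'W 0 hW0).differentiableAt.hasDerivAt
  have hF'''d : HasDerivAt (deriv (deriv F)) (deriv (deriv (deriv F)) 0) 0 :=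
    (hF''W 0 hW0).differentiableAt.hasDerivAt
  have hG'd : HasDerivAt G (deriv G 0) 0 := (hGW 0 hW0).differentiableAt.hasDerivAt
  have hG''d : HasDerivAt (deriv G) (deriv (deriv G) 0) 0 :=
    (hG'W 0 hW0).differentiableAt.hasDerivAt
  have hΦ : HasDerivAt
      (fun r => deriv F r + r * deriv (deriv F) r - n / (3 - n) * deriv F r
        + 3 / (3 - n) * (deriv F r * G r + F r * deriv G r))
      (b + (1 * b + 0 * deriv (deriv (deriv F)) 0) - n / (3 - n) * b
        + 3 / (3 - n) * ((b * G 0 + deriv F 0 * deriv G 0)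
          + (deriv F 0 * deriv G 0 + F 0 * deriv (deriv G) 0))) 0 := by
    have h1 : HasDerivAt (fun r : ℝ => r * deriv (deriv F) r)
        (1 * b + 0 * deriv (deriv (deriv F)) 0) 0 := by
      have := (hasDerivAt_id (0:ℝ)).fun_mul hF'''d
      simpa [hbdef] using this
    have h2 : HasDerivAt (fun r => n / (3 - n) * deriv F r) (n / (3 - n) * b) 0 :=
      hF''d.const_mul _
    have h3 : HasDerivAt (fun r => deriv F r * G r + F r * deriv G r)
        ((b * G 0 + deriv F 0 * deriv G 0)
          + (deriv F 0 * deriv G 0 + F 0 * deriv (deriv G) 0)) 0 :=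
      (hF''d.mul hG'd).add (hF'd.mul hG''d)
    exact ((hF''d.add h1).sub h2).add (h3.const_mul _)
  have hΨ : HasDerivAt
      (fun r => -(2 / ((3 - n) * k ^ 3)) * ((2 * r - r^4) / (1 + r^3)^2))
      (-(2 / ((3 - n) * k ^ 3)) * 2) 0 := by
    have hnum : HasDerivAt (fun r : ℝ => 2 * r - r^4) (2:ℝ) 0 := by
      have := ((hasDerivAt_id (0:ℝ)).const_mul 2).fun_sub (hasDerivAt_pow 4 0)
      simpa using this
    have hden0 : HasDerivAt (fun r : ℝ => 1 + r ^ 3) (0:ℝ) 0 := by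
      have := (hasDerivAt_const (0:ℝ) (1:ℝ)).fun_add (hasDerivAt_pow 3 0)
      simpa using this
    have hden : HasDerivAt (fun r : ℝ => (1 + r ^ 3)^2) (0:ℝ) 0 := by
      have := hden0.fun_pow 2
      simpa using this
    have hne : ((1:ℝ) + (0:ℝ)^3)^2 ≠ 0 := by norm_num
    have := (hnum.div hden hne).const_mul (-(2 / ((3 - n) * k ^ 3)))
    have heq : (2 * ((1 + (0:ℝ) ^ 3) ^ 2) - (2 * (0:ℝ) - (0:ℝ)^4) * 0)
        / (((1 + (0:ℝ) ^ 3) ^ 2) ^ 2) = 2 := by norm_num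
    simpa [heq] using this
  have hΦΨ0 : HasDerivAt
      (fun r => deriv F r + r * deriv (deriv F) r - n / (3 - n) * deriv F r
        + 3 / (3 - n) * (deriv F r * G r + F r * deriv G r))
      (-(2 / ((3 - n) * k ^ 3)) * 2) 0 := by
    apply hΨ.congr_of_eventuallyEq
    filter_upwards [hWopen.mem_nhds hW0] with s hs
    exact hΦΨ s hs
  have hkey := hΦ.unique hΦΨ0
  rw [hF'0, hF00, hG0] at hkey
  -- hkey : b + (1*b + 0*_) - n/(3-n)*b + 3/(3-n)*((b*1 + 0*_) + (0*_ + 0*_)) = -(2/((3-n)k³))*2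
  have hb : b = -4 / (3 * (3 - n) * k ^ 3) := by
    have hk3 : k ^ 3 ≠ 0 := pow_ne_zero 3 hkne
    field_simp at hkey ⊢
    nlinarith [hkey, sq_nonneg (3 - n), sq_nonneg k]
  have hgoal : deriv^[2] (fun r => p r 0) 0 = b := by
    simp only [Function.iterate_succ, Function.iterate_zero, Function.comp_apply, id_eq]
    rfl
  rw [hgoal, hb]
end

section
/- Let n ∈ (0,3) and k > 0, and let p⁻(r,q) be a function of two real variables that is real-analytic in a neighborhood of (0,0) and satisfies there the first-order PDE (r∂_r − q∂_q − n/(3−n))p⁻ + (3/(3−n))·p⁻·∂_q p⁻ = −(2/((3−n)k³))·(r²/(1+r³))·(1+rq)^{−1/2}, together with p⁻(0,0) = 0, ∂_r p⁻(0,0) = 0, and ∂_q p⁻(0,0) = 1. Then for all nonnegative integers j and ℓ with j ≤ ℓ − 2 one has ∂_r^j ∂_q^ℓ p⁻(0,0) = 0. -/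
open Filter Topology Set

section OneVar

lemma evd_iter {f g : ℝ → ℝ} {x : ℝ} (h : f =ᶠ[𝓝 x] g) (m : ℕ) :
    deriv^[m] f =ᶠ[𝓝 x] deriv^[m] g := by
  induction m with
  | zero => exact h
  | succ m ih =>
    rw [Function.iterate_succ_apply', Function.iterate_succ_apply']
    exact ih.deriv

lemma evd_iter_eq {f g : ℝ → ℝ} {x : ℝ} (h : f =ᶠ[𝓝 x] g) (m : ℕ) :
    deriv^[m] f x = deriv^[m] g x := (evd_iter h m).self_of_nhds

lemma eqOn_nhds {s : Set ℝ} (hs : IsOpen s) {f g : ℝ → ℝ} (h : Set.EqOn f g s) {x : ℝ}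
    (hx : x ∈ s) : f =ᶠ[𝓝 x] g :=
  Filter.eventuallyEq_of_mem (hs.mem_nhds hx) h

lemma iter_deriv_const_mul (c : ℝ) (m : ℕ) :
    ∀ f : ℝ → ℝ, deriv^[m] (fun y => c * f y) = fun x => c * deriv^[m] f x := by
  induction m with
  | zero => intro f; rfl
  | succ m ih =>
    intro f
    simp only [Function.iterate_succ_apply]
    rw [deriv_const_mul_field' c]
    exact ih (deriv f)

lemma AnalyticAt.deriv1 {f : ℝ → ℝ} {x : ℝ} (h : AnalyticAt ℝ f x) :
    AnalyticAt ℝ (deriv f) x := by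
  have h2 : AnalyticAt ℝ (fderiv ℝ f) x := h.fderiv
  have h3 : deriv f = fun y => fderiv ℝ f y 1 := by funext y; rw [← fderiv_apply_one_eq_deriv]
  rw [h3]
  exact ((ContinuousLinearMap.apply ℝ ℝ (1:ℝ)).analyticAt _).comp h2

lemma iter_deriv_add {s : Set ℝ} (hs : IsOpen s) (m : ℕ) :
    ∀ f g : ℝ → ℝ, AnalyticOnNhd ℝ f s → AnalyticOnNhd ℝ g s → ∀ x ∈ s,
    deriv^[m] (fun y => f y + g y) x = deriv^[m] f x + deriv^[m] g x := by
  induction m with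
  | zero => intro f g _ _ x _; rfl
  | succ m ih =>
    intro f g hf hg x hx
    have h1 : deriv (fun y => f y + g y) =ᶠ[𝓝 x] fun y => deriv f y + deriv g y :=
      eqOn_nhds hs (fun y hy =>
        deriv_add (hf y hy).differentiableAt (hg y hy).differentiableAt) hx
    rw [Function.iterate_succ_apply, evd_iter_eq h1 m,
      Function.iterate_succ_apply (f := deriv) (n := m) f,
      Function.iterate_succ_apply (f := deriv) (n := m) g]
    exact ih (deriv f) (deriv g) hf.deriv hg.deriv x hx

lemma iter_deriv_sum {s : Set ℝ} (hs : IsOpen s) {ι : Type} (t : Finset ι) (F : ι → ℝ → ℝ)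
    (hF : ∀ i ∈ t, AnalyticOnNhd ℝ (F i) s) (m : ℕ) :
    ∀ x ∈ s, deriv^[m] (fun y => ∑ i ∈ t, F i y) x = ∑ i ∈ t, deriv^[m] (F i) x := by
  classical
  induction t using Finset.induction_on with
  | empty =>
    intro x hx
    have h0 : ∀ m : ℕ, deriv^[m] (fun _ : ℝ => (0:ℝ)) = fun _ => (0:ℝ) := by
      intro m
      induction m with
      | zero => rfl
      | succ m ih => simp only [Function.iterate_succ_apply, deriv_const']; exact ih
    simp [h0 m]
  | insert a t' hnot ih =>
    intro x hx
    have hFa : AnalyticOnNhd ℝ (F a) s := hF a (Finset.mem_insert_self a t')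
    have hFt : AnalyticOnNhd ℝ (fun y => ∑ i ∈ t', F i y) s :=
      fun z hz => Finset.analyticAt_fun_sum t' (fun i hi => hF i (Finset.mem_insert_of_mem hi) z hz)
    have h1 : (fun y => ∑ i ∈ insert a t', F i y) = fun y => F a y + ∑ i ∈ t', F i y := by
      funext y; rw [Finset.sum_insert hnot]
    rw [h1, iter_deriv_add hs m _ _ hFa hFt x hx, Finset.sum_insert hnot,
      ih (fun i hi => hF i (Finset.mem_insert_of_mem hi)) x hx]

end OneVar

lemma leib_arith (m : ℕ) (F G : ℕ → ℝ) :
    (∑ i ∈ Finset.range (m+1), (m.choose i : ℝ) * (F (i+1) * G (m-i)))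
      + (∑ i ∈ Finset.range (m+1), (m.choose i : ℝ) * (F i * G (m-i+1)))
      = ∑ i ∈ Finset.range (m+1+1), ((m+1).choose i : ℝ) * (F i * G (m+1-i)) := by
  rw [Finset.sum_range_succ' (fun i => ((m+1).choose i : ℝ) * (F i * G (m+1-i))) (m+1)]
  have e1 : ∀ i ∈ Finset.range (m+1),
      (((m+1).choose (i+1) : ℕ) : ℝ) * (F (i+1) * G (m+1-(i+1)))
        = (m.choose i : ℝ) * (F (i+1) * G (m-i))
          + (m.choose (i+1) : ℝ) * (F (i+1) * G (m-i)) := by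
    intro i hi
    have h2 : m + 1 - (i+1) = m - i := by omega
    rw [h2, Nat.choose_succ_succ, Nat.cast_add]; ring
  rw [Finset.sum_congr rfl e1, Finset.sum_add_distrib]
  have e2 : ∑ i ∈ Finset.range (m+1), (m.choose i : ℝ) * (F i * G (m-i+1))
      = (∑ i ∈ Finset.range (m+1), (m.choose (i+1) : ℝ) * (F (i+1) * G (m-i)))
        + F 0 * G (m+1) := by
    rw [Finset.sum_range_succ' (fun i => (m.choose i : ℝ) * (F i * G (m-i+1))) m]
    have e2a : ∀ i ∈ Finset.range m,
        (m.choose (i+1) : ℝ) * (F (i+1) * G (m-(i+1)+1))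
          = (m.choose (i+1) : ℝ) * (F (i+1) * G (m-i)) := by
      intro i hi
      have h3 : m - (i+1) + 1 = m - i := by have := Finset.mem_range.mp hi; omega
      rw [h3]
    rw [Finset.sum_congr rfl e2a,
      Finset.sum_range_succ (fun i => (m.choose (i+1) : ℝ) * (F (i+1) * G (m-i))) m]
    simp [Nat.choose_succ_self]
  rw [e2]
  simp only [Nat.choose_zero_right, Nat.cast_one, one_mul, Nat.sub_zero]
  ring

lemma iter_deriv_mul {s : Set ℝ} (hs : IsOpen s) (m : ℕ) :
    ∀ f g : ℝ → ℝ, AnalyticOnNhd ℝ f s → AnalyticOnNhd ℝ g s → ∀ x ∈ s,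
    deriv^[m] (fun y => f y * g y) x
      = ∑ i ∈ Finset.range (m+1), (m.choose i : ℝ) * (deriv^[i] f x * deriv^[m-i] g x) := by
  induction m with
  | zero => intro f g hf hg x hx; simp
  | succ m ih =>
    intro f g hf hg x hx
    have h1 : deriv (fun y => f y * g y) =ᶠ[𝓝 x] fun y => deriv f y * g y + f y * deriv g y :=
      eqOn_nhds hs (fun y hy =>
        deriv_mul (hf y hy).differentiableAt (hg y hy).differentiableAt) hx
    have hfg1 : AnalyticOnNhd ℝ (fun y => deriv f y * g y) s :=
      fun z hz => ((hf z hz).deriv1).mul (hg z hz)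
    have hfg2 : AnalyticOnNhd ℝ (fun y => f y * deriv g y) s :=
      fun z hz => (hf z hz).mul ((hg z hz).deriv1)
    rw [Function.iterate_succ_apply, evd_iter_eq h1 m,
      iter_deriv_add hs m _ _ hfg1 hfg2 x hx,
      ih _ _ hf.deriv hg x hx, ih _ _ hf hg.deriv x hx]
    have conv1 : ∀ i ∈ Finset.range (m+1),
        (m.choose i : ℝ) * (deriv^[i] (deriv f) x * deriv^[m-i] g x)
          = (m.choose i : ℝ) * (deriv^[i+1] f x * deriv^[m-i] g x) := by
      intro i hi; rw [← Function.iterate_succ_apply (f := deriv)]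
    have conv2 : ∀ i ∈ Finset.range (m+1),
        (m.choose i : ℝ) * (deriv^[i] f x * deriv^[m-i] (deriv g) x)
          = (m.choose i : ℝ) * (deriv^[i] f x * deriv^[m-i+1] g x) := by
      intro i hi; rw [← Function.iterate_succ_apply (f := deriv)]
    rw [Finset.sum_congr rfl conv1, Finset.sum_congr rfl conv2]
    exact leib_arith m (fun i => deriv^[i] f x) (fun i => deriv^[i] g x)

lemma iter_deriv_id_mul {s : Set ℝ} (hs : IsOpen s) (h0 : (0:ℝ) ∈ s) (j : ℕ) :
    ∀ f : ℝ → ℝ, AnalyticOnNhd ℝ f s →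
    deriv^[j] (fun y => y * f y) 0 = (j : ℝ) * deriv^[j-1] f 0 := by
  induction j with
  | zero => intro f hf; simp
  | succ j ih =>
    intro f hf
    have h1 : deriv (fun y => y * f y) =ᶠ[𝓝 (0:ℝ)] fun y => f y + y * deriv f y := by
      apply eqOn_nhds hs _ h0
      intro y hy
      rw [deriv_fun_mul differentiableAt_fun_id (hf y hy).differentiableAt]
      simp [mul_comm]
    have hid : AnalyticOnNhd ℝ (fun y : ℝ => y * deriv f y) s :=
      fun z hz => analyticAt_id.mul ((hf z hz).deriv1)
    rw [Function.iterate_succ_apply, evd_iter_eq h1 j,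
      iter_deriv_add hs j _ _ hf hid 0 h0, ih (deriv f) hf.deriv]
    cases j with
    | zero => simp
    | succ j' =>
      simp only [Nat.succ_eq_add_one, Nat.add_sub_cancel]
      rw [← Function.iterate_succ_apply (f := deriv)]
      push_cast
      ring

lemma iter_deriv_pow_mul (j : ℕ) : ∀ (m : ℕ) (f : ℝ → ℝ), AnalyticAt ℝ f 0 → j < m →
    deriv^[j] (fun x => x ^ m * f x) 0 = 0 := by
  induction j with
  | zero =>
    intro m f hf hm
    simp [zero_pow (by omega : m ≠ 0)]
  | succ j ih =>
    intro m f hf hm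
    have hf' : ∀ᶠ y in 𝓝 (0:ℝ), AnalyticAt ℝ f y := hf.eventually_analyticAt
    have h1 : deriv (fun x => x ^ m * f x) =ᶠ[𝓝 (0:ℝ)]
        fun x => x ^ (m-1) * ((m:ℝ) * f x + x * deriv f x) := by
      filter_upwards [hf'] with y hy
      rw [deriv_fun_mul (differentiableAt_pow m) hy.differentiableAt, deriv_pow_field]
      have hy2 : y ^ m = y ^ (m-1) * y := by
        conv_lhs => rw [show m = (m-1)+1 by omega]
        rw [pow_succ]
      rw [hy2]; ring
    rw [Function.iterate_succ_apply, evd_iter_eq h1 j]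
    exact ih (m-1) _ ((analyticAt_const.mul hf).add (analyticAt_id.mul hf.deriv1)) (by omega)

lemma iter_deriv_rpow_aff (e r : ℝ) {ε : ℝ} (hpos : ∀ q : ℝ, |q| < ε → 0 < 1 + r * q) (ℓ : ℕ) :
    ∀ q : ℝ, |q| < ε → deriv^[ℓ] (fun y => (1 + r * y) ^ e) q
      = (∏ i ∈ Finset.range ℓ, (e - i)) * r ^ ℓ * (1 + r * q) ^ (e - ℓ) := by
  induction ℓ with
  | zero => intro q hq; simp
  | succ ℓ ih =>
    intro q hq
    rw [Function.iterate_succ_apply']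
    have hop : IsOpen {y : ℝ | |y| < ε} := by
      have : {y : ℝ | |y| < ε} = Metric.ball (0:ℝ) ε := by
        ext y; simp [Metric.mem_ball, Real.dist_eq]
      rw [this]; exact Metric.isOpen_ball
    have h1 : deriv^[ℓ] (fun y => (1 + r * y) ^ e) =ᶠ[𝓝 q]
        fun y => (∏ i ∈ Finset.range ℓ, (e - i)) * r ^ ℓ * (1 + r * y) ^ (e - ℓ) := by
      filter_upwards [hop.mem_nhds hq] with y hy using ih y hy
    rw [h1.deriv_eq]
    have hb : HasDerivAt (fun y : ℝ => 1 + r * y) r q := by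
      simpa using ((hasDerivAt_id q).const_mul r).const_add 1
    have hd : HasDerivAt (fun y => (1 + r * y) ^ (e - ℓ))
        (r * (e - ℓ) * (1 + r * q) ^ (e - ℓ - 1)) q :=
      hb.rpow_const (Or.inl (ne_of_gt (hpos q hq)))
    have hd2 := (hd.const_mul ((∏ i ∈ Finset.range ℓ, (e - i)) * r ^ ℓ)).deriv
    rw [hd2, Finset.prod_range_succ, Nat.cast_add, Nat.cast_one, ← sub_sub]
    ring

lemma iter_deriv_add4 {s : Set ℝ} (hs : IsOpen s) (m : ℕ)
    (f1 f2 f3 f4 : ℝ → ℝ) (h1 : AnalyticOnNhd ℝ f1 s) (h2 : AnalyticOnNhd ℝ f2 s)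
    (h3 : AnalyticOnNhd ℝ f3 s) (h4 : AnalyticOnNhd ℝ f4 s) (x : ℝ) (hx : x ∈ s) :
    deriv^[m] (fun y => f1 y + f2 y + f3 y + f4 y) x
      = deriv^[m] f1 x + deriv^[m] f2 x + deriv^[m] f3 x + deriv^[m] f4 x := by
  have g12 : AnalyticOnNhd ℝ (fun y => f1 y + f2 y) s := fun z hz => (h1 z hz).add (h2 z hz)
  have g123 : AnalyticOnNhd ℝ (fun y => f1 y + f2 y + f3 y) s :=
    fun z hz => (g12 z hz).add (h3 z hz)
  have s1 := iter_deriv_add hs m (fun y => f1 y + f2 y + f3 y) f4 g123 h4 x hx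
  have s2 := iter_deriv_add hs m (fun y => f1 y + f2 y) f3 g12 h3 x hx
  have s3 := iter_deriv_add hs m f1 f2 h1 h2 x hx
  calc deriv^[m] (fun y => f1 y + f2 y + f3 y + f4 y) x
      = deriv^[m] (fun y => f1 y + f2 y + f3 y) x + deriv^[m] f4 x := s1
    _ = (deriv^[m] (fun y => f1 y + f2 y) x + deriv^[m] f3 x) + deriv^[m] f4 x := by
        exact congrArg (· + deriv^[m] f4 x) s2
    _ = deriv^[m] f1 x + deriv^[m] f2 x + deriv^[m] f3 x + deriv^[m] f4 x := by
        rw [s3]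

section TwoVar

variable {V : Set (ℝ × ℝ)} {g : ℝ → ℝ → ℝ}

/-- iterated pd2 is iterated deriv in the second slot -/
lemma pd2_iter (m : ℕ) : ∀ (g : ℝ → ℝ → ℝ) (a : ℝ), pd2^[m] g a = deriv^[m] (g a) := by
  induction m with
  | zero => intro g a; rfl
  | succ m ih =>
    intro g a
    rw [Function.iterate_succ_apply, Function.iterate_succ_apply, ih (pd2 g) a]
    rfl

lemma pd1_iter (m : ℕ) : ∀ (g : ℝ → ℝ → ℝ) (c : ℝ),
    (fun a => pd1^[m] g a c) = deriv^[m] (fun a => g a c) := by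
  induction m with
  | zero => intro g c; rfl
  | succ m ih =>
    intro g c
    rw [Function.iterate_succ_apply, Function.iterate_succ_apply, ih (pd1 g) c]
    rfl

lemma pd1_eq_fderiv (hg : AnalyticOnNhd ℝ (fun y : ℝ × ℝ => g y.1 y.2) V) :
    ∀ y ∈ V, pd1 g y.1 y.2 = fderiv ℝ (fun y : ℝ × ℝ => g y.1 y.2) y (1, 0) := by
  intro y hy
  have hcurve : HasDerivAt (fun t : ℝ => ((t, y.2) : ℝ × ℝ)) ((1:ℝ), (0:ℝ)) y.1 :=
    (hasDerivAt_id y.1).prodMk (hasDerivAt_const _ _)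
  have hF : HasFDerivAt (fun y : ℝ × ℝ => g y.1 y.2)
      (fderiv ℝ (fun y : ℝ × ℝ => g y.1 y.2) y) ((fun t : ℝ => ((t, y.2) : ℝ × ℝ)) y.1) := by
    simpa using (hg y hy).differentiableAt.hasFDerivAt
  have := (hF.comp_hasDerivAt y.1 hcurve).deriv
  simpa [pd1, Function.comp_def] using this

lemma pd2_eq_fderiv (hg : AnalyticOnNhd ℝ (fun y : ℝ × ℝ => g y.1 y.2) V) :
    ∀ y ∈ V, pd2 g y.1 y.2 = fderiv ℝ (fun y : ℝ × ℝ => g y.1 y.2) y (0, 1) := by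
  intro y hy
  have hcurve : HasDerivAt (fun t : ℝ => ((y.1, t) : ℝ × ℝ)) ((0:ℝ), (1:ℝ)) y.2 :=
    (hasDerivAt_const _ _).prodMk (hasDerivAt_id y.2)
  have hF : HasFDerivAt (fun y : ℝ × ℝ => g y.1 y.2)
      (fderiv ℝ (fun y : ℝ × ℝ => g y.1 y.2) y) ((fun t : ℝ => ((y.1, t) : ℝ × ℝ)) y.2) := by
    simpa using (hg y hy).differentiableAt.hasFDerivAt
  have := (hF.comp_hasDerivAt y.2 hcurve).deriv
  simpa [pd2, Function.comp_def] using this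

lemma N_pd1 (hV : IsOpen V) (hg : AnalyticOnNhd ℝ (fun y : ℝ × ℝ => g y.1 y.2) V) :
    AnalyticOnNhd ℝ (fun y : ℝ × ℝ => pd1 g y.1 y.2) V := by
  intro x hx
  have h2 : AnalyticAt ℝ (fun y : ℝ × ℝ => fderiv ℝ (fun y : ℝ × ℝ => g y.1 y.2) y (1, 0)) x :=
    ((ContinuousLinearMap.apply ℝ ℝ ((1:ℝ), (0:ℝ))).analyticAt _).comp (hg.fderiv x hx)
  apply h2.congr
  exact Filter.eventuallyEq_of_mem (hV.mem_nhds hx) (fun y hy => (pd1_eq_fderiv hg y hy).symm)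

lemma N_pd2 (hV : IsOpen V) (hg : AnalyticOnNhd ℝ (fun y : ℝ × ℝ => g y.1 y.2) V) :
    AnalyticOnNhd ℝ (fun y : ℝ × ℝ => pd2 g y.1 y.2) V := by
  intro x hx
  have h2 : AnalyticAt ℝ (fun y : ℝ × ℝ => fderiv ℝ (fun y : ℝ × ℝ => g y.1 y.2) y (0, 1)) x :=
    ((ContinuousLinearMap.apply ℝ ℝ ((0:ℝ), (1:ℝ))).analyticAt _).comp (hg.fderiv x hx)
  apply h2.congr
  exact Filter.eventuallyEq_of_mem (hV.mem_nhds hx) (fun y hy => (pd2_eq_fderiv hg y hy).symm)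

lemma N_pd2_iter (hV : IsOpen V) (m : ℕ) :
    ∀ g : ℝ → ℝ → ℝ, AnalyticOnNhd ℝ (fun y : ℝ × ℝ => g y.1 y.2) V →
    AnalyticOnNhd ℝ (fun y : ℝ × ℝ => pd2^[m] g y.1 y.2) V := by
  induction m with
  | zero => intro g hg; exact hg
  | succ m ih =>
    intro g hg
    have := ih (pd2 g) (N_pd2 hV hg)
    simpa [Function.iterate_succ_apply] using this

/-- partial applications are analytic -/
lemma PA_q (hg : AnalyticOnNhd ℝ (fun y : ℝ × ℝ => g y.1 y.2) V) {r q : ℝ}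
    (h : (r, q) ∈ V) : AnalyticAt ℝ (fun y => g r y) q := by
  have hc : AnalyticAt ℝ (fun y : ℝ => ((r, y) : ℝ × ℝ)) q := analyticAt_const.prod analyticAt_id
  exact (hg _ h).comp hc

lemma PA_r (hg : AnalyticOnNhd ℝ (fun y : ℝ × ℝ => g y.1 y.2) V) {r q : ℝ}
    (h : (r, q) ∈ V) : AnalyticAt ℝ (fun x => g x q) r := by
  have hc : AnalyticAt ℝ (fun x : ℝ => ((x, q) : ℝ × ℝ)) r := analyticAt_id.prod analyticAt_const
  exact AnalyticAt.comp (f := fun x : ℝ => ((x, q) : ℝ × ℝ)) (hg _ h) hc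

lemma clairaut (hV : IsOpen V) (hg : AnalyticOnNhd ℝ (fun y : ℝ × ℝ => g y.1 y.2) V) :
    ∀ x ∈ V, pd1 (pd2 g) x.1 x.2 = pd2 (pd1 g) x.1 x.2 := by
  intro x hx
  set F : ℝ × ℝ → ℝ := fun y => g y.1 y.2 with hFdef
  set Φ : ℝ × ℝ → (ℝ × ℝ) →L[ℝ] ℝ := fderiv ℝ F with hΦdef
  have hΦ : AnalyticOnNhd ℝ Φ V := hg.fderiv
  have hdiff : ∀ᶠ y in 𝓝 x, HasFDerivAt F (Φ y) y := by
    filter_upwards [hV.mem_nhds hx] with y hy using (hg y hy).differentiableAt.hasFDerivAt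
  have hx2 : HasFDerivAt Φ (fderiv ℝ Φ x) x := (hΦ x hx).differentiableAt.hasFDerivAt
  have symm := second_derivative_symmetric_of_eventually hdiff hx2
  -- compute pd1 (pd2 g) x = fderiv Φ x (1,0) (0,1)
  have hA : pd1 (pd2 g) x.1 x.2 = fderiv ℝ Φ x (1, 0) (0, 1) := by
    have hev : (fun t => pd2 g t x.2) =ᶠ[𝓝 x.1] fun t => Φ (t, x.2) (0, 1) := by
      have hop : IsOpen {t : ℝ | (t, x.2) ∈ V} :=
        hV.preimage (continuous_id.prodMk continuous_const)
      have hmem : x.1 ∈ {t : ℝ | (t, x.2) ∈ V} := by simpa using hx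
      filter_upwards [hop.mem_nhds hmem] with t ht
      exact pd2_eq_fderiv hg (t, x.2) ht
    have h1 : pd1 (pd2 g) x.1 x.2 = deriv (fun t => Φ (t, x.2) (0, 1)) x.1 := by
      rw [pd1]; exact hev.deriv_eq
    have hcurve : HasDerivAt (fun t : ℝ => ((t, x.2) : ℝ × ℝ)) ((1:ℝ), (0:ℝ)) x.1 :=
      (hasDerivAt_id x.1).prodMk (hasDerivAt_const _ _)
    have hΦx : HasFDerivAt Φ (fderiv ℝ Φ x) ((fun t : ℝ => ((t, x.2) : ℝ × ℝ)) x.1) := by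
      simpa using hx2
    have hcomp : HasDerivAt (fun t => Φ (t, x.2)) (fderiv ℝ Φ x (1, 0)) x.1 :=
      hΦx.comp_hasDerivAt x.1 hcurve
    have happ : HasDerivAt (fun t => Φ (t, x.2) (0, 1))
        (fderiv ℝ Φ x (1, 0) (0, 1)) x.1 := by
      have := hcomp.clm_apply (hasDerivAt_const x.1 ((0:ℝ), (1:ℝ)))
      simpa using this
    rw [h1, happ.deriv]
  have hB : pd2 (pd1 g) x.1 x.2 = fderiv ℝ Φ x (0, 1) (1, 0) := by
    have hev : (fun t => pd1 g x.1 t) =ᶠ[𝓝 x.2] fun t => Φ (x.1, t) (1, 0) := by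
      have hop : IsOpen {t : ℝ | (x.1, t) ∈ V} :=
        hV.preimage (continuous_const.prodMk continuous_id)
      have hmem : x.2 ∈ {t : ℝ | (x.1, t) ∈ V} := by simpa using hx
      filter_upwards [hop.mem_nhds hmem] with t ht
      exact pd1_eq_fderiv hg (x.1, t) ht
    have h1 : pd2 (pd1 g) x.1 x.2 = deriv (fun t => Φ (x.1, t) (1, 0)) x.2 := by
      rw [pd2]; exact hev.deriv_eq
    have hcurve : HasDerivAt (fun t : ℝ => ((x.1, t) : ℝ × ℝ)) ((0:ℝ), (1:ℝ)) x.2 :=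
      (hasDerivAt_const _ _).prodMk (hasDerivAt_id x.2)
    have hΦx : HasFDerivAt Φ (fderiv ℝ Φ x) ((fun t : ℝ => ((x.1, t) : ℝ × ℝ)) x.2) := by
      simpa using hx2
    have hcomp : HasDerivAt (fun t => Φ (x.1, t)) (fderiv ℝ Φ x (0, 1)) x.2 :=
      hΦx.comp_hasDerivAt x.2 hcurve
    have happ : HasDerivAt (fun t => Φ (x.1, t) (1, 0))
        (fderiv ℝ Φ x (0, 1) (1, 0)) x.2 := by
      have := hcomp.clm_apply (hasDerivAt_const x.2 ((1:ℝ), (0:ℝ)))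
      simpa using this
    rw [h1, happ.deriv]
  rw [hA, hB, symm]

lemma swap_iter (hV : IsOpen V) (m : ℕ) :
    ∀ g : ℝ → ℝ → ℝ, AnalyticOnNhd ℝ (fun y : ℝ × ℝ => g y.1 y.2) V →
    ∀ x ∈ V, pd2^[m] (pd1 g) x.1 x.2 = pd1 (pd2^[m] g) x.1 x.2 := by
  induction m with
  | zero => intro g hg x hx; rfl
  | succ m ih =>
    intro g hg x hx
    rw [Function.iterate_succ_apply]
    have hprop : pd2^[m] (pd2 (pd1 g)) x.1 x.2 = pd2^[m] (pd1 (pd2 g)) x.1 x.2 := by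
      rw [pd2_iter, pd2_iter]
      apply evd_iter_eq _ m
      have hop : IsOpen {t : ℝ | (x.1, t) ∈ V} :=
        hV.preimage (continuous_const.prodMk continuous_id)
      have hmem : x.2 ∈ {t : ℝ | (x.1, t) ∈ V} := by simpa using hx
      filter_upwards [hop.mem_nhds hmem] with t ht
      exact (clairaut hV hg (x.1, t) ht).symm
    rw [hprop, ih (pd2 g) (N_pd2 hV hg) x hx, ← Function.iterate_succ_apply]

end TwoVar

noncomputable def Pc (p : ℝ → ℝ → ℝ) (b : ℕ) : ℝ → ℝ := fun r => deriv^[b] (fun q => p r q) 0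
noncomputable def Wc (p : ℝ → ℝ → ℝ) (ℓ : ℕ) : ℝ → ℝ := fun r => deriv^[ℓ] (fun q => pd1 p r q) 0

lemma master_eq {α β C ε : ℝ} (hε : 0 < ε) (hε2 : ε ≤ 1/2) {p : ℝ → ℝ → ℝ}
    (hanal : AnalyticOnNhd ℝ (fun y : ℝ × ℝ => p y.1 y.2) (Metric.ball ((0,0) : ℝ × ℝ) ε))
    (hpde : ∀ r q : ℝ, |r| < ε → |q| < ε →
      r * pd1 p r q - q * pd2 p r q - α * p r q + β * p r q * pd2 p r q
        = C * (r ^ 2 / (1 + r ^ 3)) * (1 + r * q) ^ (-(1/2) : ℝ))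
    (j ℓ : ℕ) (hl2 : 2 ≤ ℓ) (hjl : j < ℓ + 2) :
    (j : ℝ) * deriv^[j] (Pc p ℓ) 0 - (ℓ : ℝ) * deriv^[j] (Pc p ℓ) 0 - α * deriv^[j] (Pc p ℓ) 0
      + β * (∑ b ∈ Finset.range (ℓ+1), (ℓ.choose b : ℝ) *
          ∑ a ∈ Finset.range (j+1), (j.choose a : ℝ) *
            (deriv^[a] (Pc p b) 0 * deriv^[j-a] (Pc p ((ℓ-b)+1)) 0)) = 0 := by
  have hVopen : IsOpen (Metric.ball ((0,0) : ℝ × ℝ) ε) := Metric.isOpen_ball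
  have hsopen : IsOpen (Metric.ball (0:ℝ) ε) := Metric.isOpen_ball
  have mems : ∀ z : ℝ, z ∈ Metric.ball (0:ℝ) ε ↔ |z| < ε := by
    intro z; rw [Metric.mem_ball, Real.dist_eq, sub_zero]
  have h0s : (0:ℝ) ∈ Metric.ball (0:ℝ) ε := by rw [mems]; simpa using hε
  have memV : ∀ r q : ℝ, |r| < ε → |q| < ε →
      ((r,q) : ℝ×ℝ) ∈ Metric.ball ((0,0) : ℝ×ℝ) ε := by
    intro r q h1 h2
    rw [← ball_prod_same]
    exact ⟨by simpa [Real.dist_eq] using h1, by simpa [Real.dist_eq] using h2⟩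
  have habs0 : |(0:ℝ)| < ε := by simpa using hε
  -- analyticity of the slices
  have hNpd1 : AnalyticOnNhd ℝ (fun y : ℝ × ℝ => pd1 p y.1 y.2) (Metric.ball ((0,0):ℝ×ℝ) ε) :=
    N_pd1 hVopen hanal
  have hNpd2p : AnalyticOnNhd ℝ (fun y : ℝ × ℝ => pd2 p y.1 y.2) (Metric.ball ((0,0):ℝ×ℝ) ε) :=
    N_pd2 hVopen hanal
  have hPanal : ∀ b : ℕ, AnalyticOnNhd ℝ (Pc p b) (Metric.ball (0:ℝ) ε) := by
    intro b r hr
    have h1 : AnalyticAt ℝ (fun x => pd2^[b] p x 0) r :=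
      PA_r (N_pd2_iter hVopen b p hanal) (memV r 0 ((mems r).mp hr) habs0)
    apply h1.congr
    apply Filter.EventuallyEq.of_eq
    funext x
    exact (congrFun (pd2_iter b p x) 0)
  have hWanal : AnalyticOnNhd ℝ (Wc p ℓ) (Metric.ball (0:ℝ) ε) := by
    intro r hr
    have h1 : AnalyticAt ℝ (fun x => pd2^[ℓ] (pd1 p) x 0) r :=
      PA_r (N_pd2_iter hVopen ℓ _ hNpd1) (memV r 0 ((mems r).mp hr) habs0)
    apply h1.congr
    apply Filter.EventuallyEq.of_eq
    funext x
    exact (congrFun (pd2_iter ℓ (pd1 p) x) 0)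
  -- q-level identity
  have hq : ∀ r : ℝ, |r| < ε →
      r * Wc p ℓ r + (-1:ℝ) * ((ℓ:ℝ) * Pc p ℓ r) + (-α) * Pc p ℓ r
        + β * (∑ b ∈ Finset.range (ℓ+1), (ℓ.choose b : ℝ) * (Pc p b r * Pc p ((ℓ-b)+1) r))
      = C * (r ^ 2 / (1 + r ^ 3)) * ((∏ i ∈ Finset.range ℓ, (-(1/2:ℝ) - i)) * r ^ ℓ) := by
    intro r hr
    have hpos : ∀ q : ℝ, |q| < ε → 0 < 1 + r * q := by
      intro q hq'
      have h1 : |r| < 1/2 := lt_of_lt_of_le hr hε2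
      have h2 : |q| < 1/2 := lt_of_lt_of_le hq' hε2
      have h3 : |r * q| < 1/4 := by
        rw [abs_mul]; nlinarith [abs_nonneg r, abs_nonneg q]
      have h4 := neg_abs_le (r * q)
      linarith
    have a1 : AnalyticOnNhd ℝ (fun q => pd1 p r q) (Metric.ball (0:ℝ) ε) :=
      fun z hz => PA_q hNpd1 (memV r z hr ((mems z).mp hz))
    have a2 : AnalyticOnNhd ℝ (fun q => pd2 p r q) (Metric.ball (0:ℝ) ε) :=
      fun z hz => PA_q hNpd2p (memV r z hr ((mems z).mp hz))
    have a3 : AnalyticOnNhd ℝ (fun q => p r q) (Metric.ball (0:ℝ) ε) :=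
      fun z hz => PA_q hanal (memV r z hr ((mems z).mp hz))
    have A1 : AnalyticOnNhd ℝ (fun q : ℝ => r * pd1 p r q) (Metric.ball (0:ℝ) ε) :=
      fun z hz => analyticAt_const.mul (a1 z hz)
    have A2 : AnalyticOnNhd ℝ (fun q : ℝ => (-1:ℝ) * (q * pd2 p r q)) (Metric.ball (0:ℝ) ε) :=
      fun z hz => analyticAt_const.mul (analyticAt_id.mul (a2 z hz))
    have A3 : AnalyticOnNhd ℝ (fun q : ℝ => (-α) * p r q) (Metric.ball (0:ℝ) ε) :=
      fun z hz => analyticAt_const.mul (a3 z hz)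
    have A4 : AnalyticOnNhd ℝ (fun q : ℝ => β * (p r q * pd2 p r q)) (Metric.ball (0:ℝ) ε) :=
      fun z hz => analyticAt_const.mul ((a3 z hz).mul (a2 z hz))
    have key0 : deriv^[ℓ] (fun q : ℝ => r * pd1 p r q + (-1:ℝ) * (q * pd2 p r q)
          + (-α) * p r q + β * (p r q * pd2 p r q)) 0
        = deriv^[ℓ] (fun q : ℝ => C * (r ^ 2 / (1 + r ^ 3)) * (1 + r * q) ^ (-(1/2) : ℝ)) 0 := by
      apply evd_iter_eq _ ℓ
      apply eqOn_nhds hsopen _ h0s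
      intro q hq'
      have h := hpde r q hr ((mems q).mp hq')
      show r * pd1 p r q + (-1:ℝ) * (q * pd2 p r q) + (-α) * p r q + β * (p r q * pd2 p r q)
          = C * (r ^ 2 / (1 + r ^ 3)) * (1 + r * q) ^ (-(1/2) : ℝ)
      rw [← h]; ring
    have t1 : deriv^[ℓ] (fun q : ℝ => r * pd1 p r q) 0 = r * Wc p ℓ r :=
      congrFun (iter_deriv_const_mul r ℓ (fun q => pd1 p r q)) 0
    have hshift : ∀ m : ℕ, deriv^[m] (fun q : ℝ => pd2 p r q) 0 = Pc p (m+1) r := by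
      intro m
      have h1 : deriv^[m+1] (fun q : ℝ => p r q) 0 = deriv^[m] (deriv (fun q : ℝ => p r q)) 0 := by
        rw [Function.iterate_succ_apply]
      exact h1.symm
    have t2 : deriv^[ℓ] (fun q : ℝ => (-1:ℝ) * (q * pd2 p r q)) 0
        = (-1:ℝ) * ((ℓ:ℝ) * Pc p ℓ r) := by
      have c1 : deriv^[ℓ] (fun q : ℝ => (-1:ℝ) * (q * pd2 p r q)) 0
          = (-1:ℝ) * deriv^[ℓ] (fun q : ℝ => q * pd2 p r q) 0 :=
        congrFun (iter_deriv_const_mul (-1) ℓ (fun q : ℝ => q * pd2 p r q)) 0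
      have c2 : deriv^[ℓ] (fun q : ℝ => q * pd2 p r q) 0
          = (ℓ:ℝ) * deriv^[ℓ-1] (fun q : ℝ => pd2 p r q) 0 :=
        iter_deriv_id_mul hsopen h0s ℓ (fun q => pd2 p r q) a2
      have hll : ℓ - 1 + 1 = ℓ := by omega
      have c3 : deriv^[ℓ-1] (fun q : ℝ => pd2 p r q) 0 = Pc p ℓ r := by
        rw [hshift (ℓ-1), hll]
      rw [c1, c2, c3]
    have t3 : deriv^[ℓ] (fun q : ℝ => (-α) * p r q) 0 = (-α) * Pc p ℓ r :=
      congrFun (iter_deriv_const_mul (-α) ℓ (fun q => p r q)) 0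
    have t4 : deriv^[ℓ] (fun q : ℝ => β * (p r q * pd2 p r q)) 0
        = β * (∑ b ∈ Finset.range (ℓ+1), (ℓ.choose b : ℝ) * (Pc p b r * Pc p ((ℓ-b)+1) r)) := by
      have c1 : deriv^[ℓ] (fun q : ℝ => β * (p r q * pd2 p r q)) 0
          = β * deriv^[ℓ] (fun q : ℝ => p r q * pd2 p r q) 0 :=
        congrFun (iter_deriv_const_mul β ℓ (fun q : ℝ => p r q * pd2 p r q)) 0
      have c2 : deriv^[ℓ] (fun q : ℝ => p r q * pd2 p r q) 0
          = ∑ b ∈ Finset.range (ℓ+1), (ℓ.choose b : ℝ) *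
              (deriv^[b] (fun q : ℝ => p r q) 0 * deriv^[ℓ-b] (fun q : ℝ => pd2 p r q) 0) :=
        iter_deriv_mul hsopen ℓ (fun q => p r q) (fun q => pd2 p r q) a3 a2 0 h0s
      rw [c1, c2]
      rfl
    have hsum := iter_deriv_add4 hsopen ℓ (fun q : ℝ => r * pd1 p r q)
      (fun q : ℝ => (-1:ℝ) * (q * pd2 p r q)) (fun q : ℝ => (-α) * p r q)
      (fun q : ℝ => β * (p r q * pd2 p r q)) A1 A2 A3 A4 0 h0s
    have tR : deriv^[ℓ] (fun q : ℝ => C * (r ^ 2 / (1 + r ^ 3)) * (1 + r * q) ^ (-(1/2) : ℝ)) 0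
        = C * (r ^ 2 / (1 + r ^ 3)) * ((∏ i ∈ Finset.range ℓ, (-(1/2:ℝ) - i)) * r ^ ℓ) := by
      have c1 : deriv^[ℓ] (fun q : ℝ => C * (r ^ 2 / (1 + r ^ 3)) * (1 + r * q) ^ (-(1/2) : ℝ)) 0
          = (C * (r ^ 2 / (1 + r ^ 3)))
              * deriv^[ℓ] (fun q : ℝ => (1 + r * q) ^ (-(1/2) : ℝ)) 0 :=
        congrFun (iter_deriv_const_mul (C * (r ^ 2 / (1 + r ^ 3))) ℓ
          (fun q : ℝ => (1 + r * q) ^ (-(1/2) : ℝ))) 0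
      have c2 := iter_deriv_rpow_aff (-(1/2):ℝ) r hpos ℓ 0 habs0
      rw [c1, c2]
      norm_num
    calc r * Wc p ℓ r + (-1:ℝ) * ((ℓ:ℝ) * Pc p ℓ r) + (-α) * Pc p ℓ r
          + β * (∑ b ∈ Finset.range (ℓ+1), (ℓ.choose b : ℝ) * (Pc p b r * Pc p ((ℓ-b)+1) r))
        = deriv^[ℓ] (fun q : ℝ => r * pd1 p r q) 0
            + deriv^[ℓ] (fun q : ℝ => (-1:ℝ) * (q * pd2 p r q)) 0
            + deriv^[ℓ] (fun q : ℝ => (-α) * p r q) 0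
            + deriv^[ℓ] (fun q : ℝ => β * (p r q * pd2 p r q)) 0 := by
          rw [t1, t2, t3, t4]
      _ = deriv^[ℓ] (fun q : ℝ => r * pd1 p r q + (-1:ℝ) * (q * pd2 p r q)
            + (-α) * p r q + β * (p r q * pd2 p r q)) 0 := hsum.symm
      _ = deriv^[ℓ] (fun q : ℝ => C * (r ^ 2 / (1 + r ^ 3)) * (1 + r * q) ^ (-(1/2) : ℝ)) 0 := key0
      _ = C * (r ^ 2 / (1 + r ^ 3)) * ((∏ i ∈ Finset.range ℓ, (-(1/2:ℝ) - i)) * r ^ ℓ) := tR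
  -- r-level
  have hfuneq : (fun x => pd2^[ℓ] p x 0) = Pc p ℓ := by
    funext x
    exact (congrFun (pd2_iter ℓ p x) 0)
  have hWs : Set.EqOn (Wc p ℓ) (deriv (Pc p ℓ)) (Metric.ball (0:ℝ) ε) := by
    intro r hr
    have h1 : Wc p ℓ r = pd2^[ℓ] (pd1 p) r 0 := (congrFun (pd2_iter ℓ (pd1 p) r) 0).symm
    have h2 := swap_iter hVopen ℓ p hanal (r, 0) (memV r 0 ((mems r).mp hr) habs0)
    have h3 : pd1 (pd2^[ℓ] p) r 0 = deriv (Pc p ℓ) r := by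
      show deriv (fun x => pd2^[ℓ] p x 0) r = deriv (Pc p ℓ) r
      rw [hfuneq]
    calc Wc p ℓ r = pd2^[ℓ] (pd1 p) r 0 := h1
      _ = pd1 (pd2^[ℓ] p) r 0 := h2
      _ = deriv (Pc p ℓ) r := h3
  have hEq : Set.EqOn
      (fun r : ℝ => r * Wc p ℓ r + (-1:ℝ) * ((ℓ:ℝ) * Pc p ℓ r) + (-α) * Pc p ℓ r
        + β * (∑ b ∈ Finset.range (ℓ+1), (ℓ.choose b : ℝ) * (Pc p b r * Pc p ((ℓ-b)+1) r)))
      (fun r : ℝ => r ^ (ℓ+2)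
        * ((C * (∏ i ∈ Finset.range ℓ, (-(1/2:ℝ) - i))) * (1 + r ^ 3)⁻¹))
      (Metric.ball (0:ℝ) ε) := by
    intro r hr
    have h := hq r ((mems r).mp hr)
    show r * Wc p ℓ r + (-1:ℝ) * ((ℓ:ℝ) * Pc p ℓ r) + (-α) * Pc p ℓ r + _ = _
    rw [h, div_eq_mul_inv]
    ring
  have B1 : AnalyticOnNhd ℝ (fun r : ℝ => r * Wc p ℓ r) (Metric.ball (0:ℝ) ε) :=
    fun z hz => analyticAt_id.mul (hWanal z hz)
  have B2 : AnalyticOnNhd ℝ (fun r : ℝ => (-1:ℝ) * ((ℓ:ℝ) * Pc p ℓ r)) (Metric.ball (0:ℝ) ε) :=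
    fun z hz => analyticAt_const.mul (analyticAt_const.mul (hPanal ℓ z hz))
  have B3 : AnalyticOnNhd ℝ (fun r : ℝ => (-α) * Pc p ℓ r) (Metric.ball (0:ℝ) ε) :=
    fun z hz => analyticAt_const.mul (hPanal ℓ z hz)
  have B4 : AnalyticOnNhd ℝ (fun r : ℝ => β * (∑ b ∈ Finset.range (ℓ+1),
      (ℓ.choose b : ℝ) * (Pc p b r * Pc p ((ℓ-b)+1) r))) (Metric.ball (0:ℝ) ε) := by
    intro z hz
    apply analyticAt_const.mul
    apply Finset.analyticAt_fun_sum
    intro b _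
    exact analyticAt_const.mul ((hPanal b z hz).mul (hPanal ((ℓ-b)+1) z hz))
  have hL : deriv^[j] (fun r : ℝ => r * Wc p ℓ r + (-1:ℝ) * ((ℓ:ℝ) * Pc p ℓ r)
        + (-α) * Pc p ℓ r + β * (∑ b ∈ Finset.range (ℓ+1),
          (ℓ.choose b : ℝ) * (Pc p b r * Pc p ((ℓ-b)+1) r))) 0
      = deriv^[j] (fun r : ℝ => r ^ (ℓ+2)
        * ((C * (∏ i ∈ Finset.range ℓ, (-(1/2:ℝ) - i))) * (1 + r ^ 3)⁻¹)) 0 :=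
    evd_iter_eq (eqOn_nhds hsopen hEq h0s) j
  have hR0 : deriv^[j] (fun r : ℝ => r ^ (ℓ+2)
      * ((C * (∏ i ∈ Finset.range ℓ, (-(1/2:ℝ) - i))) * (1 + r ^ 3)⁻¹)) 0 = 0 := by
    apply iter_deriv_pow_mul j (ℓ+2)
        (fun r : ℝ => (C * (∏ i ∈ Finset.range ℓ, (-(1/2:ℝ) - i))) * (1 + r ^ 3)⁻¹) _ hjl
    apply analyticAt_const.mul
    apply AnalyticAt.inv
    · exact analyticAt_const.add (analyticAt_id.pow 3)
    · norm_num
  have hsplit := iter_deriv_add4 hsopen j (fun r : ℝ => r * Wc p ℓ r)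
    (fun r : ℝ => (-1:ℝ) * ((ℓ:ℝ) * Pc p ℓ r)) (fun r : ℝ => (-α) * Pc p ℓ r)
    (fun r : ℝ => β * (∑ b ∈ Finset.range (ℓ+1),
      (ℓ.choose b : ℝ) * (Pc p b r * Pc p ((ℓ-b)+1) r))) B1 B2 B3 B4 0 h0s
  -- compute the four r-level terms
  have d1 : deriv^[j] (fun r : ℝ => r * Wc p ℓ r) 0 = (j:ℝ) * deriv^[j] (Pc p ℓ) 0 := by
    rcases Nat.eq_zero_or_pos j with hj0 | hjpos
    · subst hj0; simp
    · have c1 : deriv^[j] (fun r : ℝ => r * Wc p ℓ r) 0 = (j:ℝ) * deriv^[j-1] (Wc p ℓ) 0 :=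
        iter_deriv_id_mul hsopen h0s j (Wc p ℓ) hWanal
      have c2 : deriv^[j-1] (Wc p ℓ) 0 = deriv^[j-1] (deriv (Pc p ℓ)) 0 :=
        evd_iter_eq (eqOn_nhds hsopen hWs h0s) (j-1)
      have c3 : deriv^[(j-1)+1] (Pc p ℓ) 0 = deriv^[j-1] (deriv (Pc p ℓ)) 0 := by
        rw [Function.iterate_succ_apply]
      have c4 : (j-1)+1 = j := by omega
      rw [c1, c2, ← c3, c4]
  have d2 : deriv^[j] (fun r : ℝ => (-1:ℝ) * ((ℓ:ℝ) * Pc p ℓ r)) 0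
      = (-1:ℝ) * ((ℓ:ℝ) * deriv^[j] (Pc p ℓ) 0) := by
    have c1 := congrFun (iter_deriv_const_mul (-1) j (fun r : ℝ => (ℓ:ℝ) * Pc p ℓ r)) 0
    have c2 := congrFun (iter_deriv_const_mul (ℓ:ℝ) j (Pc p ℓ)) 0
    rw [c1, c2]
  have d3 : deriv^[j] (fun r : ℝ => (-α) * Pc p ℓ r) 0 = (-α) * deriv^[j] (Pc p ℓ) 0 :=
    congrFun (iter_deriv_const_mul (-α) j (Pc p ℓ)) 0
  have d4 : deriv^[j] (fun r : ℝ => β * (∑ b ∈ Finset.range (ℓ+1),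
        (ℓ.choose b : ℝ) * (Pc p b r * Pc p ((ℓ-b)+1) r))) 0
      = β * (∑ b ∈ Finset.range (ℓ+1), (ℓ.choose b : ℝ) *
          ∑ a ∈ Finset.range (j+1), (j.choose a : ℝ) *
            (deriv^[a] (Pc p b) 0 * deriv^[j-a] (Pc p ((ℓ-b)+1)) 0)) := by
    have c1 := congrFun (iter_deriv_const_mul β j (fun r : ℝ => ∑ b ∈ Finset.range (ℓ+1),
      (ℓ.choose b : ℝ) * (Pc p b r * Pc p ((ℓ-b)+1) r))) 0
    rw [c1]
    congr 1
    have c2 := iter_deriv_sum hsopen (Finset.range (ℓ+1))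
      (fun b => fun r : ℝ => (ℓ.choose b : ℝ) * (Pc p b r * Pc p ((ℓ-b)+1) r))
      (fun b _ => fun z hz => analyticAt_const.mul ((hPanal b z hz).mul (hPanal ((ℓ-b)+1) z hz)))
      j 0 h0s
    rw [c2]
    apply Finset.sum_congr rfl
    intro b _
    have c3 := congrFun (iter_deriv_const_mul ((ℓ.choose b : ℝ)) j
      (fun r : ℝ => Pc p b r * Pc p ((ℓ-b)+1) r)) 0
    rw [c3]
    congr 1
    have c4 := iter_deriv_mul hsopen j (Pc p b) (Pc p ((ℓ-b)+1))
      (hPanal b) (hPanal ((ℓ-b)+1)) 0 h0s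
    rw [c4]
  rw [hsplit, hR0] at hL
  rw [d1, d2, d3, d4] at hL
  linarith [hL]

/-- For the analytic parameterization `p⁻(r,q)` of the unstable manifold, satisfying
`(r∂_r − q∂_q − n/(3−n))p⁻ + (3/(3−n))p⁻∂_q p⁻ = −(2/((3−n)k³))·(r²/(1+r³))·(1+rq)^{−1/2}`
near `(0,0)` with `p⁻(0,0) = 0`, `∂_r p⁻(0,0) = 0`, `∂_q p⁻(0,0) = 1`, all mixed
partial derivatives `∂_r^j ∂_q^ℓ p⁻(0,0)` with `j ≤ ℓ − 2` vanish. -/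
theorem unstable_manifold_vanishing_mixed_derivatives (n k : ℝ)
    (hn : n ∈ Set.Ioo (0 : ℝ) 3) (hk : 0 < k)
    (p : ℝ → ℝ → ℝ) (U : Set (ℝ × ℝ)) (hU : U ∈ 𝓝 ((0, 0) : ℝ × ℝ))
    (hanal : ∀ x ∈ U, AnalyticAt ℝ (fun y : ℝ × ℝ => p y.1 y.2) x)
    (hpde : ∀ x ∈ U,
      x.1 * pd1 p x.1 x.2 - x.2 * pd2 p x.1 x.2 - n / (3 - n) * p x.1 x.2
        + 3 / (3 - n) * p x.1 x.2 * pd2 p x.1 x.2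
      = -(2 / ((3 - n) * k ^ 3)) * (x.1 ^ 2 / (1 + x.1 ^ 3))
          * (1 + x.1 * x.2) ^ (-(1 / 2) : ℝ))
    (h0 : p 0 0 = 0) (h1r : pd1 p 0 0 = 0) (h1q : pd2 p 0 0 = 1) :
    ∀ j ℓ : ℕ, j + 2 ≤ ℓ →
      deriv^[j] (fun r => deriv^[ℓ] (fun q => p r q) 0) 0 = 0 := by
  -- extract a small ball inside U
  obtain ⟨ε0, hε0pos, hε0sub⟩ := Metric.mem_nhds_iff.mp hU
  set ε : ℝ := min ε0 (1/2) with hεdef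
  have hεpos : 0 < ε := lt_min hε0pos (by norm_num)
  have hεle : ε ≤ 1/2 := min_le_right _ _
  have hsub : Metric.ball ((0,0) : ℝ × ℝ) ε ⊆ U :=
    subset_trans (Metric.ball_subset_ball (min_le_left _ _)) hε0sub
  have memV : ∀ r q : ℝ, |r| < ε → |q| < ε →
      ((r,q) : ℝ×ℝ) ∈ Metric.ball ((0,0) : ℝ×ℝ) ε := by
    intro r q h1 h2
    rw [← ball_prod_same]
    exact ⟨by simpa [Real.dist_eq] using h1, by simpa [Real.dist_eq] using h2⟩
  have hanal' : AnalyticOnNhd ℝ (fun y : ℝ × ℝ => p y.1 y.2)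
      (Metric.ball ((0,0) : ℝ × ℝ) ε) := fun x hx => hanal x (hsub hx)
  have hpde' : ∀ r q : ℝ, |r| < ε → |q| < ε →
      r * pd1 p r q - q * pd2 p r q - (n / (3 - n)) * p r q
        + (3 / (3 - n)) * p r q * pd2 p r q
      = (-(2 / ((3 - n) * k ^ 3))) * (r ^ 2 / (1 + r ^ 3)) * (1 + r * q) ^ (-(1/2) : ℝ) :=
    fun r q h1 h2 => hpde (r, q) (hsub (memV r q h1 h2))
  -- base values
  have A00 : deriv^[0] (Pc p 0) 0 = 0 := h0
  have A01 : deriv^[0] (Pc p 1) 0 = 1 := h1q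
  have A10 : deriv^[1] (Pc p 0) 0 = 0 := h1r
  -- main induction
  have key : ∀ N : ℕ, ∀ j ℓ : ℕ, j + ℓ = N → j + 2 ≤ ℓ → deriv^[j] (Pc p ℓ) 0 = 0 := by
    intro N
    induction N using Nat.strong_induction_on with
    | _ N IH =>
    intro j ℓ hN hjl
    have IH' : ∀ a b : ℕ, a + b < j + ℓ → a + 2 ≤ b → deriv^[a] (Pc p b) 0 = 0 := by
      intro a b hab h2
      exact IH (a + b) (by omega) a b rfl h2
    have hM := master_eq (α := n / (3 - n)) (β := 3 / (3 - n))
      (C := -(2 / ((3 - n) * k ^ 3))) hεpos hεle hanal' hpde' j ℓ (by omega) (by omega)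
    have hterm : ∀ b ∈ Finset.range (ℓ+1), ∀ a ∈ Finset.range (j+1),
        (j.choose a : ℝ) * (deriv^[a] (Pc p b) 0 * deriv^[j-a] (Pc p ((ℓ-b)+1)) 0)
        = (if b = 1 then (if a = 0 then deriv^[j] (Pc p ℓ) 0 else 0) else 0)
          + (if b = ℓ then (if a = j then deriv^[j] (Pc p ℓ) 0 else 0) else 0) := by
      intro b hb a ha
      rw [Finset.mem_range] at hb ha
      have hb' : b ≤ ℓ := by omega
      have ha' : a ≤ j := by omega
      by_cases hb1 : b = 1
      · subst hb1
        have hl1 : ℓ - 1 + 1 = ℓ := by omega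
        by_cases ha0 : a = 0
        · subst ha0
          rw [hl1]
          simp [A01, show (1:ℕ) ≠ ℓ by omega]
        · have h2 : deriv^[j-a] (Pc p ((ℓ-1)+1)) 0 = 0 := by
            rw [hl1]
            exact IH' (j-a) ℓ (by omega) (by omega)
          rw [h2]
          simp [ha0, show (1:ℕ) ≠ ℓ by omega]
      · by_cases hbl : b = ℓ
        · subst hbl
          by_cases haj : a = j
          · subst haj
            have he : (b - b) + 1 = 1 := by omega
            rw [he]
            simp [A01, Nat.sub_self, hb1]
          · have h2 : deriv^[a] (Pc p b) 0 = 0 := IH' a b (by omega) (by omega)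
            rw [h2]
            simp [haj, hb1]
        · -- b ∉ {1, ℓ}
          have hz : (j.choose a : ℝ) * (deriv^[a] (Pc p b) 0
              * deriv^[j-a] (Pc p ((ℓ-b)+1)) 0) = 0 := by
            by_cases hb0 : b = 0
            · subst hb0
              by_cases ha0 : a = 0
              · subst ha0; rw [A00]; ring
              · by_cases ha1 : a = 1
                · subst ha1; rw [A10]; ring
                · have h2 : deriv^[j-a] (Pc p ((ℓ-0)+1)) 0 = 0 :=
                    IH' (j-a) ((ℓ-0)+1) (by omega) (by omega)
                  rw [h2]; ring
            · by_cases hba : a + 2 ≤ b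
              · have h2 : deriv^[a] (Pc p b) 0 = 0 := IH' a b (by omega) (by omega)
                rw [h2]; ring
              · have h2 : deriv^[j-a] (Pc p ((ℓ-b)+1)) 0 = 0 :=
                  IH' (j-a) ((ℓ-b)+1) (by omega) (by omega)
                rw [h2]; ring
          rw [hz]
          simp [hb1, hbl]
    have hinner : ∀ b ∈ Finset.range (ℓ+1),
        (ℓ.choose b : ℝ) * ∑ a ∈ Finset.range (j+1), (j.choose a : ℝ) *
            (deriv^[a] (Pc p b) 0 * deriv^[j-a] (Pc p ((ℓ-b)+1)) 0)
        = (if b = 1 then (ℓ:ℝ) * deriv^[j] (Pc p ℓ) 0 else 0)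
          + (if b = ℓ then deriv^[j] (Pc p ℓ) 0 else 0) := by
      intro b hb
      rw [Finset.sum_congr rfl (hterm b hb), Finset.sum_add_distrib]
      by_cases hb1 : b = 1
      · subst hb1
        simp [Finset.sum_ite_eq', show (1:ℕ) ≠ ℓ by omega, Nat.choose_one_right]
      · by_cases hbl : b = ℓ
        · subst hbl
          simp [Finset.sum_ite_eq', hb1, Nat.choose_self]
        · simp [hb1, hbl]
    have hsum : ∑ b ∈ Finset.range (ℓ+1), (ℓ.choose b : ℝ) *
          ∑ a ∈ Finset.range (j+1), (j.choose a : ℝ) *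
            (deriv^[a] (Pc p b) 0 * deriv^[j-a] (Pc p ((ℓ-b)+1)) 0)
        = ((ℓ:ℝ) + 1) * deriv^[j] (Pc p ℓ) 0 := by
      rw [Finset.sum_congr rfl hinner, Finset.sum_add_distrib]
      have m1 : (1:ℕ) ∈ Finset.range (ℓ+1) := by simp; omega
      have m2 : ℓ ∈ Finset.range (ℓ+1) := by simp
      rw [Finset.sum_ite_eq' (Finset.range (ℓ+1)) 1
          (fun _ => (ℓ:ℝ) * deriv^[j] (Pc p ℓ) 0),
        Finset.sum_ite_eq' (Finset.range (ℓ+1)) ℓ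
          (fun _ => deriv^[j] (Pc p ℓ) 0), if_pos m1, if_pos m2]
      ring
    rw [hsum] at hM
    have hcoef : ((j:ℝ) - ℓ - n/(3-n) + (3/(3-n)) * ((ℓ:ℝ)+1)) * deriv^[j] (Pc p ℓ) 0 = 0 := by
      linear_combination hM
    have h3n : (0:ℝ) < 3 - n := by linarith [hn.2]
    have hne : ((j:ℝ) - ℓ - n/(3-n) + (3/(3-n)) * ((ℓ:ℝ)+1)) ≠ 0 := by
      have hcast : (j:ℝ) + 2 ≤ (ℓ:ℝ) := by exact_mod_cast hjl
      have hpos : ((j:ℝ) - ℓ - n/(3-n) + (3/(3-n)) * ((ℓ:ℝ)+1)) * (3-n)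
          = 3*(j:ℝ) + n*((ℓ:ℝ)-(j:ℝ)-1) + 3 := by
        field_simp
        ring
      have hb : 0 < 3*(j:ℝ) + n*((ℓ:ℝ)-(j:ℝ)-1) + 3 := by
        have h1 : (1:ℝ) ≤ (ℓ:ℝ)-(j:ℝ)-1 := by linarith
        have h2 := hn.1
        nlinarith [Nat.cast_nonneg (α := ℝ) j]
      intro hzero
      rw [hzero, zero_mul] at hpos
      linarith
    rcases mul_eq_zero.mp hcoef with h | h
    · exact absurd h hne
    · exact h
  intro j ℓ hjl
  exact key (j + ℓ) j ℓ rfl hjl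
end

section
/- Let n ∈ (0,3), k > 0, and let g(ϱ,μ) be real-analytic in a neighborhood of (0,0) with g(0,0) = 0, ∂_ϱ g(0,0) = 0, and ∂_μ g(0,0) = 0. Suppose μ : (0,ε) → ℝ is continuously differentiable, (H^{3−n}, μ(H)) lies in the domain of analyticity of g for 0 < H < ε, μ satisfies H·μ'(H) − μ(H) = g(H^{3−n}, μ(H)) − (2/(3k³(3−n)))·H^{3−n} on (0,ε), and H^{−δ}·μ(H) → 0 as H ↓ 0 for some δ > 0. Then, as H ↓ 0: μ(H) = O(H) if 0 < n < 2, μ(H) = O(−H·ln H) if n = 2, and μ(H) = O(H^{3−n}) if 2 < n < 3. -/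
open Filter Topology Set Asymptotics

lemma absDiff_le (φ F φd Fd : ℝ → ℝ) {a b : ℝ} (hab : a ≤ b)
    (hφ : ∀ x ∈ Set.Icc a b, HasDerivAt φ (φd x) x)
    (hF : ∀ x ∈ Set.Icc a b, HasDerivAt F (Fd x) x)
    (hle : ∀ x ∈ Set.Icc a b, |φd x| ≤ Fd x) :
    |φ a| ≤ |φ b| + (F b - F a) := by
  have key : ∀ s : ℝ, (s = 1 ∨ s = -1) → F a + s * φ a ≤ F b + s * φ b := by
    intro s hs
    have hmono : MonotoneOn (fun x => F x + s * φ x) (Set.Icc a b) := by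
      apply monotoneOn_of_deriv_nonneg (convex_Icc a b)
      · exact fun x hx => ((hF x hx).add ((hφ x hx).const_mul s)).continuousAt.continuousWithinAt
      · intro x hx
        rw [interior_Icc] at hx
        exact ((hF x (Set.Ioo_subset_Icc_self hx)).add
          ((hφ x (Set.Ioo_subset_Icc_self hx)).const_mul s)).differentiableAt.differentiableWithinAt
      · intro x hx
        rw [interior_Icc] at hx
        have hx' := Set.Ioo_subset_Icc_self hx
        rw [(show HasDerivAt (fun x => F x + s * φ x) _ x from (hF x hx').add ((hφ x hx').const_mul s)).deriv]
        have := abs_le.mp (hle x hx')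
        rcases hs with h | h <;> subst h <;> nlinarith [this.1, this.2]
    exact hmono ⟨le_rfl, hab⟩ ⟨hab, le_rfl⟩ hab
  have h1 := key 1 (Or.inl rfl)
  have h2 := key (-1) (Or.inr rfl)
  have h3 : |φ a - φ b| ≤ F b - F a := by
    rw [abs_le]; constructor <;> nlinarith
  have h4 := abs_sub_abs_le_abs_sub (φ a) (φ b)
  linarith



lemma step_bound (ε : ℝ) (hε : 0 < ε) (μ R : ℝ → ℝ)
    (hd : ∀ H ∈ Set.Ioo (0:ℝ) ε, HasDerivAt (fun s => μ s / s) (R H / H ^ 2) H)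
    {B α : ℝ} (hα : 0 < α) (hB : 0 ≤ B)
    (hR : ∀ᶠ H in 𝓝[>] (0:ℝ), |R H| ≤ B * H ^ α) :
    ∃ K ≥ 0, ∀ᶠ H in 𝓝[>] (0:ℝ),
      |μ H| ≤ K * (if α < 1 then H ^ α else if α = 1 then H * (1 - Real.log H) else H) := by
  rw [eventually_iff, mem_nhdsGT_iff_exists_Ioc_subset] at hR
  obtain ⟨u, hu, hsub⟩ := hR
  rw [Set.mem_Ioi] at hu
  set H₀ : ℝ := min u (min (ε/2) 1) with hH₀def
  have hH₀pos : 0 < H₀ := lt_min hu (lt_min (by linarith) one_pos)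
  have hH₀ε : H₀ < ε := lt_of_le_of_lt (le_trans (min_le_right _ _) (min_le_left _ _)) (by linarith)
  have hH₀1 : H₀ ≤ 1 := le_trans (min_le_right _ _) (min_le_right _ _)
  have hH₀u : H₀ ≤ u := min_le_left _ _
  -- the basic estimate valid in each case
  have main : ∀ F Fd : ℝ → ℝ,
      (∀ s ∈ Set.Icc (0:ℝ) H₀ \ {0}, HasDerivAt F (Fd s) s) →
      (∀ s ∈ Set.Ioc (0:ℝ) H₀, B * s ^ (α - 2) ≤ Fd s) →
      ∀ H ∈ Set.Ioc (0:ℝ) H₀, |μ H / H| ≤ |μ H₀ / H₀| + (F H₀ - F H) := by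
    intro F Fd hF hFd H hH
    apply absDiff_le (fun s => μ s / s) F (fun s => R s / s ^ 2) Fd hH.2
    · intro x hx
      have hx1 : 0 < x := lt_of_lt_of_le hH.1 hx.1
      exact hd x ⟨hx1, lt_of_le_of_lt hx.2 hH₀ε⟩
    · intro x hx
      have hx1 : 0 < x := lt_of_lt_of_le hH.1 hx.1
      exact hF x ⟨⟨le_of_lt hx1, hx.2⟩, fun h => absurd h (ne_of_gt hx1)⟩
    · intro x hx
      have hx1 : 0 < x := lt_of_lt_of_le hH.1 hx.1
      have hRx : |R x| ≤ B * x ^ α := hsub ⟨hx1, le_trans hx.2 hH₀u⟩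
      have hx2 : (0:ℝ) < x ^ 2 := by positivity
      calc |R x / x ^ 2| = |R x| / x ^ 2 := by rw [abs_div, abs_of_pos hx2]
        _ ≤ B * x ^ α / x ^ 2 := by gcongr
        _ = B * x ^ (α - 2) := by
            rw [Real.rpow_sub hx1, mul_div_assoc]
            congr 2
            rw [← Real.rpow_natCast x 2]; norm_num
        _ ≤ Fd x := hFd x ⟨hx1, hx.2⟩
  -- derivative of the comparison function when α ≠ 1
  have hFrpow : α ≠ 1 → ∀ s ∈ Set.Icc (0:ℝ) H₀ \ {0},
      HasDerivAt (fun s : ℝ => B/(α-1) * s^(α-1)) (B * s^(α-2)) s := by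
    intro hne s hs
    have hs0 : s ≠ 0 := hs.2
    have h := (Real.hasDerivAt_rpow_const (x := s) (p := α-1) (Or.inl hs0)).const_mul (B/(α-1))
    refine h.congr_deriv ?_
    rw [show α - 1 - 1 = α - 2 by ring]
    have : α - 1 ≠ 0 := sub_ne_zero.mpr hne
    field_simp
  have hmem : Set.Ioc (0:ℝ) H₀ ∈ 𝓝[>] (0:ℝ) := Ioc_mem_nhdsGT_of_mem ⟨le_rfl, hH₀pos⟩
  rcases lt_trichotomy α 1 with hα1 | hα1 | hα1
  · -- α < 1
    refine ⟨|μ H₀ / H₀| * H₀ ^ (1-α) + B/(1-α), ?_, ?_⟩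
    · apply add_nonneg
      · positivity
      · exact div_nonneg hB (by linarith)
    filter_upwards [hmem] with H hH
    rw [if_pos hα1]
    have hm := main _ _ (hFrpow (ne_of_lt hα1)) (fun s _ => le_rfl) H hH
    have hH1 : 0 < H := hH.1
    have hHH₀ : H ≤ H₀ := hH.2
    have e1 : B/(α-1) * H₀^(α-1) - B/(α-1) * H^(α-1)
        = B/(1-α) * (H^(α-1) - H₀^(α-1)) := by
      have hne : α - 1 ≠ 0 := sub_ne_zero.mpr (ne_of_lt hα1)
      have hne2 : 1 - α ≠ 0 := sub_ne_zero.mpr (ne_of_gt hα1)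
      field_simp
      ring
    have e2 : B/(1-α) * (H^(α-1) - H₀^(α-1)) ≤ B/(1-α) * H^(α-1) := by
      have h1 : 0 ≤ B/(1-α) := div_nonneg hB (by linarith)
      have h2 : 0 ≤ H₀ ^ (α-1) := Real.rpow_nonneg hH₀pos.le _
      nlinarith
    have hiner : |μ H / H| ≤ |μ H₀ / H₀| + B/(1-α) * H^(α-1) := by
      rw [e1] at hm; linarith
    have hμeq : |μ H| = |μ H / H| * H := by
      rw [abs_div, abs_of_pos hH1, div_mul_cancel₀]
      exact hH1.ne'
    rw [hμeq]
    have hr1 : H ^ (α-1) * H = H ^ α := by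
      nth_rewrite 2 [show α = α - 1 + 1 by ring]
      rw [Real.rpow_add_one hH1.ne']
    have hr2 : H ≤ H₀ ^ (1-α) * H ^ α := by
      have h0 : H = H ^ α * H ^ (1-α) := by
        rw [← Real.rpow_add hH1, show α + (1-α) = 1 by ring, Real.rpow_one]
      have h3 : H ^ (1-α) ≤ H₀ ^ (1-α) := Real.rpow_le_rpow hH1.le hHH₀ (by linarith)
      have h4 : 0 ≤ H ^ α := Real.rpow_nonneg hH1.le _
      calc H = H ^ α * H ^ (1-α) := h0
        _ ≤ H ^ α * H₀ ^ (1-α) := mul_le_mul_of_nonneg_left h3 h4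
        _ = H₀ ^ (1-α) * H ^ α := by ring
    have habs : 0 ≤ |μ H₀ / H₀| := abs_nonneg _
    have h5 : 0 ≤ H ^ α := Real.rpow_nonneg hH1.le _
    have h6 : 0 ≤ B/(1-α) := div_nonneg hB (by linarith)
    calc |μ H / H| * H ≤ (|μ H₀ / H₀| + B/(1-α) * H^(α-1)) * H := by nlinarith [hH1.le]
      _ = |μ H₀ / H₀| * H + B/(1-α) * (H^(α-1) * H) := by ring
      _ ≤ |μ H₀ / H₀| * (H₀ ^ (1-α) * H ^ α) + B/(1-α) * H ^ α := by
          rw [hr1]; nlinarith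
      _ = (|μ H₀ / H₀| * H₀ ^ (1-α) + B/(1-α)) * H ^ α := by ring
  · -- α = 1
    subst hα1
    refine ⟨|μ H₀ / H₀| + B, by positivity, ?_⟩
    filter_upwards [hmem] with H hH
    have hif : (if (1:ℝ) < 1 then H ^ (1:ℝ) else if (1:ℝ) = 1 then H * (1 - Real.log H) else H)
        = H * (1 - Real.log H) := by norm_num
    rw [hif]
    have hH1 : 0 < H := hH.1
    have hF : ∀ s ∈ Set.Icc (0:ℝ) H₀ \ {0},
        HasDerivAt (fun s : ℝ => B * Real.log s) (B * s ^ ((1:ℝ)-2)) s := by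
      intro s hs
      have h := (Real.hasDerivAt_log hs.2).const_mul B
      refine h.congr_deriv ?_
      rw [show (1:ℝ) - 2 = -1 by norm_num, Real.rpow_neg_one]
    have hm := main _ _ hF (fun s _ => le_rfl) H hH
    have hlogH : Real.log H ≤ 0 := Real.log_nonpos hH1.le (le_trans hH.2 hH₀1)
    have hlogH₀ : Real.log H₀ ≤ 0 := Real.log_nonpos hH₀pos.le hH₀1
    have hiner : |μ H / H| ≤ |μ H₀ / H₀| + B * (- Real.log H) := by nlinarith
    have hμeq : |μ H| = |μ H / H| * H := by
      rw [abs_div, abs_of_pos hH1, div_mul_cancel₀]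
      exact hH1.ne'
    rw [hμeq]
    have habs : 0 ≤ |μ H₀ / H₀| := abs_nonneg _
    nlinarith [mul_le_mul_of_nonneg_right hiner hH1.le,
      mul_nonneg habs (mul_nonneg hH1.le (neg_nonneg.mpr hlogH)), mul_nonneg hB hH1.le]
  · -- 1 < α
    refine ⟨|μ H₀ / H₀| + B/(α-1) * H₀^(α-1), ?_, ?_⟩
    · have : 0 ≤ B/(α-1) := div_nonneg hB (by linarith)
      have := Real.rpow_nonneg hH₀pos.le (α-1)
      positivity
    filter_upwards [hmem] with H hH
    rw [if_neg (by linarith), if_neg (by linarith)]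
    have hH1 : 0 < H := hH.1
    have hm := main _ _ (hFrpow (ne_of_gt hα1)) (fun s _ => le_rfl) H hH
    have h1 : 0 ≤ B/(α-1) := div_nonneg hB (by linarith)
    have h2 : 0 ≤ H ^ (α-1) := Real.rpow_nonneg hH1.le _
    have hiner : |μ H / H| ≤ |μ H₀ / H₀| + B/(α-1) * H₀^(α-1) := by nlinarith
    have hμeq : |μ H| = |μ H / H| * H := by
      rw [abs_div, abs_of_pos hH1, div_mul_cancel₀]
      exact hH1.ne'
    rw [hμeq]
    have habs : 0 ≤ |μ H₀ / H₀| := abs_nonneg _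
    have h3 : 0 ≤ H₀ ^ (α-1) := Real.rpow_nonneg hH₀pos.le _
    nlinarith [abs_nonneg (μ H / H)]


lemma analytic_quad (f : ℝ × ℝ → ℝ) (hf : AnalyticAt ℝ f 0) (h0 : f 0 = 0)
    (h1 : fderiv ℝ f 0 = 0) :
    ∃ r > 0, ∃ C ≥ 0, ∀ q : ℝ × ℝ, ‖q‖ ≤ r → |f q| ≤ C * ‖q‖ ^ 2 := by
  obtain ⟨p, hp⟩ := hf
  have h2 := hp.isBigO_sub_partialSum_pow 2
  have hps : ∀ y : ℝ × ℝ, p.partialSum 2 y = 0 := by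
    intro y
    have e0 : p 0 (fun _ => y) = 0 := by rw [hp.coeff_zero]; exact h0
    have e1 : (p 1) (fun _ => y) = 0 := by
      have h3 : continuousMultilinearCurryFin1 ℝ (ℝ × ℝ) ℝ (p 1) y = 0 := by
        rw [← hp.fderiv_eq, h1]; rfl
      simpa [Matrix.vec_single_eq_const] using h3
    simp [FormalMultilinearSeries.partialSum, Finset.sum_range_succ, e0, e1]
  have h4 : (fun y : ℝ × ℝ => f y) =O[𝓝 0] fun y => ‖y‖ ^ 2 := by
    have := h2
    simp only [zero_add, hps, sub_zero] at this
    exact this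
  obtain ⟨C, hC⟩ := h4.bound
  rw [Metric.eventually_nhds_iff] at hC
  obtain ⟨r, hr, hball⟩ := hC
  refine ⟨r/2, by linarith, |C|, abs_nonneg _, fun q hq => ?_⟩
  have hq' : dist q 0 < r := by
    rw [dist_zero_right]; linarith
  have := hball hq'
  simp only [norm_pow, Real.norm_eq_abs, norm_norm] at this
  calc |f q| ≤ C * ‖q‖ ^ 2 := by simpa using this
    _ ≤ |C| * ‖q‖ ^ 2 := by
        have : C ≤ |C| := le_abs_self C
        nlinarith [sq_nonneg ‖q‖]


set_option maxHeartbeats 2000000 in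
lemma g_quad (g : ℝ → ℝ → ℝ) (U : Set (ℝ × ℝ)) (hU : U ∈ 𝓝 ((0, 0) : ℝ × ℝ))
    (hanal : ∀ x ∈ U, AnalyticAt ℝ (fun y : ℝ × ℝ => g y.1 y.2) x)
    (hg0 : g 0 0 = 0) (hg1 : pd1 g 0 0 = 0) (hg2 : pd2 g 0 0 = 0) :
    ∃ r > 0, ∃ C ≥ 0, ∀ x y : ℝ, |x| ≤ r → |y| ≤ r → |g x y| ≤ C * (x ^ 2 + y ^ 2) := by
  set f : ℝ × ℝ → ℝ := fun y => g y.1 y.2 with hfdef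
  have h00 : ((0, 0) : ℝ × ℝ) ∈ U := mem_of_mem_nhds hU
  have hA : AnalyticAt ℝ f (0, 0) := hanal _ h00
  have hdf : DifferentiableAt ℝ f (0, 0) := hA.differentiableAt
  have hD1 : fderiv ℝ f (0, 0) ((1:ℝ), (0:ℝ)) = 0 := by
    have hline : HasDerivAt (fun x : ℝ => ((x, (0:ℝ)) : ℝ × ℝ)) (1, 0) 0 :=
      (hasDerivAt_id (0:ℝ)).prodMk (hasDerivAt_const (0:ℝ) (0:ℝ))
    have h := HasFDerivAt.comp_hasDerivAt_of_eq (x := (0:ℝ)) hdf.hasFDerivAt hline (by norm_num)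
    have h' : HasDerivAt (fun x : ℝ => g x 0) (fderiv ℝ f (0, 0) ((1:ℝ), (0:ℝ))) 0 := by
      simpa [Function.comp_def, hfdef] using h
    rw [← h'.deriv]
    exact hg1
  have hD2 : fderiv ℝ f (0, 0) ((0:ℝ), (1:ℝ)) = 0 := by
    have hline : HasDerivAt (fun y : ℝ => (((0:ℝ), y) : ℝ × ℝ)) (0, 1) 0 :=
      (hasDerivAt_const (0:ℝ) (0:ℝ)).prodMk (hasDerivAt_id (0:ℝ))
    have h := HasFDerivAt.comp_hasDerivAt_of_eq (x := (0:ℝ)) hdf.hasFDerivAt hline (by norm_num)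
    have h' : HasDerivAt (fun y : ℝ => g 0 y) (fderiv ℝ f (0, 0) ((0:ℝ), (1:ℝ))) 0 := by
      simpa [Function.comp_def, hfdef] using h
    rw [← h'.deriv]
    exact hg2
  have hDzero : fderiv ℝ f (0, 0) = 0 := by
    apply ContinuousLinearMap.ext
    intro v
    have hv : v = v.1 • ((1:ℝ), (0:ℝ)) + v.2 • ((0:ℝ), (1:ℝ)) := by
      ext <;> simp
    rw [hv, map_add, map_smul, map_smul, hD1, hD2]
    simp
  have h0 : f 0 = 0 := hg0
  have hA0 : AnalyticAt ℝ f 0 := hA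
  have hf0 : fderiv ℝ f 0 = 0 := hDzero
  obtain ⟨r, hr, C, hC, hquad⟩ := analytic_quad f hA0 h0 hf0
  refine ⟨r, hr, C, hC, fun x y hx hy => ?_⟩
  have hnorm : ‖((x, y) : ℝ × ℝ)‖ = max |x| |y| := by
    rw [Prod.norm_def, Real.norm_eq_abs, Real.norm_eq_abs]
  have h1 : ‖((x, y) : ℝ × ℝ)‖ ≤ r := by rw [hnorm]; exact max_le hx hy
  have h2 : ‖((x, y) : ℝ × ℝ)‖ ^ 2 ≤ x ^ 2 + y ^ 2 := by
    rw [hnorm]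
    rcases max_cases |x| |y| with ⟨h, _⟩ | ⟨h, _⟩ <;> rw [h] <;> nlinarith [sq_nonneg x, sq_nonneg y, sq_abs x, sq_abs y]
  calc |g x y| = |f (x, y)| := by rw [hfdef]
    _ ≤ C * ‖((x, y) : ℝ × ℝ)‖ ^ 2 := hquad _ h1
    _ ≤ C * (x ^ 2 + y ^ 2) := by nlinarith


def BndAux (μ : ℝ → ℝ) (γ : ℝ) : Prop :=
  ∃ K, 0 ≤ K ∧ ∀ᶠ H in 𝓝[>] (0:ℝ), |μ H| ≤ K * H ^ γ

lemma BndAux.mono {μ : ℝ → ℝ} {γ γ' : ℝ} (h : BndAux μ γ) (hle : γ' ≤ γ) :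
    BndAux μ γ' := by
  obtain ⟨K, hK, hev⟩ := h
  refine ⟨K, hK, ?_⟩
  filter_upwards [hev, Ioo_mem_nhdsGT_of_mem (Set.left_mem_Ico.mpr one_pos)] with H hb hH
  refine hb.trans (mul_le_mul_of_nonneg_left ?_ hK)
  exact Real.rpow_le_rpow_of_exponent_ge hH.1 hH.2.le hle


-- tendsto of rpow at 0+
lemma rpow_tendsto {m : ℝ} (hm : 0 < m) :
    Tendsto (fun H : ℝ => H ^ m) (𝓝[>] (0:ℝ)) (𝓝 0) := by
  have h := (Real.continuousAt_rpow_const 0 m (Or.inr hm.le)).tendsto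
  rw [Real.zero_rpow hm.ne'] at h
  exact h.mono_left nhdsWithin_le_nhds

set_option maxHeartbeats 1000000 in
/-- A priori bounds as `H ↓ 0` for solutions `μ` of the first-order ODE
`H·μ'(H) − μ(H) = g(H^{3−n}, μ(H)) − (2/(3k³(3−n)))·H^{3−n}` on the unstable manifold,
with `g` real-analytic near `(0,0)` and vanishing together with its first partial
derivatives, provided `H^{−δ}·μ(H) → 0` as `H ↓ 0` for some `δ > 0`:
`μ = O(H)` if `0 < n < 2`, `μ = O(−H ln H)` if `n = 2`, `μ = O(H^{3−n})` if `2 < n < 3`. -/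
theorem unstable_manifold_solution_bounds (n k ε : ℝ) (hn : n ∈ Set.Ioo (0 : ℝ) 3)
    (hk : 0 < k) (hε : 0 < ε)
    (g : ℝ → ℝ → ℝ) (U : Set (ℝ × ℝ)) (hU : U ∈ 𝓝 ((0, 0) : ℝ × ℝ))
    (hanal : ∀ x ∈ U, AnalyticAt ℝ (fun y : ℝ × ℝ => g y.1 y.2) x)
    (hg0 : g 0 0 = 0) (hg1 : pd1 g 0 0 = 0) (hg2 : pd2 g 0 0 = 0)
    (μ : ℝ → ℝ) (hμreg : ContDiffOn ℝ 1 μ (Set.Ioo 0 ε))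
    (hdom : ∀ H ∈ Set.Ioo (0 : ℝ) ε, (H ^ (3 - n), μ H) ∈ U)
    (hode : ∀ H ∈ Set.Ioo (0 : ℝ) ε,
      H * deriv μ H - μ H
        = g (H ^ (3 - n)) (μ H) - 2 / (3 * k ^ 3 * (3 - n)) * H ^ (3 - n))
    (hδ : ∃ δ > (0 : ℝ), Tendsto (fun H => H ^ (-δ) * μ H) (𝓝[>] (0 : ℝ)) (𝓝 0)) :
    (n < 2 → μ =O[𝓝[>] (0 : ℝ)] fun H => H) ∧
    (n = 2 → μ =O[𝓝[>] (0 : ℝ)] fun H => -(H * Real.log H)) ∧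
    (2 < n → μ =O[𝓝[>] (0 : ℝ)] fun H => H ^ (3 - n)) := by
  set m : ℝ := 3 - n with hmdef
  have hm0 : 0 < m := by simp only [hmdef]; linarith [hn.2]
  set c : ℝ := 2 / (3 * k ^ 3 * (3 - n)) with hcdef
  set R : ℝ → ℝ := fun H => g (H ^ m) (μ H) - c * H ^ m with hRdef
  -- derivative of μ/H
  have hd : ∀ H ∈ Set.Ioo (0:ℝ) ε, HasDerivAt (fun s => μ s / s) (R H / H ^ 2) H := by
    intro H hH
    have hH0 : (0:ℝ) < H := hH.1
    have hμdiff : DifferentiableAt ℝ μ H :=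
      ((hμreg.differentiableOn one_ne_zero).differentiableAt (isOpen_Ioo.mem_nhds hH))
    have h1 : HasDerivAt μ (deriv μ H) H := hμdiff.hasDerivAt
    have h2 : HasDerivAt (fun s : ℝ => s) 1 H := hasDerivAt_id H
    have h3 := h1.div h2 hH0.ne'
    have heq : (deriv μ H * H - μ H * 1) / H ^ 2 = R H / H ^ 2 := by
      rw [hRdef]
      simp only
      rw [← hode H hH]
      ring_nf
    rw [heq] at h3
    exact h3
  -- quadratic bound for g
  obtain ⟨r, hr, C, hC, hquad⟩ := g_quad g U hU hanal hg0 hg1 hg2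
  -- bound for R given a bound for μ
  have hRbnd : ∀ γ : ℝ, 0 < γ → BndAux μ γ →
      ∃ B, 0 ≤ B ∧ ∀ᶠ H in 𝓝[>] (0:ℝ), |R H| ≤ B * H ^ min (γ + γ) m := by
    intro γ hγ ⟨K, hK, hev⟩
    refine ⟨C * (1 + K ^ 2) + |c|, by positivity, ?_⟩
    have hev2 : ∀ᶠ H in 𝓝[>] (0:ℝ), H ^ m < r :=
      (rpow_tendsto hm0).eventually_lt_const hr
    have hev3 : ∀ᶠ H in 𝓝[>] (0:ℝ), K * H ^ γ < r := by
      have h := ((rpow_tendsto hγ).const_mul K)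
      rw [mul_zero] at h
      exact h.eventually_lt_const hr
    filter_upwards [hev, hev2, hev3,
      Ioo_mem_nhdsGT_of_mem (Set.left_mem_Ico.mpr one_pos)] with H hb h2 h3 hH
    have hH0 : (0:ℝ) < H := hH.1
    have hH1 : H ≤ 1 := hH.2.le
    have hx : |H ^ m| ≤ r := by
      rw [abs_of_pos (Real.rpow_pos_of_pos hH0 m)]; exact h2.le
    have hy : |μ H| ≤ r := hb.trans h3.le
    have hg := hquad (H ^ m) (μ H) hx hy
    -- exponent comparisons
    have hmono : ∀ a : ℝ, min (γ + γ) m ≤ a → H ^ a ≤ H ^ min (γ + γ) m :=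
      fun a ha => Real.rpow_le_rpow_of_exponent_ge hH0 hH1 ha
    have e1 : (H ^ m) ^ 2 ≤ H ^ min (γ + γ) m := by
      rw [← Real.rpow_natCast (H ^ m) 2, ← Real.rpow_mul hH0.le]
      apply hmono
      have := min_le_right (γ + γ) m
      push_cast
      nlinarith [hm0]
    have e2 : (μ H) ^ 2 ≤ K ^ 2 * H ^ min (γ + γ) m := by
      have h4 : (μ H) ^ 2 ≤ (K * H ^ γ) ^ 2 := by
        rw [← sq_abs (μ H)]
        apply pow_le_pow_left₀ (abs_nonneg _) hb
      have h5 : (H ^ γ) ^ 2 = H ^ (γ + γ) := by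
        rw [← Real.rpow_natCast (H ^ γ) 2, ← Real.rpow_mul hH0.le]
        congr 1
        push_cast; ring
      have h6 : H ^ (γ + γ) ≤ H ^ min (γ + γ) m := hmono _ (min_le_left _ _)
      calc (μ H) ^ 2 ≤ (K * H ^ γ) ^ 2 := h4
        _ = K ^ 2 * H ^ (γ + γ) := by rw [mul_pow, h5]
        _ ≤ K ^ 2 * H ^ min (γ + γ) m := by nlinarith [sq_nonneg K]
    have e3 : H ^ m ≤ H ^ min (γ + γ) m := hmono _ (min_le_right _ _)
    have hRle : |R H| ≤ |g (H ^ m) (μ H)| + |c| * H ^ m := by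
      rw [hRdef]
      simp only
      refine (abs_sub _ _).trans ?_
      rw [abs_mul, abs_of_pos (Real.rpow_pos_of_pos hH0 m)]
    calc |R H| ≤ |g (H ^ m) (μ H)| + |c| * H ^ m := hRle
      _ ≤ C * ((H ^ m) ^ 2 + (μ H) ^ 2) + |c| * H ^ m := by nlinarith
      _ ≤ C * (H ^ min (γ + γ) m + K ^ 2 * H ^ min (γ + γ) m)
          + |c| * H ^ min (γ + γ) m := by nlinarith [sq_nonneg (H ^ m), sq_nonneg (μ H), abs_nonneg c]
      _ = (C * (1 + K ^ 2) + |c|) * H ^ min (γ + γ) m := by ring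
  
  -- combined bootstrap step
  have hstep : ∀ γ : ℝ, 0 < γ → BndAux μ γ →
      (min (γ + γ) m < 1 → BndAux μ (min (γ + γ) m)) ∧
      (min (γ + γ) m = 1 →
        ∃ K, 0 ≤ K ∧ ∀ᶠ H in 𝓝[>] (0:ℝ), |μ H| ≤ K * (H * (1 - Real.log H))) ∧
      (1 < min (γ + γ) m → BndAux μ 1) := by
    intro γ hγ hb
    obtain ⟨B, hB, hRev⟩ := hRbnd γ hγ hb
    have hα : 0 < min (γ + γ) m := lt_min (by linarith) hm0
    obtain ⟨K, hK, hev⟩ := step_bound ε hε μ R hd hα hB hRev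
    refine ⟨?_, ?_, ?_⟩
    · intro hlt
      refine ⟨K, hK, ?_⟩
      filter_upwards [hev] with H h
      rwa [if_pos hlt] at h
    · intro heq
      refine ⟨K, hK, ?_⟩
      filter_upwards [hev] with H h
      rw [heq] at h
      rwa [if_neg (lt_irrefl (1:ℝ)), if_pos rfl] at h
    · intro hgt
      refine ⟨K, hK, ?_⟩
      filter_upwards [hev] with H h
      rw [if_neg (by linarith), if_neg (by linarith)] at h
      rwa [Real.rpow_one]
  -- initial bound from the decay hypothesis
  have hinit : ∃ γ₀, 0 < γ₀ ∧ γ₀ < 1/2 ∧ BndAux μ γ₀ := by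
    obtain ⟨δ, hδ0, htend⟩ := hδ
    refine ⟨min δ (1/3), lt_min hδ0 (by norm_num),
      lt_of_le_of_lt (min_le_right _ _) (by norm_num), 1, zero_le_one, ?_⟩
    have hev1 : ∀ᶠ H in 𝓝[>] (0:ℝ), |H ^ (-δ) * μ H| < 1 := by
      have h := Metric.tendsto_nhds.mp htend 1 one_pos
      filter_upwards [h] with H hH
      rwa [Real.dist_eq, sub_zero] at hH
    filter_upwards [hev1, Ioo_mem_nhdsGT_of_mem (Set.left_mem_Ico.mpr one_pos)] with H h1 hH
    have hH0 : (0:ℝ) < H := hH.1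
    have hpos : (0:ℝ) < H ^ δ := Real.rpow_pos_of_pos hH0 δ
    have hid : μ H = H ^ δ * (H ^ (-δ) * μ H) := by
      rw [← mul_assoc, ← Real.rpow_add hH0]
      simp
    have hμle : |μ H| ≤ H ^ δ := by
      rw [hid, abs_mul, abs_of_pos hpos]
      nlinarith [abs_nonneg (H ^ (-δ) * μ H)]
    rw [one_mul]
    exact hμle.trans (Real.rpow_le_rpow_of_exponent_ge hH0 hH.2.le (min_le_left _ _))
  obtain ⟨γ₀, hγ₀, hγhalf, hb₀⟩ := hinit
  obtain ⟨N₀, hN₀⟩ : ∃ N : ℕ, 1 < 2 ^ N * γ₀ := by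
    obtain ⟨N, hN⟩ := pow_unbounded_of_one_lt (1/γ₀) (by norm_num : (1:ℝ) < 2)
    exact ⟨N, by rw [div_lt_iff₀ hγ₀] at hN; linarith⟩
  -- the three cases
  refine ⟨?_, ?_, ?_⟩
  · -- n < 2, i.e. m > 1
    intro hn2
    have hm1 : 1 < m := by rw [hmdef]; linarith
    have ind : ∀ N : ℕ, ∀ γ, 0 < γ → 1 < 2 ^ N * γ → BndAux μ γ → BndAux μ 1 := by
      intro N
      induction N with
      | zero =>
        intro γ hγ h1 hb
        rw [pow_zero, one_mul] at h1
        exact hb.mono h1.le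
      | succ N ih =>
        intro γ hγ h1 hb
        by_cases hc : 1 < 2 * γ
        · exact (hstep γ hγ hb).2.2 (lt_min (by linarith) hm1)
        · push_neg at hc
          set γ' := min γ (3/8) with hγ'def
          have hγ'pos : 0 < γ' := lt_min hγ (by norm_num)
          have hγ'le : γ' ≤ 3/8 := min_le_right _ _
          have hb' : BndAux μ γ' := hb.mono (min_le_left _ _)
          have hmin : min (γ' + γ') m = γ' + γ' := min_eq_left (by linarith)
          have hαlt : min (γ' + γ') m < 1 := by rw [hmin]; linarith
          have hb2 : BndAux μ (γ' + γ') := by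
            have h := (hstep γ' hγ'pos hb').1 hαlt
            rwa [hmin] at h
          apply ih (γ' + γ') (by linarith) ?_ hb2
          rcases le_total γ (3/8) with hle | hle
          · have he : γ' = γ := min_eq_left hle
            rw [he]
            calc (1:ℝ) < 2 ^ (N+1) * γ := h1
              _ = 2 ^ N * (γ + γ) := by rw [pow_succ]; ring
          · have he : γ' = 3/8 := min_eq_right hle
            have hN1 : 1 ≤ N := by
              by_contra hN0
              push_neg at hN0
              interval_cases N
              rw [pow_one] at h1
              linarith
            have h2N : (2:ℝ) ≤ 2 ^ N := by
              calc (2:ℝ) = 2 ^ 1 := (pow_one 2).symm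
                _ ≤ 2 ^ N := pow_le_pow_right₀ (by norm_num) hN1
            rw [he]
            nlinarith
    obtain ⟨K, hK, hev⟩ := ind N₀ γ₀ hγ₀ hN₀ hb₀
    rw [isBigO_iff]
    refine ⟨K, ?_⟩
    filter_upwards [hev, self_mem_nhdsWithin] with H h hH
    rw [Set.mem_Ioi] at hH
    rw [Real.rpow_one] at h
    rw [Real.norm_eq_abs, Real.norm_eq_abs, abs_of_pos hH]
    exact h
  · -- n = 2, i.e. m = 1
    intro hn2
    have hm1 : m = 1 := by rw [hmdef]; linarith
    have ind : ∀ N : ℕ, ∀ γ, 0 < γ → 1 < 2 ^ N * γ → BndAux μ γ →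
        ∃ K, 0 ≤ K ∧ ∀ᶠ H in 𝓝[>] (0:ℝ), |μ H| ≤ K * (H * (1 - Real.log H)) := by
      intro N
      induction N with
      | zero =>
        intro γ hγ h1 hb
        rw [pow_zero, one_mul] at h1
        have hb' : BndAux μ (1/2) := hb.mono (by linarith)
        have heq : min ((1:ℝ)/2 + 1/2) m = 1 := by rw [hm1]; norm_num
        exact (hstep (1/2) (by norm_num) hb').2.1 heq
      | succ N ih =>
        intro γ hγ h1 hb
        by_cases hc : (1/2:ℝ) ≤ γ
        · have hb' : BndAux μ (1/2) := hb.mono hc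
          have heq : min ((1:ℝ)/2 + 1/2) m = 1 := by rw [hm1]; norm_num
          exact (hstep (1/2) (by norm_num) hb').2.1 heq
        · push_neg at hc
          have hmin : min (γ + γ) m = γ + γ := min_eq_left (by rw [hm1]; linarith)
          have hαlt : min (γ + γ) m < 1 := by rw [hmin]; linarith
          have hb2 : BndAux μ (γ + γ) := by
            have h := (hstep γ hγ hb).1 hαlt
            rwa [hmin] at h
          apply ih (γ + γ) (by linarith) ?_ hb2
          calc (1:ℝ) < 2 ^ (N+1) * γ := h1
            _ = 2 ^ N * (γ + γ) := by rw [pow_succ]; ring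
    obtain ⟨K, hK, hev⟩ := ind N₀ γ₀ hγ₀ hN₀ hb₀
    rw [isBigO_iff]
    refine ⟨2 * K, ?_⟩
    filter_upwards [hev,
      Ioo_mem_nhdsGT_of_mem (Set.left_mem_Ico.mpr (Real.exp_pos (-1)))] with H h hH
    have hH0 : (0:ℝ) < H := hH.1
    have hlog : Real.log H ≤ -1 := by
      have hh := Real.log_lt_log hH0 hH.2
      rw [Real.log_exp] at hh
      exact hh.le
    rw [Real.norm_eq_abs, Real.norm_eq_abs]
    have habs : |-(H * Real.log H)| = H * (-Real.log H) := by
      rw [abs_neg, abs_mul, abs_of_pos hH0, abs_of_neg (by linarith : Real.log H < 0)]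
    rw [habs]
    nlinarith [mul_nonneg (mul_nonneg hK hH0.le) (by linarith : (0:ℝ) ≤ -1 - Real.log H)]
  · -- 2 < n, i.e. m < 1
    intro hn2
    have hm1 : m < 1 := by rw [hmdef]; linarith
    have ind : ∀ N : ℕ, ∀ γ, 0 < γ → 1 < 2 ^ N * γ → BndAux μ γ → BndAux μ m := by
      intro N
      induction N with
      | zero =>
        intro γ hγ h1 hb
        rw [pow_zero, one_mul] at h1
        have hb' : BndAux μ (m/2) := hb.mono (by linarith)
        have heq : min (m/2 + m/2) m = m := by rw [add_halves]; exact min_self m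
        have h := (hstep (m/2) (by linarith) hb').1 (by rw [heq]; exact hm1)
        rwa [heq] at h
      | succ N ih =>
        intro γ hγ h1 hb
        by_cases hc : m/2 ≤ γ
        · have hb' : BndAux μ (m/2) := hb.mono hc
          have heq : min (m/2 + m/2) m = m := by rw [add_halves]; exact min_self m
          have h := (hstep (m/2) (by linarith) hb').1 (by rw [heq]; exact hm1)
          rwa [heq] at h
        · push_neg at hc
          have hmin : min (γ + γ) m = γ + γ := min_eq_left (by linarith)
          have hαlt : min (γ + γ) m < 1 := by rw [hmin]; linarith
          have hb2 : BndAux μ (γ + γ) := by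
            have h := (hstep γ hγ hb).1 hαlt
            rwa [hmin] at h
          apply ih (γ + γ) (by linarith) ?_ hb2
          calc (1:ℝ) < 2 ^ (N+1) * γ := h1
            _ = 2 ^ N * (γ + γ) := by rw [pow_succ]; ring
    obtain ⟨K, hK, hev⟩ := ind N₀ γ₀ hγ₀ hN₀ hb₀
    rw [isBigO_iff]
    refine ⟨K, ?_⟩
    filter_upwards [hev, self_mem_nhdsWithin] with H h hH
    rw [Set.mem_Ioi] at hH
    rw [Real.norm_eq_abs, Real.norm_eq_abs, abs_of_pos (Real.rpow_pos_of_pos hH m)]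
    exact h
end
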